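/- arXiv:2012.08232 — 14 statements merged into one kernel-verified Lean document; each statement's English description precedes it below -/
import Mathlib

section
/- Let q be an odd prime power, α ∈ F_q, and R ⊆ F_q \ {α}. Suppose A ⊆ F_q^n satisfies ⟨a,a⟩ = α for every a ∈ A, and ⟨x,y⟩ ∈ R for all distinct x, y ∈ A. Then |A| ≤ 2·C(n+|R|, |R|). -/
open Finset Module

/-- if every `a ∈ A` has `⟨a,a⟩ = α` and all dot products between
distinct elements lie in `R ⊆ F_q \ {α}`, then `|A| ≤ 2·C(n+|R|, |R|)`. -/
theorem few_dot_products_card_bound (q n : ℕ) (F : Type*) [Field F] [Fintype F]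
    [DecidableEq F] (hq : Fintype.card F = q) (hodd : Odd q)
    (α : F) (R : Finset F) (hR : α ∉ R)
    (A : Finset (Fin n → F))
    (h1 : ∀ a ∈ A, ∑ i, a i * a i = α)
    (h2 : ∀ x ∈ A, ∀ y ∈ A, x ≠ y → ∑ i, x i * y i ∈ R) :
    A.card ≤ 2 * Nat.choose (n + R.card) R.card := by
  classical
  set k := R.card with hk
  -- padded coordinate functions
  set e : Fin (n+1) → (Fin n → F) → F :=
    fun i y => if h : (i : ℕ) < n then y ⟨i, h⟩ else 1 with he
  set c : (Fin n → F) → F → Fin (n+1) → F :=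
    fun a r i => if h : (i : ℕ) < n then a ⟨i, h⟩ else -r with hc
  have key : ∀ (a : Fin n → F) (r : F) (y : Fin n → F),
      (∑ i, a i * y i) - r = ∑ i : Fin (n+1), c a r i * e i y := by
    intro a r y
    rw [Fin.sum_univ_castSucc]
    have h1' : ∀ i : Fin n, c a r i.castSucc * e i.castSucc y = a i * y i := by
      intro i
      simp [hc, he, i.is_lt, Fin.coe_castSucc]
    have h2' : c a r (Fin.last n) * e (Fin.last n) y = -r := by
      simp [hc, he]
    rw [Finset.sum_congr rfl (fun i _ => h1' i), h2']
    ring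
  -- the polynomial functions attached to elements of A
  set f : (Fin n → F) → ((Fin n → F) → F) :=
    fun a y => ∏ r ∈ R, ((∑ i, a i * y i) - r) with hf
  -- spanning family indexed by Sym (Fin (n+1)) k
  set g : Sym (Fin (n+1)) k → ((Fin n → F) → F) :=
    fun s y => ((s : Multiset (Fin (n+1))).map (fun i => e i y)).prod with hg
  have hcardm : ∀ p : (a : F) → a ∈ R → Fin (n+1),
      Multiset.card (Multiset.map (fun x : {x // x ∈ R} => p x.1 x.2) R.attach.val) = k := by
    intro p
    simp [hk]
    exact Multiset.card_attach
  have hspan : ∀ a : Fin n → F, f a ∈ Submodule.span F (Set.range g) := by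
    intro a
    have hexp : f a = ∑ p ∈ R.pi (fun _ => (Finset.univ : Finset (Fin (n+1)))),
        (∏ x ∈ R.attach, c a x.1 (p x.1 x.2)) •
          g ⟨Multiset.map (fun x : {x // x ∈ R} => p x.1 x.2) R.attach.val, hcardm p⟩ := by
      funext y
      have : f a y = ∏ r ∈ R, ∑ i : Fin (n+1), c a r i * e i y := by
        rw [hf]
        exact Finset.prod_congr rfl (fun r _ => key a r y)
      rw [this, Finset.prod_sum]
      rw [Finset.sum_apply]
      refine Finset.sum_congr rfl (fun p hp => ?_)
      rw [Pi.smul_apply, smul_eq_mul]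
      show _ = _ * (Multiset.map (fun i => e i y)
          (Multiset.map (fun x : {x // x ∈ R} => p x.1 x.2) R.attach.val)).prod
      rw [Multiset.map_map]
      simp only [Function.comp]
      rw [← Finset.prod_eq_multiset_prod, ← Finset.prod_mul_distrib]
    rw [hexp]
    exact Submodule.sum_mem _ fun p hp =>
      Submodule.smul_mem _ _ (Submodule.subset_span ⟨_, rfl⟩)
  -- linear independence
  have hli : LinearIndependent F (fun a : {x // x ∈ A} => f a.1) := by
    rw [Fintype.linearIndependent_iff]
    intro w hw a
    have hwa := congrFun hw a.1
    rw [Finset.sum_apply] at hwa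
    simp only [Pi.smul_apply, smul_eq_mul, Pi.zero_apply] at hwa
    have hdiag : f a.1 a.1 = ∏ r ∈ R, (α - r) := by
      rw [hf]
      exact Finset.prod_congr rfl (fun r _ => by rw [h1 a.1 a.2])
    have hne : f a.1 a.1 ≠ 0 := by
      rw [hdiag]
      rw [Finset.prod_ne_zero_iff]
      intro r hr
      exact sub_ne_zero.2 (fun h => hR (h ▸ hr))
    have hoff : ∀ b : {x // x ∈ A}, b ≠ a → f b.1 a.1 = 0 := by
      intro b hb
      have hmem : (∑ i, b.1 i * a.1 i) ∈ R :=
        h2 b.1 b.2 a.1 a.2 (fun h => hb (Subtype.ext h))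
      rw [hf]
      exact Finset.prod_eq_zero hmem (sub_self _)
    have : ∑ b : {x // x ∈ A}, w b * f b.1 a.1 = w a * f a.1 a.1 := by
      refine Finset.sum_eq_single a (fun b _ hb => ?_) (fun h => absurd (Finset.mem_univ a) h)
      rw [hoff b hb, mul_zero]
    rw [this] at hwa
    rcases mul_eq_zero.1 hwa with h | h
    · exact h
    · exact absurd h hne
  -- restrict to the span of the g's
  set W : Submodule F ((Fin n → F) → F) := Submodule.span F (Set.range g) with hW
  have hfd : FiniteDimensional F W := FiniteDimensional.span_of_finite F (Set.finite_range g)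
  have hli' : LinearIndependent F (fun a : {x // x ∈ A} => (⟨f a.1, hspan a.1⟩ : W)) := by
    apply LinearIndependent.of_comp W.subtype
    exact hli
  have hcard1 : Fintype.card {x // x ∈ A} ≤ finrank F W :=
    hli'.fintype_card_le_finrank
  have hcard2 : finrank F W ≤ Fintype.card (Sym (Fin (n+1)) k) :=
    finrank_range_le_card g
  have hsym : Fintype.card (Sym (Fin (n+1)) k) = Nat.choose (n + k) k := by
    rw [Sym.card_sym_eq_choose, Fintype.card_fin]
    congr 1
    omega
  have : A.card ≤ Nat.choose (n + k) k := by
    rw [← Fintype.card_coe]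
    omega
  omega
end

section
/- Let q be an odd prime power. Suppose A ⊆ F_q^n contains no right angle (no distinct x, y, z ∈ A with ⟨x−z, y−z⟩ = 0), and suppose every element a of A satisfies ⟨a,a⟩ = α for a fixed α ∈ F_q. Fix u ∈ A and β ∈ F_q, and let A_β = {x ∈ A \ {u} : ⟨u,x⟩ = β}. Then for any two distinct x, y ∈ A_β, the dot product ⟨x,y⟩ lies in F_q \ {α, 2β−α}. -/
/-- in a right-angle-free set with constant self dot product `α`,
fixing `u ∈ A` and `β`, any two distinct `x, y ∈ A \ {u}` with
`⟨u,x⟩ = ⟨u,y⟩ = β` satisfy `⟨x,y⟩ ∉ {α, 2β - α}`. -/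
theorem dot_product_avoids_two_values (q n : ℕ) (F : Type*) [Field F] [Fintype F]
    (hq : Fintype.card F = q) (hodd : Odd q)
    (A : Finset (Fin n → F)) (α : F)
    (hA : ∀ x ∈ A, ∀ y ∈ A, ∀ z ∈ A, x ≠ y → y ≠ z → x ≠ z →
      ∑ i, (x i - z i) * (y i - z i) ≠ 0)
    (hnorm : ∀ a ∈ A, ∑ i, a i * a i = α)
    (u : Fin n → F) (hu : u ∈ A) (β : F)
    (x y : Fin n → F) (hx : x ∈ A) (hy : y ∈ A)
    (hxu : x ≠ u) (hyu : y ≠ u)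
    (hxβ : ∑ i, u i * x i = β) (hyβ : ∑ i, u i * y i = β)
    (hxy : x ≠ y) :
    ∑ i, x i * y i ≠ α ∧ ∑ i, x i * y i ≠ 2 * β - α := by
  constructor
  · intro h
    apply hA x hx u hu y hy hxu (Ne.symm hyu) hxy
    have h1 : ∑ i, (x i - y i) * (u i - y i)
        = (∑ i, u i * x i) - (∑ i, x i * y i) - (∑ i, u i * y i) + ∑ i, y i * y i := by
      rw [← Finset.sum_sub_distrib, ← Finset.sum_sub_distrib, ← Finset.sum_add_distrib]
      exact Finset.sum_congr rfl fun i _ => by ring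
    rw [h1, hxβ, hyβ, hnorm y hy, h]
    ring
  · intro h
    apply hA x hx y hy u hu hxy hyu hxu
    have h1 : ∑ i, (x i - u i) * (y i - u i)
        = (∑ i, x i * y i) - (∑ i, u i * y i) - (∑ i, u i * x i) + ∑ i, u i * u i := by
      rw [← Finset.sum_sub_distrib, ← Finset.sum_sub_distrib, ← Finset.sum_add_distrib]
      exact Finset.sum_congr rfl fun i _ => by ring
    rw [h1, hxβ, hyβ, hnorm u hu, h]
    ring
end

section
/- Let q be an odd prime, k ≥ 2 an integer, and set t = ⌊kq/(2k−1)⌋. Let 𝒜 be a family of t-element subsets of [n] such that |F ∩ G| < ((k−1)/k)·t for all distinct F, G ∈ 𝒜, and let A ⊆ F_q^n be the set of characteristic vectors (with entries 0, 1 viewed in F_q) of members of 𝒜. Then A contains no k-right corner: there are no k+1 distinct vectors x_0, x_1, …, x_k ∈ A with ⟨x_i − x_0, x_j − x_0⟩ = 0 for all 1 ≤ i < j ≤ k. -/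
private lemma indicator_sum (q n : ℕ) (S T U : Finset (Fin n)) :
    ∑ m : Fin n, ((if m ∈ S then (1 : ZMod q) else 0) - (if m ∈ U then (1 : ZMod q) else 0)) *
      ((if m ∈ T then (1 : ZMod q) else 0) - (if m ∈ U then (1 : ZMod q) else 0)) =
    ((S ∩ T).card : ZMod q) - ((S ∩ U).card : ZMod q) - ((T ∩ U).card : ZMod q)
      + (U.card : ZMod q) := by
  have key : ∀ V : Finset (Fin n),
      ∑ m : Fin n, (if m ∈ V then (1 : ZMod q) else 0) = (V.card : ZMod q) := by
    intro V
    simp [Finset.sum_ite_mem]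
  have step : ∑ m : Fin n,
      ((if m ∈ S then (1 : ZMod q) else 0) - (if m ∈ U then (1 : ZMod q) else 0)) *
      ((if m ∈ T then (1 : ZMod q) else 0) - (if m ∈ U then (1 : ZMod q) else 0)) =
      ∑ m : Fin n, ((if m ∈ S ∩ T then (1 : ZMod q) else 0)
        - (if m ∈ S ∩ U then (1 : ZMod q) else 0)
        - (if m ∈ T ∩ U then (1 : ZMod q) else 0)
        + (if m ∈ U then (1 : ZMod q) else 0)) := by
    apply Finset.sum_congr rfl
    intro m _
    by_cases h1 : m ∈ S <;> by_cases h2 : m ∈ T <;> by_cases h3 : m ∈ U <;>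
      simp [h1, h2, h3, Finset.mem_inter] <;> ring
  rw [step, Finset.sum_add_distrib, Finset.sum_sub_distrib, Finset.sum_sub_distrib,
    key, key, key, key]

/-- the set of characteristic vectors of a `t`-uniform family
(with `t = ⌊kq/(2k-1)⌋`) whose pairwise intersections have size `< ((k-1)/k)·t`
contains no `k`-right corner. -/
theorem char_vectors_no_k_right_corner (q k n : ℕ) (hq : q.Prime) (hodd : Odd q)
    (hk : 2 ≤ k)
    (𝒜 : Finset (Finset (Fin n)))
    (ht : ∀ S ∈ 𝒜, S.card = (k * q) / (2 * k - 1))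
    (hint : ∀ S ∈ 𝒜, ∀ T ∈ 𝒜, S ≠ T →
      k * (S ∩ T).card < (k - 1) * ((k * q) / (2 * k - 1)))
    (A : Finset (Fin n → ZMod q))
    (hA : A = 𝒜.image (fun S i => if i ∈ S then (1 : ZMod q) else 0)) :
    ¬ ∃ x : Fin (k + 1) → Fin n → ZMod q,
      (∀ i, x i ∈ A) ∧ Function.Injective x ∧
      ∀ i j : Fin (k + 1), 0 < i → i < j →
        ∑ m, (x i m - x 0 m) * (x j m - x 0 m) = 0 := by
  rintro ⟨x, hxA, hxinj, hcorner⟩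
  classical
  set t := k * q / (2 * k - 1) with htdef
  have hex : ∀ i, ∃ F ∈ 𝒜, (fun m => if m ∈ F then (1 : ZMod q) else 0) = x i := by
    intro i
    have h := hxA i
    rw [hA, Finset.mem_image] at h
    exact h
  choose S hS hSx using hex
  have hSinj : Function.Injective S := fun i j h => hxinj (by rw [← hSx i, ← hSx j, h])
  have hcard : ∀ i, (S i).card = t := fun i => ht _ (hS i)
  have ht2k : (2 * k - 1) * t ≤ k * q := by
    rw [htdef, mul_comm]
    exact Nat.div_mul_le_self _ _
  -- key: for every pair, S 0 ⊆ S i ∪ S j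
  have key : ∀ i j : Fin (k + 1), 0 < i → i < j → S 0 ⊆ S i ∪ S j := by
    intro i j h0i hij
    have hij' : i ≠ j := ne_of_lt hij
    set a := (S i ∩ S j).card with ha
    set bi := (S i ∩ S 0).card with hbi
    set bj := (S j ∩ S 0).card with hbj
    have heq : (a : ZMod q) - (bi : ZMod q) - (bj : ZMod q) + (t : ZMod q) = 0 := by
      have h := hcorner i j h0i hij
      simp only [← hSx] at h
      rw [indicator_sum] at h
      rw [hcard 0] at h
      exact h
    have hle : bi + bj ≤ a + t := by
      have h1 := Finset.card_union_add_card_inter (S i ∩ S 0) (S j ∩ S 0)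
      have h2 : ((S i ∩ S 0) ∪ (S j ∩ S 0)).card ≤ t := by
        rw [← hcard 0]
        apply Finset.card_le_card
        intro m hm
        simp only [Finset.mem_union, Finset.mem_inter] at hm
        tauto
      have h3 : ((S i ∩ S 0) ∩ (S j ∩ S 0)).card ≤ a := by
        apply Finset.card_le_card
        intro m hm
        simp only [Finset.mem_inter] at hm ⊢
        tauto
      omega
    have hintij : k * a < (k - 1) * t := hint _ (hS i) _ (hS j) (fun h => hij' (hSinj h))
    have hEq0 : a + t = bi + bj := by
      have hcast : ((a + t : ℕ) : ZMod q) = ((bi + bj : ℕ) : ZMod q) := by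
        push_cast
        linear_combination heq
      have hmod : a + t ≡ bi + bj [MOD q] := (ZMod.natCast_eq_natCast_iff _ _ _).mp hcast
      have hdvd : q ∣ (a + t) - (bi + bj) := (Nat.modEq_iff_dvd' hle).mp hmod.symm
      have hlt : (a + t) - (bi + bj) < q := by
        have hm1 : k * ((a + t) - (bi + bj)) ≤ k * (a + t) :=
          Nat.mul_le_mul le_rfl (by omega)
        have hm2 : k * (a + t) = k * a + k * t := by ring
        have hm3 : (k - 1) * t + k * t = (2 * k - 1) * t := by
          rw [← Nat.add_mul]
          congr 1
          omega
        have hfin : k * ((a + t) - (bi + bj)) < k * q := by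
          have : k * a + k * t < (2 * k - 1) * t := by
            rw [← hm3]
            omega
          linarith
        exact Nat.lt_of_mul_lt_mul_left hfin
      have hE0 : (a + t) - (bi + bj) = 0 := Nat.eq_zero_of_dvd_of_lt hdvd hlt
      omega
    -- equality forces the union to cover S 0
    have h1 := Finset.card_union_add_card_inter (S i ∩ S 0) (S j ∩ S 0)
    have h3 : ((S i ∩ S 0) ∩ (S j ∩ S 0)).card ≤ a := by
      apply Finset.card_le_card
      intro m hm
      simp only [Finset.mem_inter] at hm ⊢
      tauto
    have h2 : (S i ∩ S 0) ∪ (S j ∩ S 0) ⊆ S 0 := by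
      intro m hm
      simp only [Finset.mem_union, Finset.mem_inter] at hm
      tauto
    have hcardU : (S 0).card ≤ ((S i ∩ S 0) ∪ (S j ∩ S 0)).card := by
      rw [hcard 0]
      omega
    have hU : (S i ∩ S 0) ∪ (S j ∩ S 0) = S 0 := Finset.eq_of_subset_of_card_le h2 hcardU
    intro m hm
    rw [← hU] at hm
    simp only [Finset.mem_union, Finset.mem_inter] at hm ⊢
    tauto
  -- final counting argument
  set I : Finset (Fin (k + 1)) := Finset.univ.filter (fun i => i ≠ 0) with hI
  have hIcard : I.card = k := by
    rw [hI, Finset.filter_ne', Finset.card_erase_of_mem (Finset.mem_univ _), Finset.card_univ]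
    simp
  have hdisj : ∀ i ∈ I, ∀ j ∈ I, i ≠ j → Disjoint (S 0 \ S i) (S 0 \ S j) := by
    intro i hi j hj hne
    have hi0 : i ≠ 0 := by simpa [hI] using hi
    have hj0 : j ≠ 0 := by simpa [hI] using hj
    have hsub : S 0 ⊆ S i ∪ S j := by
      rcases lt_or_gt_of_ne hne with h | h
      · exact key i j (Fin.pos_of_ne_zero hi0) h
      · intro m hm
        have := key j i (Fin.pos_of_ne_zero hj0) h hm
        rw [Finset.mem_union] at this ⊢
        tauto
    rw [Finset.disjoint_left]
    intro m hm1 hm2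
    rw [Finset.mem_sdiff] at hm1 hm2
    have := hsub hm1.1
    rw [Finset.mem_union] at this
    tauto
  set B := ∑ i ∈ I, (S 0 ∩ S i).card with hB
  set D := ∑ i ∈ I, (S 0 \ S i).card with hD
  have hDle : D ≤ t := by
    rw [hD, ← Finset.card_biUnion hdisj, ← hcard 0]
    apply Finset.card_le_card
    intro m hm
    simp only [Finset.mem_biUnion, Finset.mem_sdiff] at hm
    obtain ⟨i, _, hm, _⟩ := hm
    exact hm
  have hBD : B + D = k * t := by
    have hsplit : ∀ i ∈ I, (S 0 ∩ S i).card + (S 0 \ S i).card = t := by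
      intro i _
      rw [← hcard 0]
      exact Finset.card_inter_add_card_sdiff (S 0) (S i)
    rw [hB, hD, ← Finset.sum_add_distrib, Finset.sum_congr rfl hsplit,
      Finset.sum_const, hIcard, smul_eq_mul]
  have hBle : ∀ i ∈ I, k * (S 0 ∩ S i).card + 1 ≤ (k - 1) * t := by
    intro i hi
    have hi0 : i ≠ 0 := by simpa [hI] using hi
    have h := hint _ (hS i) _ (hS 0) (fun h => hi0 (hSinj h))
    rw [Finset.inter_comm]
    exact h
  have hsum : k * B + k ≤ k * ((k - 1) * t) := by
    have hs1 : k * B + k = ∑ i ∈ I, (k * (S 0 ∩ S i).card + 1) := by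
      rw [Finset.sum_add_distrib, Finset.sum_const, ← Finset.mul_sum, hIcard,
        smul_eq_mul, mul_one, hB]
    have hs2 : ∑ i ∈ I, (k * (S 0 ∩ S i).card + 1) ≤ ∑ _i ∈ I, (k - 1) * t :=
      Finset.sum_le_sum hBle
    have hs3 : ∑ _i ∈ I, (k - 1) * t = k * ((k - 1) * t) := by
      rw [Finset.sum_const, hIcard, smul_eq_mul]
    omega
  have hF3 : (k - 1) * t + t = k * t := by
    have h : (k - 1) + 1 = k := by omega
    calc (k - 1) * t + t = ((k - 1) + 1) * t := by ring
      _ = k * t := by rw [h]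
  have h6 : k * (k * t) ≤ k * (B + t) := Nat.mul_le_mul le_rfl (by omega)
  have h7 : k * (B + t) = k * B + k * t := by ring
  have h8 : k * ((k - 1) * t) + k * t = k * (k * t) := by rw [← Nat.mul_add, hF3]
  linarith [hsum, h6, h7, h8, hk]
end

section
/- Let q be an odd prime. If A ⊆ F_q^n contains no triangle with all right angles, i.e., no three distinct vectors x, y, z with ⟨x−y, y−z⟩ = ⟨y−z, z−x⟩ = ⟨z−x, x−y⟩ = 0, then |A| ≤ C(n+2q−1, 2q−2) + 2·C(n+q, q−1). -/
open Finset Module Matrix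
open scoped Classical

section Tao

variable {F : Type*} [Field F] {A : Type*} [Fintype A] [DecidableEq A]

lemma exists_large_support (U : Submodule F (A → F)) :
    ∃ u ∈ U, finrank F ↥U ≤ (univ.filter fun a => u a ≠ 0).card := by
  obtain ⟨S, hS, hmin⟩ : ∃ S : Finset A, (∀ u ∈ U, (∀ a ∈ S, u a = 0) → u = 0) ∧
      ∀ S' : Finset A, (∀ u ∈ U, (∀ a ∈ S', u a = 0) → u = 0) → S.card ≤ S'.card := by
    obtain ⟨S, hS1, hS2⟩ := Finset.exists_min_image
      (univ.filter fun S : Finset A => ∀ u ∈ U, (∀ a ∈ S, u a = 0) → u = 0) Finset.card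
      ⟨univ, by
        simp only [mem_filter, mem_univ, true_and]
        intro u _ h
        funext a; exact h a (by simp)⟩
    exact ⟨S, (mem_filter.mp hS1).2, fun S' hS' => hS2 S' (by simpa using hS')⟩
  have hrank : finrank F ↥U ≤ S.card := by
    let r : (A → F) →ₗ[F] (↥S → F) := LinearMap.funLeft F F (fun a : ↥S => ↑a)
    have hinj : Function.Injective (r.comp U.subtype) := by
      rw [← LinearMap.ker_eq_bot, LinearMap.ker_eq_bot']
      intro u h
      have hz : ∀ a ∈ S, (u : A → F) a = 0 := by
        intro a ha
        exact congrFun h ⟨a, ha⟩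
      exact Subtype.ext (hS u u.2 hz)
    calc finrank F ↥U ≤ finrank F (↥S → F) :=
          LinearMap.finrank_le_finrank_of_injective hinj
      _ = S.card := by
          rw [Module.finrank_fintype_fun_eq_card, Fintype.card_coe]
  have hwit : ∀ a ∈ S, ∃ v ∈ U, v a ≠ 0 ∧ ∀ b ∈ S, b ≠ a → v b = 0 := by
    intro a ha
    have hnot : ¬ ∀ u ∈ U, (∀ b ∈ S.erase a, u b = 0) → u = 0 := by
      intro h
      have h1 := hmin _ h
      have h2 := Finset.card_erase_lt_of_mem ha
      omega
    push_neg at hnot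
    obtain ⟨v, hv, hvz, hvne⟩ := hnot
    refine ⟨v, hv, ?_, fun b hb hba => hvz b (Finset.mem_erase.mpr ⟨hba, hb⟩)⟩
    intro hva
    refine hvne (hS v hv ?_)
    intro b hb
    by_cases hba : b = a
    · exact hba ▸ hva
    · exact hvz b (Finset.mem_erase.mpr ⟨hba, hb⟩)
  choose! v hvU hvne hvz using hwit
  refine ⟨∑ a ∈ S, v a, Submodule.sum_mem U (fun a ha => hvU a ha), ?_⟩
  refine le_trans hrank (Finset.card_le_card ?_)
  intro a ha
  simp only [mem_filter, mem_univ, true_and]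
  rw [Finset.sum_apply]
  rw [Finset.sum_eq_single a (fun b hb hba => hvz b hb a ha (Ne.symm hba)) (fun h => absurd ha h)]
  exact hvne a ha


lemma tao_bound (W1 W2 W3 : Submodule F (A → F)) (c : A → F) (hc : ∀ a, c a ≠ 0)
    (T1 T2 T3 : A → A → A → F)
    (h1 : ∀ y z, (fun x => T1 x y z) ∈ W1)
    (h2 : ∀ x z, (fun y => T2 x y z) ∈ W2)
    (h3 : ∀ x y, (fun z => T3 x y z) ∈ W3)
    (hd : ∀ x y z, T1 x y z + T2 x y z + T3 x y z = if x = y ∧ y = z then c x else 0) :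
    Fintype.card A ≤ finrank F ↥W1 + finrank F ↥W2 + finrank F ↥W3 := by
  -- the pairing with W1
  let L : (A → F) →ₗ[F] (↥W1 →ₗ[F] F) :=
    { toFun := fun u =>
        { toFun := fun f => ∑ a, u a * (f : A → F) a
          map_add' := by
            intro f g
            simp [Submodule.coe_add, Pi.add_apply, mul_add, Finset.sum_add_distrib]
          map_smul' := by
            intro m f
            simp [Finset.mul_sum, mul_left_comm] }
      map_add' := by
        intro u v
        ext f
        simp [add_mul, Finset.sum_add_distrib]
      map_smul' := by
        intro m u
        ext f
        simp [Finset.mul_sum, mul_assoc] }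
  have hUrank : Fintype.card A ≤ finrank F ↥(LinearMap.ker L) + finrank F ↥W1 := by
    have h1 : finrank F ↥(LinearMap.ker L) + finrank F ↥(LinearMap.range L)
        = Fintype.card A := by
      rw [add_comm]
      rw [← Module.finrank_fintype_fun_eq_card F (η := A)]
      exact LinearMap.finrank_range_add_finrank_ker L
    have h2 : finrank F ↥(LinearMap.range L) ≤ finrank F (↥W1 →ₗ[F] F) :=
      Submodule.finrank_le _
    have h3 : finrank F (↥W1 →ₗ[F] F) = finrank F ↥W1 := by
      rw [Module.finrank_linearMap, Module.finrank_self, mul_one]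
    omega
  obtain ⟨u, hu, hsupp⟩ := exists_large_support (LinearMap.ker L)
  have hu' : ∀ f ∈ W1, ∑ a, u a * f a = 0 := by
    intro f hf
    have := LinearMap.mem_ker.mp hu
    exact congrArg (fun g => g ⟨f, hf⟩) this
  -- matrices
  let M2 : Matrix A A F := Matrix.of fun y z => ∑ x, u x * T2 x y z
  let M3 : Matrix A A F := Matrix.of fun y z => ∑ x, u x * T3 x y z
  have hM : M2 + M3 = Matrix.diagonal (fun a => u a * c a) := by
    ext y z
    have e1 : ∑ x, u x * T1 x y z = 0 := hu' _ (h1 y z)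
    have : ∑ x, u x * (T1 x y z + T2 x y z + T3 x y z)
        = (M2 + M3) y z := by
      simp only [mul_add, Finset.sum_add_distrib, e1, zero_add]
      rfl
    rw [← this]
    have : ∑ x, u x * (T1 x y z + T2 x y z + T3 x y z)
        = ∑ x, u x * (if x = y ∧ y = z then c x else 0) := by
      apply Finset.sum_congr rfl
      intro x _
      rw [hd]
    rw [this]
    by_cases hyz : y = z
    · subst hyz
      rw [Finset.sum_eq_single y]
      · simp [Matrix.diagonal]
      · intro b _ hb
        simp [hb]
      · simp
    · rw [Finset.sum_eq_zero]
      · exact (Matrix.diagonal_apply_ne _ hyz).symm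
      · intro x _
        simp [hyz]
  -- rank bounds
  have hrank2 : M2.rank ≤ finrank F ↥W2 := by
    have hcol : ∀ v, M2.mulVec v ∈ W2 := by
      intro v
      have : M2.mulVec v = ∑ z, v z • (fun y => M2 y z) := by
        funext y
        simp [Matrix.mulVec, dotProduct, Finset.sum_apply, mul_comm]
      rw [this]
      refine Submodule.sum_mem _ fun z _ => Submodule.smul_mem _ _ ?_
      have : (fun y => M2 y z) = ∑ x, u x • (fun y => T2 x y z) := by
        funext y
        simp [M2, Finset.sum_apply]
      rw [this]
      exact Submodule.sum_mem _ fun x _ => Submodule.smul_mem _ _ (h2 x z)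
    have : LinearMap.range M2.mulVecLin ≤ W2 := by
      rintro _ ⟨v, rfl⟩
      exact hcol v
    exact (Submodule.finrank_mono this : _)
  have hrank3 : M3.rank ≤ finrank F ↥W3 := by
    rw [← Matrix.rank_transpose]
    have hcol : ∀ v, M3ᵀ.mulVec v ∈ W3 := by
      intro v
      have : M3ᵀ.mulVec v = ∑ y, v y • (fun z => M3 y z) := by
        funext z
        simp [Matrix.mulVec, dotProduct, Matrix.transpose, Finset.sum_apply, mul_comm]
      rw [this]
      refine Submodule.sum_mem _ fun y _ => Submodule.smul_mem _ _ ?_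
      have : (fun z => M3 y z) = ∑ x, u x • (fun z => T3 x y z) := by
        funext z
        simp [M3, Finset.sum_apply]
      rw [this]
      exact Submodule.sum_mem _ fun x _ => Submodule.smul_mem _ _ (h3 x y)
    have : LinearMap.range M3ᵀ.mulVecLin ≤ W3 := by
      rintro _ ⟨v, rfl⟩
      exact hcol v
    exact (Submodule.finrank_mono this : _)
  have hranksum : (M2 + M3).rank ≤ M2.rank + M3.rank := by
    have : (M2 + M3).mulVecLin = M2.mulVecLin + M3.mulVecLin := by
      ext v
      simp [Matrix.mulVecLin, Matrix.add_mulVec]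
    rw [Matrix.rank, this]
    have hle : LinearMap.range (M2.mulVecLin + M3.mulVecLin) ≤
        LinearMap.range M2.mulVecLin ⊔ LinearMap.range M3.mulVecLin := by
      rintro w ⟨v, rfl⟩
      exact Submodule.add_mem_sup (LinearMap.mem_range_self _ v) (LinearMap.mem_range_self _ v)
    refine le_trans (Submodule.finrank_mono hle) ?_
    exact Submodule.finrank_add_le_finrank_add_finrank _ _
  -- diagonal rank
  have hdiag : (univ.filter fun a => u a ≠ 0).card ≤ (M2 + M3).rank := by
    rw [hM, Matrix.rank_diagonal]
    rw [Fintype.card_subtype]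
    apply Finset.card_le_card
    intro a ha
    simp only [mem_filter, mem_univ, true_and] at ha ⊢
    exact mul_ne_zero ha (hc a)
  omega


end Tao



section Poly

variable (q n : ℕ) [Fact (q.Prime)]

/-- the norm form -/
def nrm : (Fin n → ZMod q) → ZMod q := fun v => ∑ i, v i * v i

/-- monomials: `N(x)^(e 0) * ∏ x i ^ e (i+1)` -/
def mnm (e : Fin (n + 1) → ℕ) : (Fin n → ZMod q) → ZMod q :=
  fun x => nrm q n x ^ e 0 * ∏ i, x i ^ e i.succ

/-- exponent vectors of total degree at most `d` -/
def bset (d : ℕ) : Finset (Fin (n + 1) → ℕ) :=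
  (Fintype.piFinset fun _ => Finset.range (d + 1)).filter fun e => ∑ i, e i ≤ d

lemma mem_bset {n d : ℕ} {e : Fin (n + 1) → ℕ} : e ∈ bset n d ↔ ∑ i, e i ≤ d := by
  constructor
  · intro h
    exact (Finset.mem_filter.mp h).2
  · intro h
    refine Finset.mem_filter.mpr ⟨?_, h⟩
    refine Fintype.mem_piFinset.mpr fun i => Finset.mem_range.mpr ?_
    have : e i ≤ ∑ j, e j := Finset.single_le_sum (fun j _ => Nat.zero_le _) (mem_univ i)
    omega

/-- span of monomials of degree at most `d` -/
def wspace (d : ℕ) : Submodule (ZMod q) ((Fin n → ZMod q) → ZMod q) :=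
  Submodule.span (ZMod q) (mnm q n '' (bset n d))

lemma wspace_mono {d d' : ℕ} (h : d ≤ d') : wspace q n d ≤ wspace q n d' := by
  apply Submodule.span_mono
  apply Set.image_mono
  intro e he
  exact mem_bset.mpr (le_trans (mem_bset.mp he) h)

lemma mnm_mul (e e' : Fin (n + 1) → ℕ) :
    (fun x => mnm q n e x * mnm q n e' x) = mnm q n (e + e') := by
  funext x
  simp only [mnm, Pi.add_apply, pow_add, Finset.prod_mul_distrib]
  ring

lemma mul_mem_wspace {d1 d2 : ℕ} {f g : (Fin n → ZMod q) → ZMod q}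
    (hf : f ∈ wspace q n d1) (hg : g ∈ wspace q n d2) :
    (fun x => f x * g x) ∈ wspace q n (d1 + d2) := by
  induction hf using Submodule.span_induction with
  | mem f hf =>
    obtain ⟨e, he, rfl⟩ := hf
    induction hg using Submodule.span_induction with
    | mem g hg =>
      obtain ⟨e', he', rfl⟩ := hg
      rw [mnm_mul]
      apply Submodule.subset_span
      exact ⟨e + e', mem_bset.mpr (by
        have h1 := mem_bset.mp he
        have h2 := mem_bset.mp he'
        simp only [Pi.add_apply, Finset.sum_add_distrib]
        omega), rfl⟩
    | zero =>
      have : (fun x => mnm q n e x * (0 : (Fin n → ZMod q) → ZMod q) x) = 0 := by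
        funext x; simp
      rw [this]; exact Submodule.zero_mem _
    | add g1 g2 _ _ ih1 ih2 =>
      have : (fun x => mnm q n e x * (g1 + g2) x)
          = (fun x => mnm q n e x * g1 x) + fun x => mnm q n e x * g2 x := by
        funext x; simp [mul_add]
      rw [this]; exact Submodule.add_mem _ ih1 ih2
    | smul a g1 _ ih =>
      have : (fun x => mnm q n e x * (a • g1) x) = a • fun x => mnm q n e x * g1 x := by
        funext x; simp [mul_left_comm]
      rw [this]; exact Submodule.smul_mem _ _ ih
  | zero =>
    have : (fun x => (0 : (Fin n → ZMod q) → ZMod q) x * g x) = 0 := by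
      funext x; simp
    rw [this]; exact Submodule.zero_mem _
  | add f1 f2 _ _ ih1 ih2 =>
    have : (fun x => (f1 + f2) x * g x)
        = (fun x => f1 x * g x) + fun x => f2 x * g x := by
      funext x; simp [add_mul]
    rw [this]; exact Submodule.add_mem _ ih1 ih2
  | smul a f1 _ ih =>
    have : (fun x => (a • f1) x * g x) = a • fun x => f1 x * g x := by
      funext x; simp [mul_assoc]
    rw [this]; exact Submodule.smul_mem _ _ ih

lemma const_mem_wspace (c : ZMod q) (d : ℕ) :
    (fun _ : Fin n → ZMod q => c) ∈ wspace q n d := by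
  have h1 : (fun _ : Fin n → ZMod q => (1 : ZMod q)) ∈ wspace q n d := by
    apply Submodule.subset_span
    refine ⟨0, mem_bset.mpr (by simp), ?_⟩
    funext x; simp [mnm]
  have heq : (fun _ : Fin n → ZMod q => c) = c • (fun _ : Fin n → ZMod q => (1 : ZMod q)) := by
    funext x; simp
  rw [heq]
  exact Submodule.smul_mem (wspace q n d) c h1

lemma coord_mem_wspace (i : Fin n) : (fun x : Fin n → ZMod q => x i) ∈ wspace q n 1 := by
  apply Submodule.subset_span
  refine ⟨Pi.single i.succ 1, mem_bset.mpr (by simp), ?_⟩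
  funext x
  simp only [mnm]
  rw [Pi.single_eq_of_ne (Fin.succ_ne_zero i).symm, pow_zero, one_mul]
  rw [Finset.prod_eq_single i]
  · rw [Pi.single_eq_same, pow_one]
  · intro j _ hj
    rw [Pi.single_eq_of_ne (fun h => hj (Fin.succ_injective n h)), pow_zero]
  · simp

lemma nrm_mem_wspace : nrm q n ∈ wspace q n 1 := by
  apply Submodule.subset_span
  refine ⟨Pi.single 0 1, mem_bset.mpr (by simp), ?_⟩
  funext x
  simp only [mnm]
  rw [Pi.single_eq_same, pow_one]
  rw [Finset.prod_eq_one, mul_one]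
  intro j _
  rw [Pi.single_eq_of_ne (Fin.succ_ne_zero j), pow_zero]

lemma pow_mem_wspace {f : (Fin n → ZMod q) → ZMod q} (hf : f ∈ wspace q n 1) (m : ℕ) :
    (fun x => f x ^ m) ∈ wspace q n m := by
  induction m with
  | zero => simpa using const_mem_wspace q n 1 0
  | succ m ih =>
    have : (fun x => f x ^ (m + 1)) = fun x => (fun y => f y ^ m) x * f x := by
      funext x; rw [pow_succ]
    rw [this]
    exact mul_mem_wspace q n ih hf

lemma nrm_sub_mem_wspace (c : Fin n → ZMod q) :
    (fun x => nrm q n (x - c)) ∈ wspace q n 1 := by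
  have heq : (fun x => nrm q n (x - c))
      = fun x => nrm q n x + ((∑ i, (-(2 * c i)) * x i) + (fun _ => nrm q n c) x) := by
    funext x
    simp only [nrm, Pi.sub_apply, ← Finset.sum_add_distrib]
    apply Finset.sum_congr rfl
    intro i _
    ring
  rw [heq]
  apply Submodule.add_mem _ (nrm_mem_wspace q n)
  apply Submodule.add_mem
  · have : (fun x : Fin n → ZMod q => ∑ i, (-(2 * c i)) * x i)
        = ∑ i, (-(2 * c i)) • (fun x : Fin n → ZMod q => x i) := by
      funext x
      simp [Finset.sum_apply]
    rw [this]
    exact Submodule.sum_mem _ fun i _ => Submodule.smul_mem _ _ (coord_mem_wspace q n i)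
  · exact const_mem_wspace q n _ 1

/-- the isotropic-difference indicator -/
def dfun : (Fin n → ZMod q) → (Fin n → ZMod q) → ZMod q :=
  fun x y => 1 - nrm q n (x - y) ^ (q - 1)

lemma dfun_mem_wspace (c : Fin n → ZMod q) :
    (fun x => dfun q n x c) ∈ wspace q n (q - 1) := by
  have h1 : (fun x => nrm q n (x - c) ^ (q - 1)) ∈ wspace q n (q - 1) :=
    pow_mem_wspace q n (nrm_sub_mem_wspace q n c) (q - 1)
  have h2 := const_mem_wspace q n 1 (q - 1)
  have := Submodule.sub_mem (wspace q n (q - 1)) h2 h1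
  simpa [dfun, Pi.sub_def] using this

lemma card_bset_le (d : ℕ) : (bset n d).card ≤ (n + 1 + d).choose d := by
  classical
  -- inject into Sym (Fin (n+2)) d
  have hinj : ∀ e ∈ bset n d, ∀ e' ∈ bset n d,
      (Finsupp.toMultiset (Finsupp.equivFunOnFinite.symm
        (Fin.snoc e (d - ∑ i, e i) : Fin (n + 2) → ℕ)))
      = (Finsupp.toMultiset (Finsupp.equivFunOnFinite.symm
        (Fin.snoc e' (d - ∑ i, e' i) : Fin (n + 2) → ℕ))) → e = e' := by
    intro e _ e' _ h
    funext i
    have := congrArg (Multiset.count (Fin.castSucc i)) h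
    simpa [Finsupp.count_toMultiset, Fin.snoc_castSucc] using this
  -- the image lands in multisets of card d
  have hcard : ∀ e ∈ bset n d,
      Multiset.card (Finsupp.toMultiset (Finsupp.equivFunOnFinite.symm
        (Fin.snoc e (d - ∑ i, e i) : Fin (n + 2) → ℕ))) = d := by
    intro e he
    rw [Finsupp.card_toMultiset, Finsupp.sum_fintype]
    · rw [Fin.sum_univ_castSucc]
      simp only [Finsupp.coe_equivFunOnFinite_symm, Fin.snoc_castSucc, Fin.snoc_last]
      have := mem_bset.mp he
      simp only [id_eq]
      omega
    · intro _; rfl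
  let ψ : (Fin (n + 1) → ℕ) → Sym (Fin (n + 2)) d := fun e =>
    if h : e ∈ bset n d then
      Sym.mk (Finsupp.toMultiset (Finsupp.equivFunOnFinite.symm
        (Fin.snoc e (d - ∑ i, e i) : Fin (n + 2) → ℕ))) (hcard e h)
    else Sym.replicate d 0
  have : (bset n d).card ≤ (Finset.univ : Finset (Sym (Fin (n + 2)) d)).card := by
    apply Finset.card_le_card_of_injOn ψ (fun _ _ => mem_univ _)
    intro e he e' he' h
    simp only [ψ, dif_pos (show e ∈ bset n d by simpa using he), dif_pos (show e' ∈ bset n d by simpa using he')] at h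
    exact hinj e (by simpa using he) e' (by simpa using he') (congrArg Subtype.val h)
  calc (bset n d).card ≤ _ := this
    _ = (n + 1 + d).choose d := by
        rw [Finset.card_univ, Sym.card_sym_eq_choose]
        congr 1
        rw [Fintype.card_fin]
        omega

lemma finrank_wspace_le (d : ℕ) :
    finrank (ZMod q) ↥(wspace q n d) ≤ (n + 1 + d).choose d := by
  classical
  have h1 : mnm q n '' ↑(bset n d) = ↑((bset n d).image (mnm q n)) := by
    rw [Finset.coe_image]
  calc finrank (ZMod q) ↥(wspace q n d)
      ≤ ((bset n d).image (mnm q n)).card := by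
        rw [wspace, h1]
        exact finrank_span_finset_le_card _
    _ ≤ (bset n d).card := Finset.card_image_le
    _ ≤ (n + 1 + d).choose d := card_bset_le n d


lemma nrm_neg (v : Fin n → ZMod q) : nrm q n (-v) = nrm q n v := by
  simp [nrm, neg_mul_neg]

lemma polar (x y z : Fin n → ZMod q) :
    nrm q n (x - z) = nrm q n (x - y) + 2 * (∑ i, (x i - y i) * (y i - z i))
      + nrm q n (y - z) := by
  simp only [nrm, Pi.sub_apply, Finset.mul_sum, ← Finset.sum_add_distrib]
  apply Finset.sum_congr rfl
  intro i _
  ring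

lemma dfun_diag (x : Fin n → ZMod q) : dfun q n x x = 1 := by
  have hq2 := (Fact.out : q.Prime).two_le
  have h0 : nrm q n (x - x) = 0 := by simp [nrm]
  rw [dfun, h0, zero_pow (by omega), sub_zero]

lemma dfun_of_ne {x y : Fin n → ZMod q} (h : nrm q n (x - y) ≠ 0) : dfun q n x y = 0 := by
  rw [dfun, ZMod.pow_card_sub_one_eq_one h, sub_self]

lemma dfun_of_eq {x y : Fin n → ZMod q} (h : nrm q n (x - y) = 0) : dfun q n x y = 1 := by
  have hq2 := (Fact.out : q.Prime).two_le
  rw [dfun, h, zero_pow (by omega), sub_zero]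

lemma dfun_symm (x y : Fin n → ZMod q) : dfun q n x y = dfun q n y x := by
  rw [dfun, dfun, ← nrm_neg q n (x - y), neg_sub]

lemma dfun_sq (x y : Fin n → ZMod q) : dfun q n x y * dfun q n x y = dfun q n x y := by
  by_cases h : nrm q n (x - y) = 0
  · rw [dfun_of_eq q n h]; ring
  · rw [dfun_of_ne q n h]; ring

/-- the key combinatorial identity for the slice decomposition -/
lemma key_identity (x y z : Fin n → ZMod q)
    (h : x ≠ y → y ≠ z → z ≠ x →
      dfun q n y z * (dfun q n x y * dfun q n x z) = 0) :
    dfun q n y z * (dfun q n x y * dfun q n x z)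
      - (if y = z then (1 : ZMod q) else 0) * dfun q n x y
      - (if z = x then (1 : ZMod q) else 0) * dfun q n y z
      - (if x = y then (1 : ZMod q) else 0) * dfun q n z x
      = if x = y ∧ y = z then (-2 : ZMod q) else 0 := by
  by_cases hxy : x = y
  · subst hxy
    by_cases hyz : x = z
    · subst hyz
      simp only [if_pos rfl, and_self, dfun_diag]
      norm_num
    · rw [dfun_diag, dfun_symm q n z x,
        if_neg hyz, if_neg (show ¬ z = x from fun h => hyz h.symm), if_pos rfl,
        if_neg (show ¬ (x = x ∧ x = z) from fun hc => hyz hc.2)]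
      linear_combination dfun_sq q n x z
  · by_cases hyz : y = z
    · subst hyz
      rw [dfun_diag, if_pos rfl, if_neg (show ¬ y = x from fun h => hxy h.symm),
        if_neg hxy, if_neg (show ¬ (x = y ∧ y = y) from fun hc => hxy hc.1)]
      linear_combination dfun_sq q n x y
    · by_cases hzx : z = x
      · rw [hzx, dfun_diag, dfun_symm q n y x,
          if_neg (show ¬ y = x from fun h => hxy h.symm), if_pos rfl, if_neg hxy,
          if_neg (show ¬ (x = y ∧ y = x) from fun hc => hxy hc.1)]
        linear_combination dfun_sq q n x y
      · rw [h hxy hyz hzx, if_neg hyz, if_neg hzx, if_neg hxy,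
          if_neg (show ¬ (x = y ∧ y = z) from fun hc => hxy hc.1)]
        ring


end Poly

/-- if `A ⊆ F_q^n` contains no triangle with all right angles, then
`|A| ≤ C(n+2q-1, 2q-2) + 2·C(n+q, q-1)`. -/
theorem no_all_right_triangle_card_bound (q n : ℕ) (hq : q.Prime) (hodd : Odd q)
    (A : Finset (Fin n → ZMod q))
    (hA : ∀ x ∈ A, ∀ y ∈ A, ∀ z ∈ A, x ≠ y → y ≠ z → x ≠ z →
      ¬ (∑ i, (x i - y i) * (y i - z i) = 0 ∧
         ∑ i, (y i - z i) * (z i - x i) = 0 ∧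
         ∑ i, (z i - x i) * (x i - y i) = 0)) :
    A.card ≤ Nat.choose (n + 2 * q - 1) (2 * q - 2) + 2 * Nat.choose (n + q) (q - 1) := by
  haveI := Fact.mk hq
  have hq2 : 2 ≤ q := hq.two_le
  have hqne2 : q ≠ 2 := by
    rintro rfl
    exact absurd hodd (by decide)
  have h2ne : (2 : ZMod q) ≠ 0 := by
    have h : ((2 : ℕ) : ZMod q) ≠ 0 := by
      rw [Ne, ZMod.natCast_eq_zero_iff]
      intro hdvd
      exact hqne2 ((Nat.prime_dvd_prime_iff_eq hq Nat.prime_two).mp hdvd)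
    simpa using h
  -- no isotropic triangles in A
  have hiso : ∀ x ∈ A, ∀ y ∈ A, ∀ z ∈ A, x ≠ y → y ≠ z → z ≠ x →
      dfun q n y z * (dfun q n x y * dfun q n x z) = 0 := by
    intro x hx y hy z hz hxy hyz hzx
    by_cases h1 : nrm q n (x - y) = 0
    · by_cases h2 : nrm q n (y - z) = 0
      · by_cases h3 : nrm q n (x - z) = 0
        · exfalso
          apply hA x hx y hy z hz hxy hyz hzx.symm
          have hyx : nrm q n (y - x) = 0 := by rw [← nrm_neg, neg_sub]; exact h1
          have hzy : nrm q n (z - y) = 0 := by rw [← nrm_neg, neg_sub]; exact h2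
          have hzx0 : nrm q n (z - x) = 0 := by rw [← nrm_neg, neg_sub]; exact h3
          refine ⟨?_, ?_, ?_⟩
          · have hp := polar q n x y z
            rw [h1, h2, h3] at hp
            have h2S : 2 * (∑ i, (x i - y i) * (y i - z i)) = 0 := by linear_combination -hp
            rcases mul_eq_zero.mp h2S with h | h
            · exact absurd h h2ne
            · exact h
          · have hp := polar q n y z x
            rw [h2, hyx, hzx0] at hp
            have h2S : 2 * (∑ i, (y i - z i) * (z i - x i)) = 0 := by linear_combination -hp
            rcases mul_eq_zero.mp h2S with h | h
            · exact absurd h h2ne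
            · exact h
          · have hp := polar q n z x y
            rw [h1, hzy, hzx0] at hp
            have h2S : 2 * (∑ i, (z i - x i) * (x i - y i)) = 0 := by linear_combination -hp
            rcases mul_eq_zero.mp h2S with h | h
            · exact absurd h h2ne
            · exact h
        · rw [dfun_of_ne q n h3]; ring
      · rw [dfun_of_ne q n h2]; ring
    · rw [dfun_of_ne q n h1]; ring
  -- restriction of function spaces to A
  let rst : ((Fin n → ZMod q) → ZMod q) →ₗ[ZMod q] (↥A → ZMod q) :=
    LinearMap.funLeft (ZMod q) (ZMod q) (fun a : ↥A => (a : Fin n → ZMod q))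
  let W1 := (wspace q n (2 * q - 2)).map rst
  let W2 := (wspace q n (q - 1)).map rst
  have hqq : q - 1 + (q - 1) = 2 * q - 2 := by omega
  -- the three slice families
  let T1 : ↥A → ↥A → ↥A → ZMod q := fun x y z =>
    dfun q n ↑y ↑z * (dfun q n ↑x ↑y * dfun q n ↑x ↑z)
      - (if (y : Fin n → ZMod q) = ↑z then (1 : ZMod q) else 0) * dfun q n ↑x ↑y
  let T2 : ↥A → ↥A → ↥A → ZMod q := fun x y z =>
    -((if (z : Fin n → ZMod q) = ↑x then (1 : ZMod q) else 0) * dfun q n ↑y ↑z)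
  let T3 : ↥A → ↥A → ↥A → ZMod q := fun x y z =>
    -((if (x : Fin n → ZMod q) = ↑y then (1 : ZMod q) else 0) * dfun q n ↑z ↑x)
  have h1m : ∀ y z : ↥A, (fun x : ↥A => T1 x y z) ∈ W1 := by
    intro y z
    have hg : ((dfun q n ↑y ↑z • fun v => dfun q n v ↑y * dfun q n v ↑z)
        - ((if (y : Fin n → ZMod q) = ↑z then (1 : ZMod q) else 0) •
            fun v => dfun q n v ↑y))
        ∈ wspace q n (2 * q - 2) := by
      apply Submodule.sub_mem
      · apply Submodule.smul_mem
        have h := mul_mem_wspace q n (dfun_mem_wspace q n (↑y)) (dfun_mem_wspace q n (↑z))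
        rwa [hqq] at h
      · apply Submodule.smul_mem
        exact wspace_mono q n (by omega) (dfun_mem_wspace q n (↑y))
    have he : (fun x : ↥A => T1 x y z)
        = rst ((dfun q n ↑y ↑z • fun v => dfun q n v ↑y * dfun q n v ↑z)
          - ((if (y : Fin n → ZMod q) = ↑z then (1 : ZMod q) else 0) •
              fun v => dfun q n v ↑y)) := by
      funext a
      simp only [rst, LinearMap.funLeft_apply, Pi.sub_apply, Pi.smul_apply, smul_eq_mul, T1]
    rw [he]
    exact Submodule.mem_map_of_mem hg
  have h2m : ∀ x z : ↥A, (fun y : ↥A => T2 x y z) ∈ W2 := by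
    intro x z
    have hg : ((-(if (z : Fin n → ZMod q) = ↑x then (1 : ZMod q) else 0)) •
        fun v => dfun q n v ↑z) ∈ wspace q n (q - 1) :=
      Submodule.smul_mem _ _ (dfun_mem_wspace q n (↑z))
    have he : (fun y : ↥A => T2 x y z)
        = rst ((-(if (z : Fin n → ZMod q) = ↑x then (1 : ZMod q) else 0)) •
            fun v => dfun q n v ↑z) := by
      funext a
      simp only [rst, LinearMap.funLeft_apply, Pi.smul_apply, smul_eq_mul, T2]
      ring
    rw [he]
    exact Submodule.mem_map_of_mem hg
  have h3m : ∀ x y : ↥A, (fun z : ↥A => T3 x y z) ∈ W2 := by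
    intro x y
    have hg : ((-(if (x : Fin n → ZMod q) = ↑y then (1 : ZMod q) else 0)) •
        fun v => dfun q n v ↑x) ∈ wspace q n (q - 1) :=
      Submodule.smul_mem _ _ (dfun_mem_wspace q n (↑x))
    have he : (fun z : ↥A => T3 x y z)
        = rst ((-(if (x : Fin n → ZMod q) = ↑y then (1 : ZMod q) else 0)) •
            fun v => dfun q n v ↑x) := by
      funext a
      simp only [rst, LinearMap.funLeft_apply, Pi.smul_apply, smul_eq_mul, T3]
      ring
    rw [he]
    exact Submodule.mem_map_of_mem hg
  have hd : ∀ x y z : ↥A, T1 x y z + T2 x y z + T3 x y z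
      = if x = y ∧ y = z then (fun _ : ↥A => (-2 : ZMod q)) x else 0 := by
    intro x y z
    have hk := key_identity q n ↑x ↑y ↑z (fun hxy hyz hzx =>
      hiso ↑x x.2 ↑y y.2 ↑z z.2 hxy hyz hzx)
    have hcond : (x = y ∧ y = z) ↔ ((x : Fin n → ZMod q) = ↑y ∧ (y : Fin n → ZMod q) = ↑z) := by
      rw [Subtype.ext_iff, Subtype.ext_iff]
    rw [if_congr hcond rfl rfl]
    simp only [T1, T2, T3]
    linear_combination hk
  have htao := tao_bound W1 W2 W2 (fun _ : ↥A => (-2 : ZMod q))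
    (fun _ => by simpa using h2ne) T1 T2 T3 h1m h2m h3m hd
  rw [← Fintype.card_coe A]
  refine le_trans htao ?_
  have hW1 : finrank (ZMod q) ↥W1 ≤ (n + 2 * q - 1).choose (2 * q - 2) := by
    refine le_trans (Submodule.finrank_map_le rst _) ?_
    have h := finrank_wspace_le q n (2 * q - 2)
    have he : n + 1 + (2 * q - 2) = n + 2 * q - 1 := by omega
    rwa [he] at h
  have hW2 : finrank (ZMod q) ↥W2 ≤ (n + q).choose (q - 1) := by
    refine le_trans (Submodule.finrank_map_le rst _) ?_
    have h := finrank_wspace_le q n (q - 1)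
    have he : n + 1 + (q - 1) = n + q := by omega
    rwa [he] at h
  omega
end

section
/- Let q be an odd prime and let A ⊆ F_q^n be a set such that ⟨x−y, x−y⟩ ≠ 0 for all distinct x, y ∈ A. Then |A| ≤ C(n+q, q−1) − C(n+q−2, q−3). -/
open Finset in
private def equivSumLe (m d : ℕ) :
    {f : Fin m → ℕ // ∑ i, f i ≤ d} ≃ {g : Fin (m+1) → ℕ // ∑ i, g i = d} where
  toFun f := ⟨Fin.snoc f.1 (d - ∑ i, f.1 i), by
    have := f.2
    rw [Fin.sum_univ_castSucc]
    simp only [Fin.snoc_castSucc, Fin.snoc_last]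
    omega⟩
  invFun g := ⟨fun i => g.1 i.castSucc, by
    show (∑ i : Fin m, g.1 i.castSucc) ≤ d
    have := g.2; rw [Fin.sum_univ_castSucc] at this; omega⟩
  left_inv f := by ext i; simp
  right_inv g := by
    ext i
    refine Fin.lastCases ?_ (fun j => ?_) i
    · have := g.2; rw [Fin.sum_univ_castSucc] at this
      simp only [Fin.snoc_last]
      omega
    · simp

private noncomputable def equivDegLe (m d : ℕ) :
    {s : Fin m →₀ ℕ // (s.sum fun _ e => e) ≤ d} ≃ Sym (Fin (m+1)) d :=
  ((Finsupp.equivFunOnFinite.subtypeEquiv (fun s => by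
      rw [Finsupp.sum_fintype]; · exact Iff.rfl
      · intro i; rfl)).trans
    ((equivSumLe m d).trans (Sym.equivNatSumOfFintype (Fin (m+1)) d).symm))

private lemma card_degLe (m d : ℕ) :
    Nat.card {s : Fin m →₀ ℕ // (s.sum fun _ e => e) ≤ d} = (m + d).choose d := by
  rw [Nat.card_congr (equivDegLe m d), Nat.card_eq_fintype_card, Sym.card_sym_eq_choose]
  simp

open MvPolynomial Module

/-- if no difference of distinct elements of `A ⊆ F_q^n` is
self-orthogonal, then `|A| ≤ C(n+q, q-1) - C(n+q-2, q-3)`. -/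
theorem no_self_orthogonal_difference_upper_bound (q n : ℕ) (hq : q.Prime)
    (hodd : Odd q)
    (A : Finset (Fin n → ZMod q))
    (hA : ∀ x ∈ A, ∀ y ∈ A, x ≠ y → ∑ i, (x i - y i) * (x i - y i) ≠ 0) :
    A.card ≤ Nat.choose (n + q) (q - 1) - Nat.choose (n + q - 2) (q - 3) := by
  haveI : Fact q.Prime := ⟨hq⟩
  have hq3 : 3 ≤ q := by
    rcases hodd with ⟨k, hk⟩; have := hq.two_le; omega
  classical
  -- the evaluation point (x, ⟨x,x⟩)
  set pt : (Fin n → ZMod q) → (Fin (n+1) → ZMod q) :=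
    fun x => Fin.snoc x (∑ i, x i * x i) with hpt
  set Φ : MvPolynomial (Fin (n+1)) (ZMod q) →ₗ[ZMod q] ((Fin n → ZMod q) → ZMod q) :=
    LinearMap.pi (fun x => (MvPolynomial.aeval (pt x)).toLinearMap) with hΦ
  have hΦapp : ∀ p x, Φ p x = MvPolynomial.aeval (pt x) p := fun p x => rfl
  set V := MvPolynomial.restrictTotalDegree (Fin (n+1)) (ZMod q) (q-1) with hV
  set Φ' := Φ.comp V.subtype with hΦ'
  haveI : Fintype {s : Fin (n+1) →₀ ℕ // (s.sum fun _ e => e) ≤ q - 3} :=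
    Fintype.ofEquiv _ (equivDegLe (n+1) (q-3)).symm
  -- the kernel family
  set p0 : MvPolynomial (Fin (n+1)) (ZMod q) :=
    X (Fin.last n) - ∑ i : Fin n, (X i.castSucc)^2 with hp0
  have hp0deg : p0.totalDegree ≤ 2 := by
    refine (totalDegree_sub _ _).trans ?_
    simp only [max_le_iff]
    constructor
    · exact (totalDegree_X (Fin.last n)).le.trans one_le_two
    · refine (totalDegree_finset_sum _ _).trans ?_
      refine Finset.sup_le fun i _ => ?_
      refine (totalDegree_pow _ _).trans ?_
      simp [totalDegree_X]
  have hp0ne : p0 ≠ 0 := by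
    intro h
    have h2 := congrArg (MvPolynomial.eval (Fin.snoc (0 : Fin n → ZMod q) 1)) h
    rw [hp0] at h2
    simp only [map_sub, map_sum, map_pow, MvPolynomial.eval_X, Fin.snoc_last,
      Fin.snoc_castSucc, Pi.zero_apply, map_zero, MvPolynomial.eval_zero] at h2
    rw [zero_pow (two_ne_zero)] at h2
    simp at h2
  have hΦp0 : ∀ x, MvPolynomial.aeval (pt x) p0 = 0 := by
    intro x
    simp [hp0, Fin.snoc_last, Fin.snoc_castSucc, hpt, ← sq]
  set g : {s : Fin (n+1) →₀ ℕ // (s.sum fun _ e => e) ≤ q - 3} →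
      MvPolynomial (Fin (n+1)) (ZMod q) := fun s => p0 * monomial s.1 1 with hg
  have hgV : ∀ s, g s ∈ V := by
    intro s
    rw [hV, mem_restrictTotalDegree]
    refine (totalDegree_mul _ _).trans ?_
    have := (totalDegree_monomial_le s.1 (1 : ZMod q)).trans s.2
    omega
  have hgker : ∀ s, Φ (g s) = 0 := by
    intro s
    funext x
    simp [hg, hΦapp, hΦp0]
    exact Or.inl (by simpa using hΦp0 x)
  have hgind : LinearIndependent (ZMod q) g := by
    have h1 : LinearIndependent (ZMod q)
        (fun s : {s : Fin (n+1) →₀ ℕ // (s.sum fun _ e => e) ≤ q - 3} =>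
          (monomial s.1 (1 : ZMod q))) :=
      (basisMonomials (Fin (n+1)) (ZMod q)).linearIndependent.comp
        Subtype.val Subtype.val_injective
    have := h1.map' (LinearMap.mulLeft (ZMod q) p0)
      (LinearMap.ker_eq_bot.2 (mul_right_injective₀ hp0ne))
    exact this
  -- independent family inside ker Φ'
  have hker_ge : (n + q - 2).choose (q - 3) ≤ finrank (ZMod q) (LinearMap.ker Φ') := by
    set gk : {s : Fin (n+1) →₀ ℕ // (s.sum fun _ e => e) ≤ q - 3} →
        LinearMap.ker Φ' := fun s =>
      ⟨⟨g s, hgV s⟩, by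
        rw [LinearMap.mem_ker]
        show Φ (g s) = 0
        exact hgker s⟩ with hgk
    have hind : LinearIndependent (ZMod q) gk := by
      refine LinearIndependent.of_comp (V.subtype.comp (LinearMap.ker Φ').subtype) ?_
      convert hgind
      all_goals rfl
    have := hind.fintype_card_le_finrank
    rw [← Nat.card_eq_fintype_card, card_degLe] at this
    have he : n + 1 + (q - 3) = n + q - 2 := by omega
    rwa [he] at this
  -- the point-indicator family
  set P : (Fin n → ZMod q) → MvPolynomial (Fin (n+1)) (ZMod q) := fun a =>
    1 - (X (Fin.last n) - (∑ i : Fin n, C (2 * a i) * X i.castSucc)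
      + C (∑ i, a i * a i))^(q-1) with hP
  have hPdeg : ∀ a, (P a).totalDegree ≤ q - 1 := by
    intro a
    rw [hP]
    refine (totalDegree_sub _ _).trans ?_
    simp only [max_le_iff, totalDegree_one, Nat.zero_le, true_and]
    refine (totalDegree_pow _ _).trans ?_
    have h1 : (X (Fin.last n) - (∑ i : Fin n, C (2 * a i) * X i.castSucc)
        + C (∑ i, a i * a i) : MvPolynomial (Fin (n+1)) (ZMod q)).totalDegree ≤ 1 := by
      refine (totalDegree_add _ _).trans ?_
      simp only [max_le_iff, totalDegree_C, Nat.zero_le, and_true]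
      refine (totalDegree_sub _ _).trans ?_
      simp only [max_le_iff]
      refine ⟨(totalDegree_X _).le, ?_⟩
      refine (totalDegree_finset_sum _ _).trans (Finset.sup_le fun i _ => ?_)
      refine (totalDegree_mul _ _).trans ?_
      rw [totalDegree_C, totalDegree_X]
    calc (q-1) * _ ≤ (q-1) * 1 := Nat.mul_le_mul_left _ h1
    _ = q - 1 := by omega
  have hPval : ∀ a x, Φ (P a) x = 1 - (∑ i, (x i - a i) * (x i - a i))^(q-1) := by
    intro a x
    rw [hΦapp, hP]
    simp only [map_sub, map_add, map_one, map_pow, map_sum, map_mul, aeval_X, aeval_C,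
      Algebra.algebraMap_self_apply, hpt, Fin.snoc_last, Fin.snoc_castSucc]
    congr 2
    rw [← Finset.sum_sub_distrib, ← Finset.sum_add_distrib]
    refine Finset.sum_congr rfl fun i _ => ?_
    ring
  have hone : ∀ a, Φ (P a) a = 1 := by
    intro a
    rw [hPval]
    simp only [sub_self, zero_mul, Finset.sum_const_zero]
    rw [zero_pow (by omega), sub_zero]
  have hzero : ∀ a ∈ A, ∀ b ∈ A, a ≠ b → Φ (P a) b = 0 := by
    intro a ha b hb hab
    rw [hPval]
    rw [ZMod.pow_card_sub_one_eq_one (hA b hb a ha (Ne.symm hab)), sub_self]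
  -- linear independence
  have hlin : LinearIndependent (ZMod q) (fun a : A => Φ (P a.1)) := by
    rw [Fintype.linearIndependent_iff]
    intro c hc b
    have := congrFun hc b.1
    simp only [Finset.sum_apply, Pi.smul_apply, smul_eq_mul, Pi.zero_apply] at this
    rwa [Fintype.sum_eq_single b (fun a hab => by
      rw [hzero a.1 a.2 b.1 b.2 (fun h => hab (Subtype.ext h)), mul_zero]),
      hone, mul_one] at this
  -- put the family inside range Φ'
  have hmem : ∀ a : A, Φ (P a.1) ∈ LinearMap.range Φ' := by
    intro a
    exact ⟨⟨P a.1, (mem_restrictTotalDegree _ _ _).2 (hPdeg a.1)⟩, rfl⟩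
  have hcard : A.card ≤ finrank (ZMod q) (LinearMap.range Φ') := by
    set fA : A → LinearMap.range Φ' := fun a => ⟨Φ (P a.1), hmem a⟩ with hfA
    have hindA : LinearIndependent (ZMod q) fA := by
      refine LinearIndependent.of_comp (LinearMap.range Φ').subtype ?_
      convert hlin
      rfl
    have := hindA.fintype_card_le_finrank
    rwa [Fintype.card_coe] at this
  -- rank-nullity and counting
  have hrank : finrank (ZMod q) (LinearMap.range Φ') + finrank (ZMod q) (LinearMap.ker Φ')
      = (n + q).choose (q - 1) := by
    rw [LinearMap.finrank_range_add_finrank_ker]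
    have hb : finrank (ZMod q) V
        = Nat.card {s : Fin (n+1) →₀ ℕ | (s.sum fun _ e => e) ≤ q - 1} :=
      Module.finrank_eq_nat_card_basis (MvPolynomial.basisRestrictSupport (ZMod q)
        {s : Fin (n+1) →₀ ℕ | (s.sum fun _ e => e) ≤ q - 1})
    have h2 : Nat.card {s : Fin (n+1) →₀ ℕ | (s.sum fun _ e => e) ≤ q - 1}
        = Nat.card {s : Fin (n+1) →₀ ℕ // (s.sum fun _ e => e) ≤ q - 1} := rfl
    rw [hb, h2, card_degLe]
    congr 1
    omega
  omega
end

section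
/- Let q be an odd prime and n ≥ q−1. Let A ⊆ F_q^n be the set of all 0-1 vectors with exactly q−1 entries equal to 1. Then for all distinct x, y ∈ A we have ⟨x−y, x−y⟩ ≠ 0 in F_q; in particular S(n,q) ≥ C(n, q−1), where S(n,q) is the maximum size of a subset of F_q^n with no self-orthogonal difference between distinct elements. -/
/-- the set of 0-1 vectors with exactly `q-1` entries equal to 1
has no self-orthogonal difference, and has size `C(n, q-1)`. -/
theorem zero_one_vectors_no_self_orthogonal (q n : ℕ) [NeZero q] (hq : q.Prime)
    (hodd : Odd q) (hn : q - 1 ≤ n)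
    (A : Finset (Fin n → ZMod q))
    (hA : A = Finset.univ.filter (fun x : Fin n → ZMod q =>
      (∀ i, x i = 0 ∨ x i = 1) ∧
      (Finset.univ.filter (fun i => x i = 1)).card = q - 1)) :
    (∀ x ∈ A, ∀ y ∈ A, x ≠ y → ∑ i, (x i - y i) * (x i - y i) ≠ 0) ∧
    A.card = Nat.choose n (q - 1) := by
  haveI : Fact q.Prime := ⟨hq⟩
  have hone : (1 : ZMod q) ≠ 0 := one_ne_zero
  constructor
  · intro x hx y hy hxy
    rw [hA, Finset.mem_filter] at hx hy
    obtain ⟨-, hxb, hxc⟩ := hx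
    obtain ⟨-, hyb, hyc⟩ := hy
    -- each term is 0 or 1
    have hterm : ∀ i, (x i - y i) * (x i - y i) = if x i = y i then 0 else 1 := by
      intro i
      rcases hxb i with h1 | h1 <;> rcases hyb i with h2 | h2 <;>
        rw [h1, h2] <;> simp [hone, hone.symm]
    have hsum : ∑ i, (x i - y i) * (x i - y i)
        = ((Finset.univ.filter (fun i => ¬ x i = y i)).card : ZMod q) := by
      rw [← Finset.sum_boole]
      refine Finset.sum_congr rfl fun i _ => ?_
      rw [hterm i, ite_not]
    rw [hsum]
    set S := Finset.univ.filter (fun i => x i = 1) with hS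
    set T := Finset.univ.filter (fun i => y i = 1) with hT
    have hU : Finset.univ.filter (fun i => ¬ x i = y i) = (S \ T) ∪ (T \ S) := by
      ext i
      simp only [Finset.mem_filter, Finset.mem_union, Finset.mem_sdiff, Finset.mem_univ,
        true_and, hS, hT]
      rcases hxb i with h1 | h1 <;> rcases hyb i with h2 | h2 <;>
        simp [h1, h2, hone, hone.symm]
    rw [hU]
    have hdisj : Disjoint (S \ T) (T \ S) := disjoint_sdiff_sdiff
    rw [Finset.card_union_of_disjoint hdisj]
    have hcomm : (S \ T).card = (T \ S).card :=
      Finset.card_sdiff_comm (by rw [hxc, hyc])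
    set k := (S \ T).card with hk
    obtain ⟨i, hi⟩ := Function.ne_iff.mp hxy
    have hiU : i ∈ (S \ T) ∪ (T \ S) := by rw [← hU]; simp [hi]
    have hkpos : 0 < k := by
      rcases Finset.mem_union.mp hiU with h | h
      · exact Finset.card_pos.mpr ⟨i, h⟩
      · rw [hcomm]; exact Finset.card_pos.mpr ⟨i, h⟩
    have hkle : k ≤ q - 1 := by
      calc k ≤ S.card := Finset.card_le_card Finset.sdiff_subset
        _ = q - 1 := hxc
    rw [← hcomm]
    have : (k + k : ℕ) = 2 * k := by ring
    intro hzero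
    have hdvd : q ∣ k + k := by
      rwa [ZMod.natCast_eq_zero_iff] at hzero
    rw [this] at hdvd
    rcases (Nat.Prime.dvd_mul hq).mp hdvd with h | h
    · have : q = 2 := (Nat.prime_dvd_prime_iff_eq hq Nat.prime_two).mp h
      rw [this] at hodd
      exact (by decide : ¬ Odd 2) hodd
    · have := Nat.le_of_dvd hkpos h
      omega
  · rw [hA]
    have hcard : (Finset.univ.filter (fun x : Fin n → ZMod q =>
        (∀ i, x i = 0 ∨ x i = 1) ∧
        (Finset.univ.filter (fun i => x i = 1)).card = q - 1)).card
        = ((Finset.univ : Finset (Fin n)).powersetCard (q - 1)).card := by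
      refine Finset.card_nbij' (fun x => Finset.univ.filter (fun i => x i = 1))
        (fun S => fun i => if i ∈ S then (1 : ZMod q) else 0) ?_ ?_ ?_ ?_
      · intro x hx
        rw [Finset.mem_coe, Finset.mem_filter] at hx
        rw [Finset.mem_coe, Finset.mem_powersetCard]
        exact ⟨Finset.subset_univ _, hx.2.2⟩
      · intro S hS
        rw [Finset.mem_coe, Finset.mem_powersetCard] at hS
        rw [Finset.mem_coe, Finset.mem_filter]
        refine ⟨Finset.mem_univ _, fun i => ?_, ?_⟩
        · by_cases h : i ∈ S <;> simp [h]
        · rw [← hS.2]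
          congr 1
          ext i
          by_cases h : i ∈ S <;> simp [h, hone]
      · intro x hx
        rw [Finset.mem_coe, Finset.mem_filter] at hx
        funext i
        dsimp only
        by_cases h : i ∈ Finset.univ.filter (fun i => x i = 1)
        · rw [if_pos h]
          exact ((Finset.mem_filter.mp h).2).symm
        · rw [if_neg h]
          rcases hx.2.1 i with h1 | h1
          · exact h1.symm
          · exact absurd (Finset.mem_filter.mpr ⟨Finset.mem_univ i, h1⟩) h
      · intro S hS
        ext i
        by_cases h : i ∈ S <;> simp [h, hone]
    rw [hcard, Finset.card_powersetCard, Finset.card_univ, Fintype.card_fin]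
end

section
/- Let q be an odd prime with n ≢ −2 (mod q), or with q ≡ 1 (mod 4). Then there exist distinct a, b ∈ F_q satisfying (n+2)·b² = 2a² − 2a + 1 in F_q. -/
open Polynomial

/-- if `n ≢ -2 (mod q)` or `q ≡ 1 (mod 4)`, then the equation
`(n+2)b² = 2a² - 2a + 1` has a solution with `a ≠ b` in `F_q`. -/
theorem solvable_ab_equation (q n : ℕ) (hq : q.Prime) (hodd : Odd q)
    (h : (n : ZMod q) ≠ -2 ∨ q % 4 = 1) :
    ∃ a b : ZMod q, a ≠ b ∧
      ((n : ZMod q) + 2) * b ^ 2 = 2 * a ^ 2 - 2 * a + 1 := by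
  haveI : Fact q.Prime := ⟨hq⟩
  have hq2 : q ≠ 2 := by rintro rfl; exact Nat.not_odd_iff_even.mpr even_two hodd
  have h2 : (2 : ZMod q) ≠ 0 := by
    simpa using (ZMod.natCast_eq_zero_iff 2 q).not.mpr
      (by rw [Nat.prime_dvd_prime_iff_eq hq Nat.prime_two]; exact hq2)
  set m : ZMod q := (n : ZMod q) + 2 with hm
  by_cases hm0 : m = 0
  · -- then n ≡ -2, so q % 4 = 1
    have h4 : q % 4 = 1 := by
      rcases h with h | h
      · exact absurd (by linear_combination hm0) h
      · exact h
    obtain ⟨x, hx⟩ := (ZMod.exists_sq_eq_neg_one_iff (p := q)).mpr (by omega)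
    refine ⟨(x + 1) / 2, (x + 1) / 2 + 1, by simp, ?_⟩
    rw [hm0]
    have hdiv : (2 : ZMod q) * ((x + 1) / 2) = x + 1 := by
      field_simp
    have : 2 * (2 * ((x+1)/2) ^ 2 - 2 * ((x+1)/2) + 1) = 0 := by
      have : (2 * ((x+1)/2)) ^ 2 - 2 * (2 * ((x+1)/2)) + 2 = (x+1)^2 - 2*(x+1) + 2 := by
        rw [hdiv]
      calc 2 * (2 * ((x+1)/2) ^ 2 - 2 * ((x+1)/2) + 1)
          = (2 * ((x+1)/2)) ^ 2 - 2 * (2 * ((x+1)/2)) + 2 := by ring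
        _ = (x+1)^2 - 2*(x+1) + 2 := this
        _ = x^2 + 1 := by ring
        _ = 0 := by linear_combination -hx
    have := mul_eq_zero.mp this
    rcases this with h' | h'
    · exact absurd h' h2
    · rw [h']; ring
  · -- m ≠ 0; use exists_root_sum_quadratic
    have hcard : Fintype.card (ZMod q) % 2 = 1 := by
      rw [ZMod.card]; exact Nat.odd_iff.mp hodd
    have hf2 : degree (C m * X ^ 2 : (ZMod q)[X]) = 2 := by
      rw [degree_C_mul_X_pow 2 hm0]; rfl
    have hg2 : degree (C (-2) * X ^ 2 + C 2 * X + C (-1) : (ZMod q)[X]) = 2 := by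
      compute_degree!
    obtain ⟨b, a, hab⟩ := FiniteField.exists_root_sum_quadratic hf2 hg2 hcard
    simp only [eval_add, eval_mul, eval_pow, eval_C, eval_X] at hab
    have heq : m * b ^ 2 = 2 * a ^ 2 - 2 * a + 1 := by linear_combination hab
    by_cases hab' : a = b
    · -- a = b; then b ≠ 0 (else 1 = 0), use -b
      subst hab'
      have ha0 : a ≠ 0 := by
        rintro rfl
        rw [show (2:ZMod q) * 0 ^ 2 - 2 * 0 + 1 = 1 by ring] at heq
        simp at heq
      refine ⟨a, -a, ?_, ?_⟩
      · intro hcon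
        have : (2 : ZMod q) * a = 0 := by linear_combination hcon
        rcases mul_eq_zero.mp this with h' | h'
        exacts [h2 h', ha0 h']
      · rw [show (-a)^2 = a^2 by ring]; exact heq
    · exact ⟨a, b, hab', heq⟩
end

section
/- Let q be an odd prime, and suppose n ≢ −2 (mod q) or q ≡ 1 (mod 4). Then there exists a set A ⊆ F_q^n with |A| = C(n, q−1) + C(n, q−2) such that ⟨x−y, x−y⟩ ≠ 0 for all distinct x, y ∈ A. -/
open Finset Polynomial

namespace ImprovedLB

variable {q n : ℕ}

/-- characteristic vector -/
def chi (q : ℕ) (s : Finset (Fin n)) : Fin n → ZMod q := fun i => if i ∈ s then 1 else 0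

lemma sum_chi (s : Finset (Fin n)) : ∑ i, chi q s i = (s.card : ZMod q) := by
  simp [chi, Finset.sum_ite_mem]

lemma key1 (s t : Finset (Fin n)) :
    ∑ i, (chi q s i - chi q t i) ^ 2
      = (s.card : ZMod q) + (t.card : ZMod q) - 2 * ((s ∩ t).card : ZMod q) := by
  have hpt : ∀ i, (chi q s i - chi q t i) ^ 2
      = chi q s i + chi q t i - 2 * chi q (s ∩ t) i := by
    intro i
    by_cases hs : i ∈ s <;> by_cases ht : i ∈ t <;>
      simp [chi, hs, ht, Finset.mem_inter] <;> ring
  rw [Finset.sum_congr rfl fun i _ => hpt i]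
  simp [Finset.sum_add_distrib, Finset.sum_sub_distrib, ← Finset.mul_sum, sum_chi]

lemma key2 (a b : ZMod q) (s t : Finset (Fin n)) :
    ∑ i, ((b + (a - b) * chi q s i) - (b + (a - b) * chi q t i)) ^ 2
      = (a - b) ^ 2 *
        ((s.card : ZMod q) + (t.card : ZMod q) - 2 * ((s ∩ t).card : ZMod q)) := by
  rw [← key1 s t, Finset.mul_sum]
  exact Finset.sum_congr rfl fun i _ => by ring

lemma key3 (a b : ZMod q) (s t : Finset (Fin n)) :
    ∑ i, (chi q s i - (b + (a - b) * chi q t i)) ^ 2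
      = (n : ZMod q) * b ^ 2 + (1 - 2 * b) * (s.card : ZMod q)
        + (a ^ 2 - b ^ 2) * (t.card : ZMod q)
        - 2 * (a - b) * ((s ∩ t).card : ZMod q) := by
  have hpt : ∀ i, (chi q s i - (b + (a - b) * chi q t i)) ^ 2
      = b ^ 2 + (1 - 2 * b) * chi q s i + (a ^ 2 - b ^ 2) * chi q t i
        - 2 * (a - b) * chi q (s ∩ t) i := by
    intro i
    by_cases hs : i ∈ s <;> by_cases ht : i ∈ t <;>
      simp [chi, hs, ht, Finset.mem_inter] <;> ring
  rw [Finset.sum_congr rfl fun i _ => hpt i]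
  simp [Finset.sum_add_distrib, Finset.sum_sub_distrib, ← Finset.mul_sum, sum_chi,
    Finset.card_univ]

lemma exists_ab (q : ℕ) (hq : q.Prime) (hodd : Odd q) (n : ℕ)
    (h : (n : ZMod q) ≠ -2 ∨ q % 4 = 1) :
    ∃ a b : ZMod q, a ≠ b ∧ ((n : ZMod q) + 2) * b ^ 2 = 2 * a ^ 2 - 2 * a + 1 := by
  haveI : Fact q.Prime := ⟨hq⟩
  have hq3 : 3 ≤ q := by
    have h2 := hq.two_le
    have := Nat.odd_iff.mp hodd
    omega
  have h2 : (2 : ZMod q) ≠ 0 := by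
    have : ((2 : ℕ) : ZMod q) ≠ 0 := by
      rw [Ne, ZMod.natCast_eq_zero_iff]
      intro hd
      have := Nat.le_of_dvd (by norm_num) hd
      omega
    simpa using this
  by_cases hn : (n : ZMod q) = -2
  · have h4 : q % 4 = 1 := h.resolve_left (not_not_intro hn)
    obtain ⟨i, hi⟩ : IsSquare (-1 : ZMod q) :=
      ZMod.exists_sq_eq_neg_one_iff.2 (by omega)
    refine ⟨(1 + i) / 2, (1 + i) / 2 + 1, ?_, ?_⟩
    · intro hcon
      exact one_ne_zero (left_eq_add.mp hcon)
    · rw [hn]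
      field_simp
      linear_combination hi
  · have hc0 : (n : ZMod q) + 2 ≠ 0 := by
      intro h0; apply hn; linear_combination h0
    by_cases hc2 : (n : ZMod q) + 2 = 2
    · refine ⟨(2 : ZMod q)⁻¹, -(2 : ZMod q)⁻¹, ?_, ?_⟩
      · intro hcon
        have h0 : (2 : ZMod q)⁻¹ * 2 = 0 := by linear_combination hcon
        rw [inv_mul_cancel₀ h2] at h0
        exact one_ne_zero h0
      · rw [hc2]
        field_simp
        ring
    · -- generic case: solve s^2 = 2c b^2 - 1
      set c : ZMod q := (n : ZMod q) + 2 with hc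
      have hRodd : Fintype.card (ZMod q) % 2 = 1 := by
        rw [ZMod.card]; exact Nat.odd_iff.mp hodd
      have h2c : (-(2 * c) : ZMod q) ≠ 0 := by
        simp only [neg_ne_zero]
        exact mul_ne_zero h2 hc0
      obtain ⟨s, b, hsb⟩ := FiniteField.exists_root_sum_quadratic
        (f := X ^ 2 + C 1) (g := C (-(2 * c)) * X ^ 2)
        (by compute_degree!) (by compute_degree! <;> exact h2c) hRodd
      simp only [eval_add, eval_pow, eval_X, eval_C, eval_mul] at hsb
      have hs2 : s ^ 2 = 2 * c * b ^ 2 - 1 := by linear_combination hsb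
      by_cases hab : (1 + s) / 2 = b
      · refine ⟨(1 - s) / 2, b, ?_, ?_⟩
        · intro hab2
          have e1 : 1 + s = b * 2 := by
            field_simp at hab; linear_combination hab
          have e2 : 1 - s = b * 2 := by
            field_simp at hab2; linear_combination hab2
          have hs0 : s = 0 := by
            have h2s : 2 * s = 0 := by linear_combination e1 - e2
            exact (mul_eq_zero.mp h2s).resolve_left h2
          apply hc2
          linear_combination c * (2 * b + 1) * (e1 - hs0) + 2 * s * hs0 - 2 * hs2
        · field_simp
          linear_combination -hs2 - 2 * b ^ 2 * hc
      · refine ⟨(1 + s) / 2, b, hab, ?_⟩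
        field_simp
        linear_combination -hs2 - 2 * b ^ 2 * hc

end ImprovedLB

/-- if `n ≢ -2 (mod q)` or `q ≡ 1 (mod 4)`, there is a set
`A ⊆ F_q^n` of size `C(n, q-1) + C(n, q-2)` with no self-orthogonal difference. -/
theorem improved_lower_bound_construction (q n : ℕ) (hq : q.Prime) (hodd : Odd q)
    (h : (n : ZMod q) ≠ -2 ∨ q % 4 = 1) :
    ∃ A : Finset (Fin n → ZMod q),
      A.card = Nat.choose n (q - 1) + Nat.choose n (q - 2) ∧
      ∀ x ∈ A, ∀ y ∈ A, x ≠ y → ∑ i, (x i - y i) * (x i - y i) ≠ 0 := by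
  classical
  haveI : Fact q.Prime := ⟨hq⟩
  have hq3 : 3 ≤ q := by
    have h1 := hq.two_le; have h2 := Nat.odd_iff.mp hodd; omega
  obtain ⟨a, b, hab, heq⟩ := ImprovedLB.exists_ab q hq hodd n h
  have hab' : a - b ≠ 0 := sub_ne_zero.mpr hab
  have hcast : ∀ k : ℕ, 0 < k → k < q → ((k : ZMod q) ≠ 0) := by
    intro k hk0 hkq h0
    rw [ZMod.natCast_eq_zero_iff] at h0
    have := Nat.le_of_dvd hk0 h0
    omega
  have h2 : (2 : ZMod q) ≠ 0 := by
    have := hcast 2 (by norm_num) (by omega); simpa using this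
  have hq1 : ((q - 1 : ℕ) : ZMod q) = -1 := by
    rw [Nat.cast_sub (by omega), ZMod.natCast_self]; push_cast; ring
  have hq2 : ((q - 2 : ℕ) : ZMod q) = -2 := by
    rw [Nat.cast_sub (by omega), ZMod.natCast_self]; push_cast; ring
  set f : Finset (Fin n) → (Fin n → ZMod q) := fun s => ImprovedLB.chi q s with hf
  set g : Finset (Fin n) → (Fin n → ZMod q) :=
    fun s i => b + (a - b) * ImprovedLB.chi q s i with hg
  -- nonvanishing within the first family
  have h11 : ∀ s t : Finset (Fin n), s.card = q - 1 → t.card = q - 1 → s ≠ t →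
      ∑ i, (f s i - f t i) ^ 2 ≠ 0 := by
    intro s t hs ht hst
    rw [hf]
    rw [ImprovedLB.key1 s t]
    have hk : (s ∩ t).card < q - 1 := by
      have hle : (s ∩ t).card ≤ s.card :=
        Finset.card_le_card (Finset.inter_subset_left : s ∩ t ⊆ s)
      rcases lt_or_eq_of_le hle with hlt | heqc
      · omega
      · exfalso
        apply hst
        have h1 : s ∩ t = s :=
          Finset.eq_of_subset_of_card_le (Finset.inter_subset_left : s ∩ t ⊆ s)
            (le_of_eq heqc.symm)
        have hsub : s ⊆ t := by rw [← h1]; exact Finset.inter_subset_right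
        exact Finset.eq_of_subset_of_card_le hsub (by omega)
    have hkc : (((s ∩ t).card + 1 : ℕ) : ZMod q) ≠ 0 := hcast _ (by omega) (by omega)
    have hv : ((s.card : ℕ) : ZMod q) + (t.card : ZMod q) - 2 * ((s ∩ t).card : ZMod q)
        = -(2 * (((s ∩ t).card + 1 : ℕ) : ZMod q)) := by
      rw [hs, ht, hq1]
      push_cast
      ring
    rw [hv]
    exact neg_ne_zero.mpr (mul_ne_zero h2 hkc)
  -- nonvanishing within the second family
  have h22 : ∀ s t : Finset (Fin n), s.card = q - 2 → t.card = q - 2 → s ≠ t →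
      ∑ i, (g s i - g t i) ^ 2 ≠ 0 := by
    intro s t hs ht hst
    rw [hg]
    rw [ImprovedLB.key2 a b s t]
    have hk : (s ∩ t).card < q - 2 := by
      have hle : (s ∩ t).card ≤ s.card :=
        Finset.card_le_card (Finset.inter_subset_left : s ∩ t ⊆ s)
      rcases lt_or_eq_of_le hle with hlt | heqc
      · omega
      · exfalso
        apply hst
        have h1 : s ∩ t = s :=
          Finset.eq_of_subset_of_card_le (Finset.inter_subset_left : s ∩ t ⊆ s)
            (le_of_eq heqc.symm)
        have hsub : s ⊆ t := by rw [← h1]; exact Finset.inter_subset_right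
        exact Finset.eq_of_subset_of_card_le hsub (by omega)
    have hkc : (((s ∩ t).card + 2 : ℕ) : ZMod q) ≠ 0 := hcast _ (by omega) (by omega)
    have hv : ((s.card : ℕ) : ZMod q) + (t.card : ZMod q) - 2 * ((s ∩ t).card : ZMod q)
        = -(2 * (((s ∩ t).card + 2 : ℕ) : ZMod q)) := by
      rw [hs, ht, hq2]
      push_cast
      ring
    rw [hv]
    refine mul_ne_zero (pow_ne_zero _ hab') (neg_ne_zero.mpr (mul_ne_zero h2 hkc))
  -- cross nonvanishing
  have hcross : ∀ s t : Finset (Fin n), s.card = q - 1 → t.card = q - 2 →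
      ∑ i, (f s i - g t i) ^ 2 ≠ 0 := by
    intro s t hs ht
    rw [hf, hg]
    rw [ImprovedLB.key3 a b s t]
    have hk : (s ∩ t).card ≤ q - 2 := by
      have := Finset.card_le_card (Finset.inter_subset_right (s₁ := s) (s₂ := t))
      omega
    have hkc : (((s ∩ t).card + 1 : ℕ) : ZMod q) ≠ 0 := hcast _ (by omega) (by omega)
    have hv : (n : ZMod q) * b ^ 2 + (1 - 2 * b) * ((s.card : ℕ) : ZMod q)
        + (a ^ 2 - b ^ 2) * ((t.card : ℕ) : ZMod q)
        - 2 * (a - b) * (((s ∩ t).card : ℕ) : ZMod q)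
        = -(2 * ((a - b) * (((s ∩ t).card + 1 : ℕ) : ZMod q))) := by
      rw [hs, ht, hq1, hq2]
      push_cast
      linear_combination heq
    rw [hv]
    exact neg_ne_zero.mpr (mul_ne_zero h2 (mul_ne_zero hab' hkc))
  -- the two families
  set A1 : Finset (Fin n → ZMod q) :=
    (Finset.powersetCard (q - 1) Finset.univ).image f with hA1
  set A2 : Finset (Fin n → ZMod q) :=
    (Finset.powersetCard (q - 2) Finset.univ).image g with hA2
  have hmem1 : ∀ x ∈ A1, ∃ s : Finset (Fin n), s.card = q - 1 ∧ x = f s := by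
    intro x hx
    rw [hA1, Finset.mem_image] at hx
    obtain ⟨s, hs, hxs⟩ := hx
    exact ⟨s, (Finset.mem_powersetCard_univ).mp hs, hxs.symm⟩
  have hmem2 : ∀ x ∈ A2, ∃ s : Finset (Fin n), s.card = q - 2 ∧ x = g s := by
    intro x hx
    rw [hA2, Finset.mem_image] at hx
    obtain ⟨s, hs, hxs⟩ := hx
    exact ⟨s, (Finset.mem_powersetCard_univ).mp hs, hxs.symm⟩
  have hinj1 : Function.Injective f := by
    intro s t hst
    ext i
    have h1 := congrFun hst i
    simp only [hf, ImprovedLB.chi] at h1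
    constructor
    · intro hi
      by_contra hj
      rw [if_pos hi, if_neg hj] at h1
      exact one_ne_zero h1
    · intro hj
      by_contra hi
      rw [if_neg hi, if_pos hj] at h1
      exact one_ne_zero h1.symm
  have hinj2 : Function.Injective g := by
    intro s t hst
    ext i
    have hgi := congrFun hst i
    simp only [hg] at hgi
    have hchi : ImprovedLB.chi q s i = ImprovedLB.chi q t i := by
      have := add_left_cancel hgi
      exact mul_left_cancel₀ hab' this
    simp only [ImprovedLB.chi] at hchi
    constructor
    · intro hi
      by_contra hj
      rw [if_pos hi, if_neg hj] at hchi
      exact one_ne_zero hchi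
    · intro hj
      by_contra hi
      rw [if_neg hi, if_pos hj] at hchi
      exact one_ne_zero hchi.symm
  have hdisj : Disjoint A1 A2 := by
    rw [Finset.disjoint_left]
    intro x hx1 hx2
    obtain ⟨s, hs, hxs⟩ := hmem1 x hx1
    obtain ⟨t, ht, hxt⟩ := hmem2 x hx2
    apply hcross s t hs ht
    rw [← hxs, ← hxt]
    simp
  refine ⟨A1 ∪ A2, ?_, ?_⟩
  · rw [Finset.card_union_of_disjoint hdisj, hA1, hA2,
      Finset.card_image_of_injective _ hinj1, Finset.card_image_of_injective _ hinj2,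
      Finset.card_powersetCard, Finset.card_powersetCard, Finset.card_univ,
      Fintype.card_fin]
  · intro x hx y hy hxy
    have hsq : ∑ i, (x i - y i) * (x i - y i) = ∑ i, (x i - y i) ^ 2 :=
      Finset.sum_congr rfl fun i _ => by ring
    rw [hsq]
    have hswap : ∑ i, (x i - y i) ^ 2 = ∑ i, (y i - x i) ^ 2 :=
      Finset.sum_congr rfl fun i _ => by ring
    rcases Finset.mem_union.mp hx with hx1 | hx2 <;>
      rcases Finset.mem_union.mp hy with hy1 | hy2
    · obtain ⟨s, hs, hxs⟩ := hmem1 x hx1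
      obtain ⟨t, ht, hyt⟩ := hmem1 y hy1
      subst hxs hyt
      exact h11 s t hs ht (fun hst => hxy (by rw [hst]))
    · obtain ⟨s, hs, hxs⟩ := hmem1 x hx1
      obtain ⟨t, ht, hyt⟩ := hmem2 y hy2
      subst hxs hyt
      exact hcross s t hs ht
    · obtain ⟨s, hs, hxs⟩ := hmem2 x hx2
      obtain ⟨t, ht, hyt⟩ := hmem1 y hy1
      subst hxs hyt
      rw [hswap]
      exact hcross t s ht hs
    · obtain ⟨s, hs, hxs⟩ := hmem2 x hx2
      obtain ⟨t, ht, hyt⟩ := hmem2 y hy2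
      subst hxs hyt
      exact h22 s t hs ht (fun hst => hxy (by rw [hst]))
end

section
/- Let n ≡ 2 (mod 3). Let A ⊆ F_3^n consist of: all vectors with exactly two entries 1 and the rest 0; all vectors with one entry 0 and the rest 2; all vectors with one entry 1 and the rest 2; all vectors with one entry 0 and the rest 1; the all-zero vector; and the all-2 vector. Then |A| = C(n+3, 2) − 1 and no two distinct elements of A have Hamming distance divisible by 3. -/
open Finset

lemma card_ne_cast (n : ℕ) (x y : Fin n → ZMod 3) :
    (((Finset.univ.filter fun i => x i ≠ y i).card : ℕ) : ZMod 3)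
      = ∑ i, (x i - y i)^2 := by
  rw [eq_comm]
  have h : ∀ i, (x i - y i)^2 = if x i ≠ y i then (1:ZMod 3) else 0 := by
    intro i
    by_cases h : x i = y i
    · simp [h]
    · have h' : x i - y i ≠ 0 := sub_ne_zero.mpr h
      rw [if_pos h]
      revert h'; generalize x i - y i = a; revert a; decide
  simp_rw [h]
  rw [Finset.sum_boole]

lemma rep' (n : ℕ) (x : Fin n → ZMod 3) (a b v : ZMod 3) (hv : a + b = v)
    (h : ∀ i, x i = a ∨ x i = v) :
    ∀ i, x i = a + b * (if i ∈ Finset.univ.filter (fun i => x i = v) then 1 else 0) := by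
  intro i
  by_cases hi : x i = v
  · simp [Finset.mem_filter, hi, hv]
  · rcases h i with h' | h'
    · rw [if_neg (by simp [Finset.mem_filter, hi]), mul_zero, add_zero, h']
    · exact absurd h' hi

lemma master (n : ℕ) (a b c d : ZMod 3) (S T : Finset (Fin n))
    (x y : Fin n → ZMod 3)
    (hx : ∀ i, x i = a + b * (if i ∈ S then 1 else 0))
    (hy : ∀ i, y i = c + d * (if i ∈ T then 1 else 0)) :
    ∑ i, (x i - y i)^2 =
      (n : ZMod 3) * (a-c)^2 + (S.card : ZMod 3) * ((a+b-c)^2 - (a-c)^2)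
      + (T.card : ZMod 3) * ((a-c-d)^2 - (a-c)^2)
      + ((S ∩ T).card : ZMod 3) * ((a+b-c-d)^2 - (a+b-c)^2 - (a-c-d)^2 + (a-c)^2) := by
  have key : ∀ i, (x i - y i)^2 =
      (a-c)^2 + ((a+b-c)^2 - (a-c)^2) * (if i ∈ S then (1:ZMod 3) else 0)
      + ((a-c-d)^2 - (a-c)^2) * (if i ∈ T then (1:ZMod 3) else 0)
      + ((a+b-c-d)^2 - (a+b-c)^2 - (a-c-d)^2 + (a-c)^2) * (if i ∈ S ∩ T then (1:ZMod 3) else 0) := by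
    intro i
    rw [hx i, hy i]
    by_cases hS : i ∈ S <;> by_cases hT : i ∈ T <;>
      simp only [hS, hT, Finset.mem_inter, if_true, if_false, and_true, and_false,
        true_and, false_and] <;> ring
  simp_rw [key]
  rw [Finset.sum_add_distrib, Finset.sum_add_distrib, Finset.sum_add_distrib,
    Finset.sum_const, ← Finset.mul_sum, ← Finset.mul_sum, ← Finset.mul_sum,
    Finset.sum_boole, Finset.sum_boole, Finset.sum_boole]
  simp only [Finset.filter_univ_mem, Finset.card_univ, Fintype.card_fin, nsmul_eq_mul]
  ring

lemma same_ne (n : ℕ) (a b : ZMod 3) (S T : Finset (Fin n)) (x y : Fin n → ZMod 3)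
    (rx : ∀ i, x i = a + b * (if i ∈ S then 1 else 0))
    (ry : ∀ i, y i = a + b * (if i ∈ T then 1 else 0))
    (hxy : x ≠ y) (hST : S.card = T.card) : (S ∩ T).card ≠ S.card := by
  intro h
  have h1 : S ∩ T = S :=
    Finset.eq_of_subset_of_card_le Finset.inter_subset_left (le_of_eq h.symm)
  have hsub : S ⊆ T := h1 ▸ Finset.inter_subset_right
  have hST' : S = T := Finset.eq_of_subset_of_card_le hsub (hST ▸ le_refl _)
  exact hxy (funext fun i => by rw [rx i, ry i, hST'])

lemma count_class (n : ℕ) (a v : ZMod 3) (hav : a ≠ v) (k : ℕ) :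
    (Finset.univ.filter fun x : Fin n → ZMod 3 =>
       (∀ i, x i = a ∨ x i = v) ∧ (Finset.univ.filter fun i => x i = v).card = k).card
     = n.choose k := by
  have h := Finset.card_powersetCard k (Finset.univ : Finset (Fin n))
  rw [Finset.card_univ, Fintype.card_fin] at h
  rw [← h]
  refine Finset.card_bij' (fun x _ => Finset.univ.filter fun i => x i = v)
    (fun s _ => fun i => if i ∈ s then v else a) ?_ ?_ ?_ ?_
  · intro x hx
    simp only [Finset.mem_filter, Finset.mem_univ, true_and] at hx
    simp [Finset.mem_powersetCard, hx.2]
  · intro s hs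
    simp only [Finset.mem_powersetCard] at hs
    simp only [Finset.mem_filter, Finset.mem_univ, true_and]
    constructor
    · intro i; by_cases h : i ∈ s <;> simp [h]
    · rw [← hs.2]; congr 1
      ext i
      simp only [Finset.mem_filter, Finset.mem_univ, true_and]
      by_cases h : i ∈ s <;> simp only [h, if_true, if_false, iff_true, iff_false]
      · exact hav
  · intro x hx
    simp only [Finset.mem_filter, Finset.mem_univ, true_and] at hx
    funext i
    rcases hx.1 i with h | h <;>
      simp only [Finset.mem_filter, Finset.mem_univ, true_and, h]
    · rw [if_neg hav]
    · simp
  · intro s hs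
    ext i
    simp only [Finset.mem_filter, Finset.mem_univ, true_and]
    by_cases h : i ∈ s <;> simp only [h, if_true, if_false, iff_true, iff_false]
    exact hav

lemma exists_val (n : ℕ) (x : Fin n → ZMod 3) (v : ZMod 3) (k : ℕ) (hk : 0 < k)
    (h : (Finset.univ.filter fun i => x i = v).card = k) : ∃ i, x i = v := by
  obtain ⟨i, hi⟩ := Finset.card_pos.mp (h ▸ hk)
  exact ⟨i, (Finset.mem_filter.mp hi).2⟩

lemma sum_card (n : ℕ) (x : Fin n → ZMod 3) (a b : ZMod 3) (hab : a ≠ b)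
    (h : ∀ i, x i = a ∨ x i = b) :
    (Finset.univ.filter fun i => x i = a).card
      + (Finset.univ.filter fun i => x i = b).card = n := by
  rw [← Finset.card_union_of_disjoint, ← Finset.filter_or]
  · rw [Finset.filter_true_of_mem (fun i _ => h i), Finset.card_univ, Fintype.card_fin]
  · rw [Finset.disjoint_left]
    intro i h1 h2
    rw [Finset.mem_filter] at h1 h2
    exact hab (h1.2.symm.trans h2.2)

lemma count_const (n : ℕ) (c : Fin n → ZMod 3) :
    (Finset.univ.filter fun x : Fin n → ZMod 3 => x = c).card = 1 := by
  rw [Finset.filter_eq']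
  simp

lemma leaf (n : ℕ) (hn2 : ((n:ℕ) : ZMod 3) = 2) (a b c d : ZMod 3)
    (S T : Finset (Fin n)) (x y : Fin n → ZMod 3)
    (rx : ∀ i, x i = a + b * (if i ∈ S then 1 else 0))
    (ry : ∀ i, y i = c + d * (if i ∈ T then 1 else 0))
    (h0 : ∑ i, (x i - y i)^2 = 0)
    (k1 k2 : ℕ) (hS : S.card = k1) (hT : T.card = k2) :
    ∃ m : ℕ, m ≤ k1 ∧ m ≤ k2 ∧
      (2 * (a-c)^2 + (k1 : ZMod 3) * ((a+b-c)^2 - (a-c)^2)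
      + (k2 : ZMod 3) * ((a-c-d)^2 - (a-c)^2)
      + (m : ZMod 3) * ((a+b-c-d)^2 - (a+b-c)^2 - (a-c-d)^2 + (a-c)^2) = 0)
      ∧ m = (S ∩ T).card := by
  refine ⟨(S ∩ T).card, ?_, ?_, ?_, rfl⟩
  · exact hS ▸ Finset.card_le_card Finset.inter_subset_left
  · exact hT ▸ Finset.card_le_card Finset.inter_subset_right
  · rw [master n a b c d S T x y rx ry, hn2, hS, hT] at h0
    exact h0

lemma filter_of_const (n : ℕ) (x : Fin n → ZMod 3) (c v : ZMod 3) (hx : ∀ i, x i = c)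
    (hcv : c ≠ v) : (Finset.univ.filter fun i => x i = v) = ∅ := by
  apply Finset.filter_false_of_mem
  intro i _ h
  exact hcv ((hx i).symm.trans h)

lemma filter_of_const_eq (n : ℕ) (x : Fin n → ZMod 3) (c : ZMod 3) (hx : ∀ i, x i = c) :
    (Finset.univ.filter fun i => x i = c) = Finset.univ :=
  Finset.filter_true_of_mem (fun i _ => hx i)

/-- for `n ≡ 2 (mod 3)`, the explicit set `A ⊆ F_3^n` has size
`C(n+3,2) - 1` and no two distinct elements at Hamming distance divisible by 3. -/
theorem mod3_construction (n : ℕ) (hn : n % 3 = 2)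
    (A : Finset (Fin n → ZMod 3))
    (hA : A = Finset.univ.filter (fun x : Fin n → ZMod 3 =>
      ((∀ i, x i = 0 ∨ x i = 1) ∧
        (Finset.univ.filter (fun i => x i = 1)).card = 2) ∨
      ((∀ i, x i = 0 ∨ x i = 2) ∧
        (Finset.univ.filter (fun i => x i = 0)).card = 1) ∨
      ((∀ i, x i = 1 ∨ x i = 2) ∧
        (Finset.univ.filter (fun i => x i = 1)).card = 1) ∨
      ((∀ i, x i = 0 ∨ x i = 1) ∧
        (Finset.univ.filter (fun i => x i = 0)).card = 1) ∨
      x = (fun _ => 0) ∨ x = (fun _ => 2))) :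
    A.card = Nat.choose (n + 3) 2 - 1 ∧
    ∀ x ∈ A, ∀ y ∈ A, x ≠ y →
      ¬ (3 ∣ (Finset.univ.filter (fun i => x i ≠ y i)).card) := by
  subst hA
  have hn2 : ((n:ℕ) : ZMod 3) = 2 := by
    rw [← ZMod.natCast_mod n 3, hn]; decide
  constructor
  · rw [Finset.filter_or, Finset.filter_or, Finset.filter_or, Finset.filter_or,
      Finset.filter_or]
    set F1 := Finset.univ.filter (fun x : Fin n → ZMod 3 => (∀ i, x i = 0 ∨ x i = 1) ∧ (Finset.univ.filter (fun i => x i = 1)).card = 2) with hF1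
    set F2 := Finset.univ.filter (fun x : Fin n → ZMod 3 => (∀ i, x i = 0 ∨ x i = 2) ∧ (Finset.univ.filter (fun i => x i = 0)).card = 1) with hF2
    set F3 := Finset.univ.filter (fun x : Fin n → ZMod 3 => (∀ i, x i = 1 ∨ x i = 2) ∧ (Finset.univ.filter (fun i => x i = 1)).card = 1) with hF3
    set F4 := Finset.univ.filter (fun x : Fin n → ZMod 3 => (∀ i, x i = 0 ∨ x i = 1) ∧ (Finset.univ.filter (fun i => x i = 0)).card = 1) with hF4
    set F5 := Finset.univ.filter (fun x : Fin n → ZMod 3 => x = (fun _ => 0)) with hF5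
    set F6 := Finset.univ.filter (fun x : Fin n → ZMod 3 => x = (fun _ => 2)) with hF6
    have d12 : Disjoint F1 F2 := by
      rw [Finset.disjoint_left]
      intro x h1 h2
      rw [hF1, Finset.mem_filter] at h1
      rw [hF2, Finset.mem_filter] at h2
      obtain ⟨i, hi⟩ := exists_val n x 1 2 (by norm_num) h1.2.2
      rcases h2.2.1 i with h | h <;> rw [hi] at h <;> exact absurd h (by decide)
    have d13 : Disjoint F1 F3 := by
      rw [Finset.disjoint_left]
      intro x h1 h2
      rw [hF1, Finset.mem_filter] at h1
      rw [hF3, Finset.mem_filter] at h2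
      have := h1.2.2; have := h2.2.2; omega
    have d14 : Disjoint F1 F4 := by
      rw [Finset.disjoint_left]
      intro x h1 h2
      rw [hF1, Finset.mem_filter] at h1
      rw [hF4, Finset.mem_filter] at h2
      have hs := sum_card n x 0 1 (by decide) h1.2.1
      have := h1.2.2; have := h2.2.2; omega
    have d15 : Disjoint F1 F5 := by
      rw [Finset.disjoint_left]
      intro x h1 h2
      rw [hF1, Finset.mem_filter] at h1
      rw [hF5, Finset.mem_filter] at h2
      have hxall : ∀ i, x i = 0 := fun i => congrFun h2.2 i
      rw [filter_of_const n x 0 1 hxall (by decide)] at h1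
      simp at h1
    have d16 : Disjoint F1 F6 := by
      rw [Finset.disjoint_left]
      intro x h1 h2
      rw [hF1, Finset.mem_filter] at h1
      rw [hF6, Finset.mem_filter] at h2
      have hxall : ∀ i, x i = 2 := fun i => congrFun h2.2 i
      have hi : (0:ℕ) < n := by omega
      rcases h1.2.1 ⟨0, hi⟩ with h | h <;> rw [hxall ⟨0, hi⟩] at h <;>
        exact absurd h (by decide)
    have d23 : Disjoint F2 F3 := by
      rw [Finset.disjoint_left]
      intro x h1 h2
      rw [hF2, Finset.mem_filter] at h1
      rw [hF3, Finset.mem_filter] at h2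
      obtain ⟨i, hi⟩ := exists_val n x 1 1 (by norm_num) h2.2.2
      rcases h1.2.1 i with h | h <;> rw [hi] at h <;> exact absurd h (by decide)
    have d24 : Disjoint F2 F4 := by
      rw [Finset.disjoint_left]
      intro x h1 h2
      rw [hF2, Finset.mem_filter] at h1
      rw [hF4, Finset.mem_filter] at h2
      have h10 : (Finset.univ.filter fun i => x i = 1) = ∅ := by
        apply Finset.filter_false_of_mem
        intro i _ h
        rcases h1.2.1 i with h' | h' <;> rw [h'] at h <;> exact absurd h (by decide)
      have hs := sum_card n x 0 1 (by decide) (fun i => (h2.2.1 i))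
      rw [h10] at hs
      simp only [Finset.card_empty] at hs
      have := h2.2.2; omega
    have d25 : Disjoint F2 F5 := by
      rw [Finset.disjoint_left]
      intro x h1 h2
      rw [hF2, Finset.mem_filter] at h1
      rw [hF5, Finset.mem_filter] at h2
      have hxall : ∀ i, x i = 0 := fun i => congrFun h2.2 i
      rw [filter_of_const_eq n x 0 hxall, Finset.card_univ, Fintype.card_fin] at h1
      have := h1.2.2; omega
    have d26 : Disjoint F2 F6 := by
      rw [Finset.disjoint_left]
      intro x h1 h2
      rw [hF2, Finset.mem_filter] at h1
      rw [hF6, Finset.mem_filter] at h2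
      have hxall : ∀ i, x i = 2 := fun i => congrFun h2.2 i
      rw [filter_of_const n x 2 0 hxall (by decide)] at h1
      simp at h1
    have d34 : Disjoint F3 F4 := by
      rw [Finset.disjoint_left]
      intro x h1 h2
      rw [hF3, Finset.mem_filter] at h1
      rw [hF4, Finset.mem_filter] at h2
      have h00 : (Finset.univ.filter fun i => x i = 0) = ∅ := by
        apply Finset.filter_false_of_mem
        intro i _ h
        rcases h1.2.1 i with h' | h' <;> rw [h'] at h <;> exact absurd h (by decide)
      rw [h00] at h2
      simp at h2
    have d35 : Disjoint F3 F5 := by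
      rw [Finset.disjoint_left]
      intro x h1 h2
      rw [hF3, Finset.mem_filter] at h1
      rw [hF5, Finset.mem_filter] at h2
      have hxall : ∀ i, x i = 0 := fun i => congrFun h2.2 i
      rw [filter_of_const n x 0 1 hxall (by decide)] at h1
      simp at h1
    have d36 : Disjoint F3 F6 := by
      rw [Finset.disjoint_left]
      intro x h1 h2
      rw [hF3, Finset.mem_filter] at h1
      rw [hF6, Finset.mem_filter] at h2
      have hxall : ∀ i, x i = 2 := fun i => congrFun h2.2 i
      rw [filter_of_const n x 2 1 hxall (by decide)] at h1
      simp at h1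
    have d45 : Disjoint F4 F5 := by
      rw [Finset.disjoint_left]
      intro x h1 h2
      rw [hF4, Finset.mem_filter] at h1
      rw [hF5, Finset.mem_filter] at h2
      have hxall : ∀ i, x i = 0 := fun i => congrFun h2.2 i
      rw [filter_of_const_eq n x 0 hxall, Finset.card_univ, Fintype.card_fin] at h1
      have := h1.2.2; omega
    have d46 : Disjoint F4 F6 := by
      rw [Finset.disjoint_left]
      intro x h1 h2
      rw [hF4, Finset.mem_filter] at h1
      rw [hF6, Finset.mem_filter] at h2
      have hxall : ∀ i, x i = 2 := fun i => congrFun h2.2 i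
      rw [filter_of_const n x 2 0 hxall (by decide)] at h1
      simp at h1
    have d56 : Disjoint F5 F6 := by
      rw [Finset.disjoint_left]
      intro x h1 h2
      rw [hF5, Finset.mem_filter] at h1
      rw [hF6, Finset.mem_filter] at h2
      have h01 : x = (fun _ => 0) := h1.2
      have h02 : x = (fun _ => 2) := h2.2
      have hi : (0:ℕ) < n := by omega
      have := (congrFun h01 ⟨0, hi⟩).symm.trans (congrFun h02 ⟨0, hi⟩)
      exact absurd this (by decide)
    rw [Finset.card_union_of_disjoint (by
      simp only [Finset.disjoint_union_right]; exact ⟨d12, d13, d14, d15, d16⟩)]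
    rw [Finset.card_union_of_disjoint (by
      simp only [Finset.disjoint_union_right]; exact ⟨d23, d24, d25, d26⟩)]
    rw [Finset.card_union_of_disjoint (by
      simp only [Finset.disjoint_union_right]; exact ⟨d34, d35, d36⟩)]
    rw [Finset.card_union_of_disjoint (by
      simp only [Finset.disjoint_union_right]; exact ⟨d45, d46⟩)]
    rw [Finset.card_union_of_disjoint d56]
    have c1 : F1.card = n.choose 2 := by
      rw [hF1]; exact count_class n 0 1 (by decide) 2
    have c2 : F2.card = n.choose 1 := by
      rw [hF2, Finset.filter_congr (fun x _ =>
        and_congr_left' (forall_congr' (fun i => or_comm)))]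
      exact count_class n 2 0 (by decide) 1
    have c3 : F3.card = n.choose 1 := by
      rw [hF3, Finset.filter_congr (fun x _ =>
        and_congr_left' (forall_congr' (fun i => or_comm)))]
      exact count_class n 2 1 (by decide) 1
    have c4 : F4.card = n.choose 1 := by
      rw [hF4, Finset.filter_congr (fun x _ =>
        and_congr_left' (forall_congr' (fun i => or_comm)))]
      exact count_class n 1 0 (by decide) 1
    have c5 : F5.card = 1 := by rw [hF5]; exact count_const n _
    have c6 : F6.card = 1 := by rw [hF6]; exact count_const n _
    rw [c1, c2, c3, c4, c5, c6, Nat.choose_one_right, Nat.choose_two_right,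
      Nat.choose_two_right]
    obtain ⟨m, rfl⟩ : ∃ m, n = m + 2 := ⟨n - 2, by omega⟩
    have e1 : (m+2) * (m+2-1) = m*m + 3*m + 2 := by
      rw [show m+2-1 = m+1 from rfl]; ring
    have e2 : (m+2+3) * (m+2+3-1) = m*m + 9*m + 20 := by
      rw [show m+2+3-1 = m+4 from rfl]; ring
    rw [e1, e2]
    generalize m*m = q
    omega
  · intro x hx y hy hxy hdvd
    rw [Finset.mem_filter] at hx hy
    have h0 : ∑ i, (x i - y i)^2 = (0 : ZMod 3) := by
      rw [← card_ne_cast]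
      exact (ZMod.natCast_eq_zero_iff _ 3).mpr hdvd
    rcases hx.2 with ⟨hx1, hx2⟩ | ⟨hx1, hx2⟩ | ⟨hx1, hx2⟩ | ⟨hx1, hx2⟩ | hx2 | hx2
    · have rx := rep' n x 0 1 1 (by decide) hx1
      have hSrx := hx2
      rcases hy.2 with ⟨hy1, hy2⟩ | ⟨hy1, hy2⟩ | ⟨hy1, hy2⟩ | ⟨hy1, hy2⟩ | hy2 | hy2
      · have ry := rep' n y 0 1 1 (by decide) hy1
        have hSry := hy2
        have hmne := same_ne n 0 1 _ _ x y rx ry hxy (by rw [hSrx, hSry])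
        obtain ⟨m, hm1, hm2, heq, hmeq⟩ := leaf n hn2 0 1 0 1 _ _ x y rx ry h0 2 2 hSrx hSry
        rw [hSrx, ← hmeq] at hmne
        interval_cases m <;> first | exact hmne rfl | (revert heq; decide)
      · have ry := rep' n y 2 1 0 (by decide) (fun i => (hy1 i).symm)
        have hSry := hy2
        obtain ⟨m, hm1, hm2, heq, -⟩ := leaf n hn2 0 1 2 1 _ _ x y rx ry h0 2 1 hSrx hSry
        interval_cases m <;> revert heq <;> decide
      · have ry := rep' n y 2 2 1 (by decide) (fun i => (hy1 i).symm)
        have hSry := hy2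
        obtain ⟨m, hm1, hm2, heq, -⟩ := leaf n hn2 0 1 2 2 _ _ x y rx ry h0 2 1 hSrx hSry
        interval_cases m <;> revert heq <;> decide
      · have ry := rep' n y 1 2 0 (by decide) (fun i => (hy1 i).symm)
        have hSry := hy2
        obtain ⟨m, hm1, hm2, heq, -⟩ := leaf n hn2 0 1 1 2 _ _ x y rx ry h0 2 1 hSrx hSry
        interval_cases m <;> revert heq <;> decide
      · have ryall : ∀ i, y i = 0 := fun i => congrFun hy2 i
        have ry : ∀ i, y i = 0 + 0 * (if i ∈ (∅ : Finset (Fin n)) then 1 else 0) := fun i => by rw [ryall i]; simp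
        have hSry : (∅ : Finset (Fin n)).card = 0 := Finset.card_empty
        obtain ⟨m, hm1, hm2, heq, -⟩ := leaf n hn2 0 1 0 0 _ _ x y rx ry h0 2 0 hSrx hSry
        interval_cases m <;> revert heq <;> decide
      · have ryall : ∀ i, y i = 2 := fun i => congrFun hy2 i
        have ry : ∀ i, y i = 2 + 0 * (if i ∈ (∅ : Finset (Fin n)) then 1 else 0) := fun i => by rw [ryall i]; simp
        have hSry : (∅ : Finset (Fin n)).card = 0 := Finset.card_empty
        obtain ⟨m, hm1, hm2, heq, -⟩ := leaf n hn2 0 1 2 0 _ _ x y rx ry h0 2 0 hSrx hSry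
        interval_cases m <;> revert heq <;> decide
    · have rx := rep' n x 2 1 0 (by decide) (fun i => (hx1 i).symm)
      have hSrx := hx2
      rcases hy.2 with ⟨hy1, hy2⟩ | ⟨hy1, hy2⟩ | ⟨hy1, hy2⟩ | ⟨hy1, hy2⟩ | hy2 | hy2
      · have ry := rep' n y 0 1 1 (by decide) hy1
        have hSry := hy2
        obtain ⟨m, hm1, hm2, heq, -⟩ := leaf n hn2 2 1 0 1 _ _ x y rx ry h0 1 2 hSrx hSry
        interval_cases m <;> revert heq <;> decide
      · have ry := rep' n y 2 1 0 (by decide) (fun i => (hy1 i).symm)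
        have hSry := hy2
        have hmne := same_ne n 2 1 _ _ x y rx ry hxy (by rw [hSrx, hSry])
        obtain ⟨m, hm1, hm2, heq, hmeq⟩ := leaf n hn2 2 1 2 1 _ _ x y rx ry h0 1 1 hSrx hSry
        rw [hSrx, ← hmeq] at hmne
        interval_cases m <;> first | exact hmne rfl | (revert heq; decide)
      · have ry := rep' n y 2 2 1 (by decide) (fun i => (hy1 i).symm)
        have hSry := hy2
        obtain ⟨m, hm1, hm2, heq, -⟩ := leaf n hn2 2 1 2 2 _ _ x y rx ry h0 1 1 hSrx hSry
        interval_cases m <;> revert heq <;> decide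
      · have ry := rep' n y 1 2 0 (by decide) (fun i => (hy1 i).symm)
        have hSry := hy2
        obtain ⟨m, hm1, hm2, heq, -⟩ := leaf n hn2 2 1 1 2 _ _ x y rx ry h0 1 1 hSrx hSry
        interval_cases m <;> revert heq <;> decide
      · have ryall : ∀ i, y i = 0 := fun i => congrFun hy2 i
        have ry : ∀ i, y i = 0 + 0 * (if i ∈ (∅ : Finset (Fin n)) then 1 else 0) := fun i => by rw [ryall i]; simp
        have hSry : (∅ : Finset (Fin n)).card = 0 := Finset.card_empty
        obtain ⟨m, hm1, hm2, heq, -⟩ := leaf n hn2 2 1 0 0 _ _ x y rx ry h0 1 0 hSrx hSry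
        interval_cases m <;> revert heq <;> decide
      · have ryall : ∀ i, y i = 2 := fun i => congrFun hy2 i
        have ry : ∀ i, y i = 2 + 0 * (if i ∈ (∅ : Finset (Fin n)) then 1 else 0) := fun i => by rw [ryall i]; simp
        have hSry : (∅ : Finset (Fin n)).card = 0 := Finset.card_empty
        obtain ⟨m, hm1, hm2, heq, -⟩ := leaf n hn2 2 1 2 0 _ _ x y rx ry h0 1 0 hSrx hSry
        interval_cases m <;> revert heq <;> decide
    · have rx := rep' n x 2 2 1 (by decide) (fun i => (hx1 i).symm)
      have hSrx := hx2
      rcases hy.2 with ⟨hy1, hy2⟩ | ⟨hy1, hy2⟩ | ⟨hy1, hy2⟩ | ⟨hy1, hy2⟩ | hy2 | hy2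
      · have ry := rep' n y 0 1 1 (by decide) hy1
        have hSry := hy2
        obtain ⟨m, hm1, hm2, heq, -⟩ := leaf n hn2 2 2 0 1 _ _ x y rx ry h0 1 2 hSrx hSry
        interval_cases m <;> revert heq <;> decide
      · have ry := rep' n y 2 1 0 (by decide) (fun i => (hy1 i).symm)
        have hSry := hy2
        obtain ⟨m, hm1, hm2, heq, -⟩ := leaf n hn2 2 2 2 1 _ _ x y rx ry h0 1 1 hSrx hSry
        interval_cases m <;> revert heq <;> decide
      · have ry := rep' n y 2 2 1 (by decide) (fun i => (hy1 i).symm)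
        have hSry := hy2
        have hmne := same_ne n 2 2 _ _ x y rx ry hxy (by rw [hSrx, hSry])
        obtain ⟨m, hm1, hm2, heq, hmeq⟩ := leaf n hn2 2 2 2 2 _ _ x y rx ry h0 1 1 hSrx hSry
        rw [hSrx, ← hmeq] at hmne
        interval_cases m <;> first | exact hmne rfl | (revert heq; decide)
      · have ry := rep' n y 1 2 0 (by decide) (fun i => (hy1 i).symm)
        have hSry := hy2
        obtain ⟨m, hm1, hm2, heq, -⟩ := leaf n hn2 2 2 1 2 _ _ x y rx ry h0 1 1 hSrx hSry
        interval_cases m <;> revert heq <;> decide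
      · have ryall : ∀ i, y i = 0 := fun i => congrFun hy2 i
        have ry : ∀ i, y i = 0 + 0 * (if i ∈ (∅ : Finset (Fin n)) then 1 else 0) := fun i => by rw [ryall i]; simp
        have hSry : (∅ : Finset (Fin n)).card = 0 := Finset.card_empty
        obtain ⟨m, hm1, hm2, heq, -⟩ := leaf n hn2 2 2 0 0 _ _ x y rx ry h0 1 0 hSrx hSry
        interval_cases m <;> revert heq <;> decide
      · have ryall : ∀ i, y i = 2 := fun i => congrFun hy2 i
        have ry : ∀ i, y i = 2 + 0 * (if i ∈ (∅ : Finset (Fin n)) then 1 else 0) := fun i => by rw [ryall i]; simp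
        have hSry : (∅ : Finset (Fin n)).card = 0 := Finset.card_empty
        obtain ⟨m, hm1, hm2, heq, -⟩ := leaf n hn2 2 2 2 0 _ _ x y rx ry h0 1 0 hSrx hSry
        interval_cases m <;> revert heq <;> decide
    · have rx := rep' n x 1 2 0 (by decide) (fun i => (hx1 i).symm)
      have hSrx := hx2
      rcases hy.2 with ⟨hy1, hy2⟩ | ⟨hy1, hy2⟩ | ⟨hy1, hy2⟩ | ⟨hy1, hy2⟩ | hy2 | hy2
      · have ry := rep' n y 0 1 1 (by decide) hy1
        have hSry := hy2
        obtain ⟨m, hm1, hm2, heq, -⟩ := leaf n hn2 1 2 0 1 _ _ x y rx ry h0 1 2 hSrx hSry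
        interval_cases m <;> revert heq <;> decide
      · have ry := rep' n y 2 1 0 (by decide) (fun i => (hy1 i).symm)
        have hSry := hy2
        obtain ⟨m, hm1, hm2, heq, -⟩ := leaf n hn2 1 2 2 1 _ _ x y rx ry h0 1 1 hSrx hSry
        interval_cases m <;> revert heq <;> decide
      · have ry := rep' n y 2 2 1 (by decide) (fun i => (hy1 i).symm)
        have hSry := hy2
        obtain ⟨m, hm1, hm2, heq, -⟩ := leaf n hn2 1 2 2 2 _ _ x y rx ry h0 1 1 hSrx hSry
        interval_cases m <;> revert heq <;> decide
      · have ry := rep' n y 1 2 0 (by decide) (fun i => (hy1 i).symm)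
        have hSry := hy2
        have hmne := same_ne n 1 2 _ _ x y rx ry hxy (by rw [hSrx, hSry])
        obtain ⟨m, hm1, hm2, heq, hmeq⟩ := leaf n hn2 1 2 1 2 _ _ x y rx ry h0 1 1 hSrx hSry
        rw [hSrx, ← hmeq] at hmne
        interval_cases m <;> first | exact hmne rfl | (revert heq; decide)
      · have ryall : ∀ i, y i = 0 := fun i => congrFun hy2 i
        have ry : ∀ i, y i = 0 + 0 * (if i ∈ (∅ : Finset (Fin n)) then 1 else 0) := fun i => by rw [ryall i]; simp
        have hSry : (∅ : Finset (Fin n)).card = 0 := Finset.card_empty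
        obtain ⟨m, hm1, hm2, heq, -⟩ := leaf n hn2 1 2 0 0 _ _ x y rx ry h0 1 0 hSrx hSry
        interval_cases m <;> revert heq <;> decide
      · have ryall : ∀ i, y i = 2 := fun i => congrFun hy2 i
        have ry : ∀ i, y i = 2 + 0 * (if i ∈ (∅ : Finset (Fin n)) then 1 else 0) := fun i => by rw [ryall i]; simp
        have hSry : (∅ : Finset (Fin n)).card = 0 := Finset.card_empty
        obtain ⟨m, hm1, hm2, heq, -⟩ := leaf n hn2 1 2 2 0 _ _ x y rx ry h0 1 0 hSrx hSry
        interval_cases m <;> revert heq <;> decide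
    · have rxall : ∀ i, x i = 0 := fun i => congrFun hx2 i
      have rx : ∀ i, x i = 0 + 0 * (if i ∈ (∅ : Finset (Fin n)) then 1 else 0) := fun i => by rw [rxall i]; simp
      have hSrx : (∅ : Finset (Fin n)).card = 0 := Finset.card_empty
      rcases hy.2 with ⟨hy1, hy2⟩ | ⟨hy1, hy2⟩ | ⟨hy1, hy2⟩ | ⟨hy1, hy2⟩ | hy2 | hy2
      · have ry := rep' n y 0 1 1 (by decide) hy1
        have hSry := hy2
        obtain ⟨m, hm1, hm2, heq, -⟩ := leaf n hn2 0 0 0 1 _ _ x y rx ry h0 0 2 hSrx hSry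
        interval_cases m <;> revert heq <;> decide
      · have ry := rep' n y 2 1 0 (by decide) (fun i => (hy1 i).symm)
        have hSry := hy2
        obtain ⟨m, hm1, hm2, heq, -⟩ := leaf n hn2 0 0 2 1 _ _ x y rx ry h0 0 1 hSrx hSry
        interval_cases m <;> revert heq <;> decide
      · have ry := rep' n y 2 2 1 (by decide) (fun i => (hy1 i).symm)
        have hSry := hy2
        obtain ⟨m, hm1, hm2, heq, -⟩ := leaf n hn2 0 0 2 2 _ _ x y rx ry h0 0 1 hSrx hSry
        interval_cases m <;> revert heq <;> decide
      · have ry := rep' n y 1 2 0 (by decide) (fun i => (hy1 i).symm)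
        have hSry := hy2
        obtain ⟨m, hm1, hm2, heq, -⟩ := leaf n hn2 0 0 1 2 _ _ x y rx ry h0 0 1 hSrx hSry
        interval_cases m <;> revert heq <;> decide
      · have ryall : ∀ i, y i = 0 := fun i => congrFun hy2 i
        have ry : ∀ i, y i = 0 + 0 * (if i ∈ (∅ : Finset (Fin n)) then 1 else 0) := fun i => by rw [ryall i]; simp
        have hSry : (∅ : Finset (Fin n)).card = 0 := Finset.card_empty
        exact hxy (hx2.trans hy2.symm)
      · have ryall : ∀ i, y i = 2 := fun i => congrFun hy2 i
        have ry : ∀ i, y i = 2 + 0 * (if i ∈ (∅ : Finset (Fin n)) then 1 else 0) := fun i => by rw [ryall i]; simp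
        have hSry : (∅ : Finset (Fin n)).card = 0 := Finset.card_empty
        obtain ⟨m, hm1, hm2, heq, -⟩ := leaf n hn2 0 0 2 0 _ _ x y rx ry h0 0 0 hSrx hSry
        interval_cases m <;> revert heq <;> decide
    · have rxall : ∀ i, x i = 2 := fun i => congrFun hx2 i
      have rx : ∀ i, x i = 2 + 0 * (if i ∈ (∅ : Finset (Fin n)) then 1 else 0) := fun i => by rw [rxall i]; simp
      have hSrx : (∅ : Finset (Fin n)).card = 0 := Finset.card_empty
      rcases hy.2 with ⟨hy1, hy2⟩ | ⟨hy1, hy2⟩ | ⟨hy1, hy2⟩ | ⟨hy1, hy2⟩ | hy2 | hy2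
      · have ry := rep' n y 0 1 1 (by decide) hy1
        have hSry := hy2
        obtain ⟨m, hm1, hm2, heq, -⟩ := leaf n hn2 2 0 0 1 _ _ x y rx ry h0 0 2 hSrx hSry
        interval_cases m <;> revert heq <;> decide
      · have ry := rep' n y 2 1 0 (by decide) (fun i => (hy1 i).symm)
        have hSry := hy2
        obtain ⟨m, hm1, hm2, heq, -⟩ := leaf n hn2 2 0 2 1 _ _ x y rx ry h0 0 1 hSrx hSry
        interval_cases m <;> revert heq <;> decide
      · have ry := rep' n y 2 2 1 (by decide) (fun i => (hy1 i).symm)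
        have hSry := hy2
        obtain ⟨m, hm1, hm2, heq, -⟩ := leaf n hn2 2 0 2 2 _ _ x y rx ry h0 0 1 hSrx hSry
        interval_cases m <;> revert heq <;> decide
      · have ry := rep' n y 1 2 0 (by decide) (fun i => (hy1 i).symm)
        have hSry := hy2
        obtain ⟨m, hm1, hm2, heq, -⟩ := leaf n hn2 2 0 1 2 _ _ x y rx ry h0 0 1 hSrx hSry
        interval_cases m <;> revert heq <;> decide
      · have ryall : ∀ i, y i = 0 := fun i => congrFun hy2 i
        have ry : ∀ i, y i = 0 + 0 * (if i ∈ (∅ : Finset (Fin n)) then 1 else 0) := fun i => by rw [ryall i]; simp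
        have hSry : (∅ : Finset (Fin n)).card = 0 := Finset.card_empty
        obtain ⟨m, hm1, hm2, heq, -⟩ := leaf n hn2 2 0 0 0 _ _ x y rx ry h0 0 0 hSrx hSry
        interval_cases m <;> revert heq <;> decide
      · have ryall : ∀ i, y i = 2 := fun i => congrFun hy2 i
        have ry : ∀ i, y i = 2 + 0 * (if i ∈ (∅ : Finset (Fin n)) then 1 else 0) := fun i => by rw [ryall i]; simp
        have hSry : (∅ : Finset (Fin n)).card = 0 := Finset.card_empty
        exact hxy (hx2.trans hy2.symm)
end

section
/- For n ≡ 2 (mod 3), the maximum size S(n,3) of a set A ⊆ F_3^n such that ⟨x−y, x−y⟩ ≠ 0 for all distinct x, y ∈ A equals C(n+3, 2) − 1. -/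
open Finset

namespace SN3Proof

lemma sum_range_id_choose (n : ℕ) : ∑ i ∈ Finset.range n, i = n.choose 2 := by
  induction n with
  | zero => simp
  | succ m ih =>
      rw [Finset.sum_range_succ, ih, Nat.choose_succ_succ, Nat.choose_one_right, Nat.add_comm]

lemma sum_sigma_lt {R : Type*} [AddCommMonoid R] (n : ℕ) (F : Fin n → Fin n → R) :
    (∑ j : Fin n, ∑ i : Fin j.val, F (Fin.castLE j.isLt.le i) j) =
      ∑ p ∈ (univ ×ˢ univ).filter (fun p : Fin n × Fin n => p.1 < p.2), F p.1 p.2 := by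
  rw [Finset.sum_sigma']
  refine Finset.sum_bij' (fun q _ => (Fin.castLE q.1.isLt.le q.2, q.1))
    (fun p hp => ⟨p.2, ⟨p.1.val, (Finset.mem_filter.mp hp).2⟩⟩) ?_ ?_ ?_ ?_ ?_
  · intro q hq
    simp only [Finset.mem_filter, Finset.mem_product, Finset.mem_univ, true_and]
    exact q.2.isLt
  · intro p hp; simp
  · intro q hq; rfl
  · intro p hp; rfl
  · intro q hq; rfl


lemma sq_sum_decomp {R : Type*} [CommRing R] (n : ℕ) (a : Fin n → R) :
    (∑ i, a i) * (∑ i, a i) =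
      (∑ i, a i * a i) +
        2 * ∑ p ∈ (univ ×ˢ univ).filter (fun p : Fin n × Fin n => p.1 < p.2), a p.1 * a p.2 := by
  have memlt : ∀ p : Fin n × Fin n,
      p ∈ (univ ×ˢ univ).filter (fun p : Fin n × Fin n => p.1 < p.2) ↔ p.1 < p.2 := by
    intro p; simp
  have memgt : ∀ p : Fin n × Fin n,
      p ∈ (univ ×ˢ univ).filter (fun p : Fin n × Fin n => p.2 < p.1) ↔ p.2 < p.1 := by
    intro p; simp
  have hswap : ∑ p ∈ (univ ×ˢ univ).filter (fun p : Fin n × Fin n => p.2 < p.1), a p.1 * a p.2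
      = ∑ p ∈ (univ ×ˢ univ).filter (fun p : Fin n × Fin n => p.1 < p.2), a p.1 * a p.2 := by
    refine Finset.sum_bij' (fun p _ => Prod.swap p) (fun p _ => Prod.swap p) ?_ ?_ ?_ ?_ ?_
    · intro p hp; rw [memlt]; exact (memgt p).mp hp
    · intro p hp; rw [memgt]; exact (memlt p).mp hp
    · intro p _; rfl
    · intro p _; rfl
    · intro p _; exact mul_comm _ _
  have hod : ∑ p ∈ (univ : Finset (Fin n)).offDiag, a p.1 * a p.2 =
      2 * ∑ p ∈ (univ ×ˢ univ).filter (fun p : Fin n × Fin n => p.1 < p.2), a p.1 * a p.2 := by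
    have hodeq : (univ : Finset (Fin n)).offDiag =
        ((univ ×ˢ univ).filter (fun p : Fin n × Fin n => p.1 < p.2)) ∪
        ((univ ×ˢ univ).filter (fun p : Fin n × Fin n => p.2 < p.1)) := by
      ext p
      rw [Finset.mem_offDiag, Finset.mem_union, memlt, memgt]
      constructor
      · intro h; exact lt_or_gt_of_ne h.2.2
      · intro h; refine ⟨Finset.mem_univ _, Finset.mem_univ _, ?_⟩
        rcases h with h | h
        · exact ne_of_lt h
        · exact (ne_of_lt h).symm
    have hdisj : Disjoint ((univ ×ˢ univ).filter (fun p : Fin n × Fin n => p.1 < p.2))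
        ((univ ×ˢ univ).filter (fun p : Fin n × Fin n => p.2 < p.1)) := by
      rw [Finset.disjoint_left]
      intro p h1 h2
      rw [memlt] at h1; rw [memgt] at h2
      exact absurd (h1.trans h2) (lt_irrefl _)
    rw [hodeq, Finset.sum_union hdisj, hswap]; ring
  calc (∑ i, a i) * (∑ i, a i) = ∑ p ∈ univ ×ˢ univ, a p.1 * a p.2 := by
        rw [Finset.sum_mul_sum, ← Finset.sum_product']
    _ = ∑ p ∈ (univ : Finset (Fin n)).diag, a p.1 * a p.2
          + ∑ p ∈ (univ : Finset (Fin n)).offDiag, a p.1 * a p.2 := by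
        rw [← Finset.sum_union (Finset.disjoint_diag_offDiag _), Finset.diag_union_offDiag]
    _ = _ := by rw [Finset.sum_diag, hod]

lemma scalar_diag : ∀ c D P : ZMod 3, (c*c = D + 2*P) →
    1 = (1 - c*c) * 1 + 2*(c*c) + c*c + c*c + (c*c - D) + P := by decide

lemma scalar_off : ∀ c u L D P : ZMod 3, (L*L = D + 2*P) → ((c+u+L)*(c+u+L) = 1) →
    (0 : ZMod 3) = (1 - c*c) * 1 + 2*(u*u) + u*L + c*L + (c*u - D) + P := by decide

lemma upper_bound (n : ℕ) (A : Finset (Fin n → ZMod 3))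
    (hA : ∀ x ∈ A, ∀ y ∈ A, x ≠ y → ∑ i, (x i - y i) * (x i - y i) ≠ 0) :
    A.card ≤ n.choose 2 + 3 * n + 2 := by
  classical
  have hpt : ∀ p q : ZMod 3, (p - q) * (p - q) = p * p + q * q + p * q := by decide
  have hdiff : ∀ x y : Fin n → ZMod 3,
      (∑ i, (x i - y i) * (x i - y i)) = (∑ t, x t * x t) + (∑ t, y t * y t) + ∑ t, x t * y t := by
    intro x y
    rw [Finset.sum_congr rfl (fun i _ => hpt (x i) (y i)), Finset.sum_add_distrib,
      Finset.sum_add_distrib]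
  set G : Matrix ↥A ((Fin 2 ⊕ Fin n ⊕ Fin n ⊕ Fin n) ⊕ (Σ j : Fin n, Fin j.val)) (ZMod 3) :=
    Matrix.of fun x k =>
    Sum.elim
      (Sum.elim (fun j : Fin 2 => if j = 0 then 1 - (∑ t, x.1 t * x.1 t) * (∑ t, x.1 t * x.1 t) else 2)
        (Sum.elim (fun i : Fin n => x.1 i)
          (Sum.elim (fun i : Fin n => (∑ t, x.1 t * x.1 t) * x.1 i)
            (fun i : Fin n => (∑ t, x.1 t * x.1 t) - x.1 i * x.1 i))))
      (fun q : Σ j : Fin n, Fin j.val => x.1 (Fin.castLE q.1.isLt.le q.2) * x.1 q.1) k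
    with hG
  set H : Matrix ((Fin 2 ⊕ Fin n ⊕ Fin n ⊕ Fin n) ⊕ (Σ j : Fin n, Fin j.val)) ↥A (ZMod 3) :=
    Matrix.of fun k z =>
    Sum.elim
      (Sum.elim (fun j : Fin 2 => if j = 0 then 1 else (∑ t, z.1 t * z.1 t) * (∑ t, z.1 t * z.1 t))
        (Sum.elim (fun i : Fin n => (∑ t, z.1 t * z.1 t) * z.1 i)
          (Sum.elim (fun i : Fin n => z.1 i)
            (fun i : Fin n => z.1 i * z.1 i))))
      (fun q : Σ j : Fin n, Fin j.val => z.1 (Fin.castLE q.1.isLt.le q.2) * z.1 q.1) k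
    with hH
  have hGH : (1 : Matrix ↥A ↥A (ZMod 3)) = G * H := by
    ext x z
    rw [Matrix.mul_apply]
    have h1 : ∑ i : Fin n, x.1 i * ((∑ t, z.1 t * z.1 t) * z.1 i)
        = (∑ t, z.1 t * z.1 t) * (∑ t, x.1 t * z.1 t) := by
      rw [Finset.mul_sum]
      exact Finset.sum_congr rfl fun i _ => by ring
    have h2 : ∑ i : Fin n, ((∑ t, x.1 t * x.1 t) * x.1 i) * z.1 i
        = (∑ t, x.1 t * x.1 t) * (∑ t, x.1 t * z.1 t) := by
      rw [Finset.mul_sum]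
      exact Finset.sum_congr rfl fun i _ => by ring
    have h3 : ∑ i : Fin n, ((∑ t, x.1 t * x.1 t) - x.1 i * x.1 i) * (z.1 i * z.1 i)
        = (∑ t, x.1 t * x.1 t) * (∑ t, z.1 t * z.1 t)
          - ∑ i : Fin n, (x.1 i * z.1 i) * (x.1 i * z.1 i) := by
      rw [Finset.mul_sum, ← Finset.sum_sub_distrib]
      exact Finset.sum_congr rfl fun i _ => by ring
    have h4 : (∑ j : Fin n, ∑ i : Fin j.val,
        (x.1 (Fin.castLE j.isLt.le i) * x.1 j) * (z.1 (Fin.castLE j.isLt.le i) * z.1 j))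
        = ∑ p ∈ (univ ×ˢ univ).filter (fun p : Fin n × Fin n => p.1 < p.2),
            (x.1 p.1 * z.1 p.1) * (x.1 p.2 * z.1 p.2) := by
      rw [sum_sigma_lt n (fun i j => (x.1 i * x.1 j) * (z.1 i * z.1 j))]
      exact Finset.sum_congr rfl fun p _ => by ring
    have hsq : (∑ t, x.1 t * z.1 t) * (∑ t, x.1 t * z.1 t)
        = (∑ i : Fin n, (x.1 i * z.1 i) * (x.1 i * z.1 i))
          + 2 * ∑ p ∈ (univ ×ˢ univ).filter (fun p : Fin n × Fin n => p.1 < p.2),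
              (x.1 p.1 * z.1 p.1) * (x.1 p.2 * z.1 p.2) := by
      exact sq_sum_decomp n (fun s => x.1 s * z.1 s)
    have hsplit : (∑ k, G x k * H k z) =
        (1 - (∑ t, x.1 t * x.1 t) * (∑ t, x.1 t * x.1 t)) * 1
          + 2 * ((∑ t, z.1 t * z.1 t) * (∑ t, z.1 t * z.1 t))
        + (∑ t, z.1 t * z.1 t) * (∑ t, x.1 t * z.1 t)
        + (∑ t, x.1 t * x.1 t) * (∑ t, x.1 t * z.1 t)
        + ((∑ t, x.1 t * x.1 t) * (∑ t, z.1 t * z.1 t)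
            - ∑ i : Fin n, (x.1 i * z.1 i) * (x.1 i * z.1 i))
        + ∑ p ∈ (univ ×ˢ univ).filter (fun p : Fin n × Fin n => p.1 < p.2),
            (x.1 p.1 * z.1 p.1) * (x.1 p.2 * z.1 p.2) := by
      rw [Fintype.sum_sum_type, Fintype.sum_sum_type, Fintype.sum_sum_type, Fintype.sum_sum_type]
      rw [← Finset.univ_sigma_univ, Finset.sum_sigma]
      simp only [hG, hH, Matrix.of_apply, Sum.elim_inl, Sum.elim_inr, Fin.sum_univ_two]
      rw [h1, h2, h3, h4]
      norm_num
      ring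
    rw [hsplit]
    by_cases hxz : x = z
    · subst hxz
      rw [Matrix.one_apply_eq]
      exact scalar_diag _ _ _ hsq
    · rw [Matrix.one_apply_ne hxz]
      have hne : x.1 ≠ z.1 := fun e => hxz (Subtype.ext e)
      have hv := hA x.1 x.2 z.1 z.2 hne
      rw [hdiff] at hv
      have hvv : ((∑ t, x.1 t * x.1 t) + (∑ t, z.1 t * z.1 t) + (∑ t, x.1 t * z.1 t))
          * ((∑ t, x.1 t * x.1 t) + (∑ t, z.1 t * z.1 t) + (∑ t, x.1 t * z.1 t)) = 1 := by
        revert hv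
        generalize ((∑ t, x.1 t * x.1 t) + (∑ t, z.1 t * z.1 t) + (∑ t, x.1 t * z.1 t)) = v
        revert v; decide
      exact scalar_off _ _ _ _ _ hsq hvv
  have hcard : A.card = (1 : Matrix ↥A ↥A (ZMod 3)).rank := by
    rw [Matrix.rank_one, Fintype.card_coe]
  have hcardι : Fintype.card ((Fin 2 ⊕ Fin n ⊕ Fin n ⊕ Fin n) ⊕ (Σ j : Fin n, Fin j.val))
      ≤ n.choose 2 + 3 * n + 2 := by
    simp only [Fintype.card_sum, Fintype.card_sigma, Fintype.card_fin]
    rw [Fin.sum_univ_eq_sum_range (fun i => i) n, sum_range_id_choose]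
    omega
  calc A.card = (1 : Matrix ↥A ↥A (ZMod 3)).rank := hcard
    _ = (G * H).rank := by rw [← hGH]
    _ ≤ G.rank := Matrix.rank_mul_le_left G H
    _ ≤ Fintype.card ((Fin 2 ⊕ Fin n ⊕ Fin n ⊕ Fin n) ⊕ (Σ j : Fin n, Fin j.val)) :=
        Matrix.rank_le_card_width G
    _ ≤ n.choose 2 + 3 * n + 2 := hcardι

def u4 (n : ℕ) (a β : ZMod 3) (i : Fin n) (γ : ZMod 3) (j : Fin n) : Fin n → ZMod 3 :=
  fun t => a + (if t = i then β else 0) + (if t = j then γ else 0)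

lemma u4_swap (n : ℕ) (a β : ZMod 3) (i : Fin n) (γ : ZMod 3) (j : Fin n) :
    u4 n a β i γ j = u4 n a γ j β i := by
  funext t; simp only [u4]; ring

lemma ip_u4 {n : ℕ} (hn3 : ((n : ℕ) : ZMod 3) = 2) (a β γ a' β' γ' : ZMod 3) (i j k l : Fin n) :
    (∑ t, u4 n a β i γ j t * u4 n a' β' k γ' l t) =
      2*(a*a') + a*(β'+γ') + a'*(β+γ)
      + (if i = k then β*β' else 0) + (if i = l then β*γ' else 0)
      + (if j = k then γ*β' else 0) + (if j = l then γ*γ' else 0) := by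
  classical
  have keyc : (∑ _t : Fin n, a*a') = 2*(a*a') := by
    rw [Finset.sum_const, Finset.card_univ, Fintype.card_fin, nsmul_eq_mul, hn3]
  have key1 : ∀ (p : ZMod 3) (i0 : Fin n), (∑ t, (if t = i0 then p else 0)) = p := by
    intro p i0
    rw [Finset.sum_ite_eq' univ i0 (fun _ => p), if_pos (Finset.mem_univ _)]
  have key2 : ∀ (p q : ZMod 3) (i0 k0 : Fin n),
      (∑ t, (if t = i0 then p else 0) * (if t = k0 then q else 0)) = if i0 = k0 then p*q else 0 := by
    intro p q i0 k0
    have hpt : ∀ t : Fin n, (if t = i0 then p else 0) * (if t = k0 then q else 0)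
        = (if t = i0 then (p * if t = k0 then q else 0) else 0) := by
      intro t; split_ifs <;> simp_all
    rw [Finset.sum_congr rfl (fun t _ => hpt t),
      Finset.sum_ite_eq' univ i0 (fun t => p * if t = k0 then q else 0),
      if_pos (Finset.mem_univ _)]
    by_cases h : i0 = k0
    · simp [h]
    · simp [h]
  have expand : ∀ t : Fin n, u4 n a β i γ j t * u4 n a' β' k γ' l t
      = a*a' + (a*(if t = k then β' else 0)) + (a*(if t = l then γ' else 0))
        + ((if t = i then β else 0)*a') + ((if t = j then γ else 0)*a')
        + ((if t = i then β else 0)*(if t = k then β' else 0))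
        + ((if t = i then β else 0)*(if t = l then γ' else 0))
        + ((if t = j then γ else 0)*(if t = k then β' else 0))
        + ((if t = j then γ else 0)*(if t = l then γ' else 0)) := by
    intro t; simp only [u4]; ring
  rw [Finset.sum_congr rfl (fun t _ => expand t)]
  simp only [Finset.sum_add_distrib]
  rw [keyc, ← Finset.mul_sum, ← Finset.mul_sum, ← Finset.sum_mul, ← Finset.sum_mul,
    key1, key1, key1, key1, key2, key2, key2, key2]
  ring

lemma diff_formula {n : ℕ} (x y : Fin n → ZMod 3) :
    (∑ i, (x i - y i) * (x i - y i)) = (∑ t, x t * x t) + (∑ t, y t * y t) + ∑ t, x t * y t := by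
  have hpt : ∀ p q : ZMod 3, (p - q) * (p - q) = p * p + q * q + p * q := by decide
  rw [Finset.sum_congr rfl (fun i _ => hpt (x i) (y i)), Finset.sum_add_distrib,
    Finset.sum_add_distrib]

def chiv (n : ℕ) (s : Finset (Fin n)) : Fin n → ZMod 3 := fun t => if t ∈ s then 1 else 0

def omv (n : ℕ) (a b : ZMod 3) (i : Fin n) : Fin n → ZMod 3 := fun t => if t = i then b else a

def Pset : Finset (ZMod 3 × ZMod 3) := {(1,0),(2,0),(2,1)}

def AA (n : ℕ) : Finset (Fin n → ZMod 3) :=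
  ((univ.powersetCard 2).image (chiv n)) ∪
  ((Pset ×ˢ univ).image (fun q => omv n q.1.1 q.1.2 q.2)) ∪
  {(fun _ => 0), (fun _ => 2)}

lemma pset_cases : ∀ p : ZMod 3 × ZMod 3, p ∈ Pset → p = (1,0) ∨ p = (2,0) ∨ p = (2,1) := by decide

lemma pset_no_cross : ∀ a b a' b' : ZMod 3, (a,b) ∈ Pset → (a',b') ∈ Pset →
    b = a' → a = b' → False := by decide

lemma pset_a_ne_zero : ∀ a b : ZMod 3, (a,b) ∈ Pset → a = 0 → False := by decide

lemma pset_b_ne_two : ∀ a b : ZMod 3, (a,b) ∈ Pset → b = 2 → False := by decide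

section
variable {n : ℕ}

lemma chiv_inj : Function.Injective (chiv n) := by
  intro s s' h
  ext t
  have := congrFun h t
  simp only [chiv] at this
  by_cases h1 : t ∈ s <;> by_cases h2 : t ∈ s' <;> simp_all

-- an element different from i, assuming 2 ≤ n
def other (h2 : 2 ≤ n) (i : Fin n) : Fin n :=
  if i = ⟨0, by omega⟩ then ⟨1, by omega⟩ else ⟨0, by omega⟩

lemma other_ne (h2 : 2 ≤ n) (i : Fin n) : other h2 i ≠ i := by
  unfold other
  split_ifs with h
  · rw [h]; intro e; exact absurd (Fin.mk.inj_iff.mp e) (by omega)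
  · intro e; exact h e.symm

lemma omv_injOn (h2 : 2 ≤ n) : Set.InjOn (fun q : (ZMod 3 × ZMod 3) × Fin n => omv n q.1.1 q.1.2 q.2)
    (↑(Pset ×ˢ (univ : Finset (Fin n))) : Set ((ZMod 3 × ZMod 3) × Fin n)) := by
  rintro ⟨⟨a, b⟩, i⟩ hq ⟨⟨a', b'⟩, i'⟩ hq' heq
  simp only [Finset.coe_product, Set.mem_prod, Finset.mem_coe, Finset.mem_univ, and_true] at hq hq'
  by_cases hii : i = i'
  · subst hii
    have hb : b = b' := by
      have := congrFun heq i; simpa [omv] using this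
    have ha : a = a' := by
      have := congrFun heq (other h2 i)
      simpa [omv, if_neg (other_ne h2 i)] using this
    simp [ha, hb]
  · exfalso
    have h1 : b = a' := by
      have := congrFun heq i
      simpa [omv, if_neg (fun e : (i : Fin n) = i' => hii e)] using this
    have h2' : a = b' := by
      have := congrFun heq i'
      simpa [omv, if_neg (fun e : (i' : Fin n) = i => hii e.symm)] using this
    exact pset_no_cross a b a' b' hq hq' h1 h2'

lemma chiv_ne_omv (hn : n % 3 = 2) (s : Finset (Fin n)) (hs : s.card = 2)
    (a b : ZMod 3) (hab : (a, b) ∈ Pset) (i : Fin n) : chiv n s ≠ omv n a b i := by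
  obtain ⟨i1, i2, h12, rfl⟩ := Finset.card_eq_two.mp hs
  intro heq
  rcases pset_cases _ hab with h | h | h <;> obtain ⟨rfl, rfl⟩ := Prod.mk.injEq .. |>.mp h
  · -- (1,0) : pattern 1 - e_i
    -- ∀ t ≠ i, t ∈ {i1, i2}
    have hsub : ∀ t : Fin n, t ≠ i → t ∈ ({i1, i2} : Finset (Fin n)) := by
      intro t ht
      have := congrFun heq t
      simp only [chiv, omv, if_neg ht] at this
      by_cases hm : t ∈ ({i1, i2} : Finset (Fin n))
      · exact hm
      · rw [if_neg hm] at this; exact absurd this (by decide)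
    have hsubset : univ \ {i} ⊆ ({i1, i2} : Finset (Fin n)) := by
      intro t ht
      rw [Finset.mem_sdiff, Finset.mem_singleton] at ht
      exact hsub t ht.2
    have hcard : n - 1 ≤ 2 := by
      have := Finset.card_le_card hsubset
      rwa [Finset.card_sdiff_of_subset (by simp), Finset.card_singleton, Finset.card_univ,
        Fintype.card_fin, hs] at this
    have hn2 : n = 2 := by omega
    have huniv : ({i1, i2} : Finset (Fin n)) = univ := by
      apply Finset.eq_univ_of_card
      rw [hs, Fintype.card_fin, hn2]
    have hi : i ∈ ({i1, i2} : Finset (Fin n)) := huniv ▸ Finset.mem_univ i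
    have := congrFun heq i
    simp only [chiv, omv, if_pos hi, if_pos rfl] at this
    exact absurd this (by decide)
  · -- (2,0) : a = 2
    have ht : ∃ t, t ∈ ({i1, i2} : Finset (Fin n)) ∧ t ≠ i := by
      by_cases h1 : i1 = i
      · exact ⟨i2, by simp, fun e => h12 (h1.trans e.symm)⟩
      · exact ⟨i1, by simp, h1⟩
    obtain ⟨t, htm, hti⟩ := ht
    have := congrFun heq t
    simp only [chiv, omv, if_pos htm, if_neg hti] at this
    exact absurd this (by decide)
  · -- (2,1) : a = 2
    have ht : ∃ t, t ∈ ({i1, i2} : Finset (Fin n)) ∧ t ≠ i := by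
      by_cases h1 : i1 = i
      · exact ⟨i2, by simp, fun e => h12 (h1.trans e.symm)⟩
      · exact ⟨i1, by simp, h1⟩
    obtain ⟨t, htm, hti⟩ := ht
    have := congrFun heq t
    simp only [chiv, omv, if_pos htm, if_neg hti] at this
    exact absurd this (by decide)

lemma chiv_ne_const (s : Finset (Fin n)) (hs : s.card = 2) (c : ZMod 3) (hc : c ≠ 1) :
    chiv n s ≠ (fun _ => c) := by
  intro heq
  obtain ⟨t, ht⟩ := Finset.card_pos.mp (by rw [hs]; norm_num)
  have := congrFun heq t
  simp only [chiv, if_pos ht] at this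
  exact hc this.symm

lemma omv_ne_zero (h2 : 2 ≤ n) (a b : ZMod 3) (hab : (a, b) ∈ Pset) (i : Fin n) :
    omv n a b i ≠ (fun _ => 0) := by
  intro heq
  have := congrFun heq (other h2 i)
  simp only [omv, if_neg (other_ne h2 i)] at this
  exact pset_a_ne_zero a b hab this

lemma omv_ne_two (a b : ZMod 3) (hab : (a, b) ∈ Pset) (i : Fin n) :
    omv n a b i ≠ (fun _ => 2) := by
  intro heq
  have := congrFun heq i
  simp only [omv, if_pos rfl] at this
  exact pset_b_ne_two a b hab this

lemma card_AA (hn : n % 3 = 2) : (AA n).card = n.choose 2 + 3 * n + 2 := by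
  classical
  have h2 : 2 ≤ n := by omega
  have hc1 : ((univ.powersetCard 2).image (chiv n)).card = n.choose 2 := by
    rw [Finset.card_image_of_injective _ chiv_inj, Finset.card_powersetCard,
      Finset.card_univ, Fintype.card_fin]
  have hc2 : (((Pset ×ˢ univ) : Finset ((ZMod 3 × ZMod 3) × Fin n)).image
      (fun q => omv n q.1.1 q.1.2 q.2)).card = 3 * n := by
    rw [Finset.card_image_of_injOn (omv_injOn h2), Finset.card_product, Finset.card_univ,
      Fintype.card_fin]
    rw [show Pset.card = 3 from by rfl]
  have hc3 : ({(fun _ => 0), (fun _ => 2)} : Finset (Fin n → ZMod 3)).card = 2 := by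
    rw [Finset.card_insert_of_notMem, Finset.card_singleton]
    simp only [Finset.mem_singleton]
    intro heq
    have := congrFun heq ⟨0, by omega⟩
    exact absurd this (by decide)
  have hd12 : Disjoint ((univ.powersetCard 2).image (chiv n))
      (((Pset ×ˢ univ) : Finset ((ZMod 3 × ZMod 3) × Fin n)).image
        (fun q => omv n q.1.1 q.1.2 q.2)) := by
    rw [Finset.disjoint_left]
    rintro x hx1 hx2
    obtain ⟨s, hs, rfl⟩ := Finset.mem_image.mp hx1
    obtain ⟨⟨⟨a, b⟩, i⟩, hq, heq⟩ := Finset.mem_image.mp hx2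
    rw [Finset.mem_powersetCard_univ] at hs
    have hab : (a, b) ∈ Pset := (Finset.mem_product.mp hq).1
    exact chiv_ne_omv hn s hs a b hab i heq.symm
  have hd3 : Disjoint (((univ.powersetCard 2).image (chiv n)) ∪
      (((Pset ×ˢ univ) : Finset ((ZMod 3 × ZMod 3) × Fin n)).image
        (fun q => omv n q.1.1 q.1.2 q.2)))
      ({(fun _ => 0), (fun _ => 2)} : Finset (Fin n → ZMod 3)) := by
    rw [Finset.disjoint_left]
    rintro x hx1 hx2
    simp only [Finset.mem_insert, Finset.mem_singleton] at hx2
    rw [Finset.mem_union] at hx1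
    rcases hx1 with hx1 | hx1
    · obtain ⟨s, hs, rfl⟩ := Finset.mem_image.mp hx1
      rw [Finset.mem_powersetCard_univ] at hs
      rcases hx2 with heq | heq
      · exact chiv_ne_const s hs 0 (by decide) heq
      · exact chiv_ne_const s hs 2 (by decide) heq
    · obtain ⟨⟨⟨a, b⟩, i⟩, hq, rfl⟩ := Finset.mem_image.mp hx1
      have hab : (a, b) ∈ Pset := (Finset.mem_product.mp hq).1
      rcases hx2 with heq | heq
      · exact omv_ne_zero h2 a b hab i heq
      · exact omv_ne_two a b hab i heq
  rw [AA, Finset.card_union_of_disjoint hd3, Finset.card_union_of_disjoint hd12, hc1, hc2, hc3]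

lemma forms (hn : n % 3 = 2) (x : Fin n → ZMod 3) (hx : x ∈ AA n) :
    (∃ i j : Fin n, i ≠ j ∧ x = u4 n 0 1 i 1 j) ∨
    (∃ (a b : ZMod 3) (i : Fin n), (a, b) ∈ Pset ∧ x = u4 n a (b - a) i 0 i) ∨
    (x = u4 n 0 0 ⟨0, by omega⟩ 0 ⟨0, by omega⟩) ∨
    (x = u4 n 2 0 ⟨0, by omega⟩ 0 ⟨0, by omega⟩) := by
  classical
  rw [AA, Finset.mem_union, Finset.mem_union] at hx
  rcases hx with (hx | hx) | hx
  · left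
    obtain ⟨s, hs, rfl⟩ := Finset.mem_image.mp hx
    rw [Finset.mem_powersetCard_univ] at hs
    obtain ⟨i, j, hij, rfl⟩ := Finset.card_eq_two.mp hs
    refine ⟨i, j, hij, ?_⟩
    funext t
    simp only [chiv, u4, Finset.mem_insert, Finset.mem_singleton]
    by_cases hti : t = i <;> by_cases htj : t = j
    · exact absurd (hti.symm.trans htj) hij
    · simp [hti, htj, hij, Ne.symm hij]
    · simp [hti, htj, hij, Ne.symm hij]
    · simp [hti, htj, hij, Ne.symm hij]
  · right; left
    obtain ⟨⟨⟨a, b⟩, i⟩, hq, rfl⟩ := Finset.mem_image.mp hx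
    have hab : (a, b) ∈ Pset := (Finset.mem_product.mp hq).1
    refine ⟨a, b, i, hab, ?_⟩
    funext t
    simp only [omv, u4]
    by_cases hti : t = i
    · simp [hti]
      try ring
    · simp [hti]
  · simp only [Finset.mem_insert, Finset.mem_singleton] at hx
    rcases hx with rfl | rfl
    · right; right; left
      funext t; simp [u4]
    · right; right; right
      funext t
      simp [u4]


lemma natCast_eq_two (hn : n % 3 = 2) : ((n : ℕ) : ZMod 3) = 2 := by
  obtain ⟨k, hk⟩ : ∃ k, n = 3 * k + 2 := ⟨n / 3, by omega⟩
  subst hk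
  push_cast
  rw [show ((3 : ZMod 3)) = 0 from by decide]
  ring

set_option maxHeartbeats 1000000 in
lemma cond_AA (hn : n % 3 = 2) : ∀ x ∈ AA n, ∀ y ∈ AA n, x ≠ y →
    (∑ i, (x i - y i) * (x i - y i)) ≠ 0 := by
  have hn3 := natCast_eq_two hn
  intro x hx y hy hxy
  rcases forms hn x hx with ⟨i, j, hij, rfl⟩ | ⟨a, b, i, hab, rfl⟩ | rfl | rfl <;>
    rcases forms hn y hy with ⟨k, l, hkl, rfl⟩ | ⟨a', b', k, hab', rfl⟩ | rfl | rfl <;>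
    [skip; skip; skip; skip; skip; skip; skip; skip; skip; skip; skip; skip; skip; skip;
      skip; skip]
  all_goals try (rcases pset_cases _ hab with h | h | h <;>
    obtain ⟨rfl, rfl⟩ := Prod.mk.injEq .. |>.mp h)
  all_goals try (rcases pset_cases _ hab' with h' | h' | h' <;>
    obtain ⟨rfl, rfl⟩ := Prod.mk.injEq .. |>.mp h')
  all_goals rw [diff_formula]
  all_goals repeat rw [ip_u4 hn3]
  all_goals try simp only [hij, Ne.symm hij, if_false]
  all_goals try simp only [hkl, Ne.symm hkl, if_false]
  all_goals simp only [eq_self_iff_true, if_true]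
  all_goals first
    | decide
    | (exact absurd rfl hxy)
    | (split_ifs <;>
        first
          | decide
          | (exact absurd rfl hxy)
          | (exfalso; subst_vars; simp_all; done)
          | (exfalso; subst_vars; apply hxy; exact u4_swap _ _ _ _ _ _))
end

end SN3Proof

open SN3Proof in
/-- for `n ≡ 2 (mod 3)`, the maximum size of a subset of `F_3^n`
with no self-orthogonal difference between distinct elements is `C(n+3,2) - 1`. -/
theorem S_n_3_exact (n : ℕ) (hn : n % 3 = 2) :
    IsGreatest {m : ℕ | ∃ A : Finset (Fin n → ZMod 3), A.card = m ∧
        ∀ x ∈ A, ∀ y ∈ A, x ≠ y → ∑ i, (x i - y i) * (x i - y i) ≠ 0}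
      (Nat.choose (n + 3) 2 - 1) := by
  have hch : (n+3).choose 2 = n.choose 2 + 3 * n + 3 := by
    have h1 : (n+3).choose 2 = (n+2).choose 1 + (n+2).choose 2 := Nat.choose_succ_succ (n+2) 1
    have h2 : (n+2).choose 2 = (n+1).choose 1 + (n+1).choose 2 := Nat.choose_succ_succ (n+1) 1
    have h3 : (n+1).choose 2 = n.choose 1 + n.choose 2 := Nat.choose_succ_succ n 1
    rw [h1, h2, h3, Nat.choose_one_right, Nat.choose_one_right, Nat.choose_one_right]
    ring
  constructor
  · exact ⟨AA n, by rw [card_AA hn]; omega, cond_AA hn⟩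
  · rintro m ⟨A, hcard, hA⟩
    have := upper_bound n A hA
    omega
end

section
/- Let q be an odd prime and let A ⊆ {a,b}^n (a two-letter alphabet) be such that no two distinct elements of A have Hamming distance divisible by q. Then |A| ≤ C(n, q−1) + C(n, q−2) + ⋯ + C(n, 1) + C(n, 0). -/
open Finset

set_option linter.unusedSectionVars false

section Aux
variable {F : Type*} [Field F] {ι X : Type*} [Fintype ι] [Fintype X] [DecidableEq ι]

def mon (e : X → ι → F) (S : Finset ι) : X → F := fun x => ∏ i ∈ S, e x i

def Wdeg (e : X → ι → F) (k : ℕ) : Submodule F (X → F) :=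
  Submodule.span F (mon e '' {S | S.card ≤ k})

lemma Wdeg_mono (e : X → ι → F) {k l : ℕ} (h : k ≤ l) : Wdeg e k ≤ Wdeg e l := by
  apply Submodule.span_mono
  rintro f ⟨S, hS, rfl⟩
  exact ⟨S, le_trans hS h, rfl⟩

lemma one_mem_Wdeg (e : X → ι → F) (k : ℕ) : (1 : X → F) ∈ Wdeg e k := by
  apply Submodule.subset_span
  exact ⟨∅, by simp, by funext x; simp [mon]⟩

lemma mul_coord_mem (e : X → ι → F) (he : ∀ x i, e x i * e x i = 1) (i : ι) {k : ℕ}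
    {f : X → F} (hf : f ∈ Wdeg e k) : (fun x => e x i * f x) ∈ Wdeg e (k + 1) := by
  have hmap : Submodule.map (LinearMap.mulLeft F (fun x : X => e x i)) (Wdeg e k)
      ≤ Wdeg e (k + 1) := by
    rw [Wdeg, Submodule.map_span]
    apply Submodule.span_le.2
    rintro _ ⟨_, ⟨S, hS, rfl⟩, rfl⟩
    by_cases hi : i ∈ S
    · apply Submodule.subset_span
      refine ⟨S.erase i, le_trans (le_trans (card_erase_le) hS) (Nat.le_succ k), ?_⟩
      funext x
      simp only [mon, LinearMap.mulLeft_apply, Pi.mul_apply]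
      rw [← Finset.mul_prod_erase S _ hi, ← mul_assoc, he, one_mul]
    · apply Submodule.subset_span
      refine ⟨insert i S, by simpa [Finset.card_insert_of_notMem hi] using hS, ?_⟩
      funext x
      simp only [mon, LinearMap.mulLeft_apply, Pi.mul_apply]
      rw [Finset.prod_insert hi]
  exact hmap ⟨f, hf, rfl⟩

lemma mul_lin_mem (e : X → ι → F) (he : ∀ x i, e x i * e x i = 1) (c : ι → F) {k : ℕ}
    {f : X → F} (hf : f ∈ Wdeg e k) :
    (fun x => (∑ i, c i * e x i) * f x) ∈ Wdeg e (k + 1) := by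
  have : (fun x => (∑ i, c i * e x i) * f x)
      = ∑ i : ι, c i • (fun x => e x i * f x) := by
    funext x
    simp only [Finset.sum_apply, Pi.smul_apply, smul_eq_mul, Finset.sum_mul]
    exact Finset.sum_congr rfl fun i _ => by ring
  rw [this]
  exact Submodule.sum_mem _ fun i _ => Submodule.smul_mem _ _ (mul_coord_mem e he i hf)

lemma pow_lin_mem (e : X → ι → F) (he : ∀ x i, e x i * e x i = 1) (u : F) (c : ι → F)
    (j : ℕ) : (fun x => (u + ∑ i, c i * e x i) ^ j) ∈ Wdeg e j := by
  induction j with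
  | zero => simpa [Pi.one_def] using one_mem_Wdeg e 0
  | succ j ih =>
    have : (fun x => (u + ∑ i, c i * e x i) ^ (j + 1))
        = u • (fun x => (u + ∑ i, c i * e x i) ^ j)
          + (fun x => (∑ i, c i * e x i) * ((u + ∑ i, c i * e x i) ^ j)) := by
      funext x
      simp only [Pi.add_apply, Pi.smul_apply, smul_eq_mul]
      ring
    rw [this]
    exact Submodule.add_mem _
      (Submodule.smul_mem _ _ (Wdeg_mono e (Nat.le_succ j) ih))
      (mul_lin_mem e he c ih)

end Aux

/-- Delsarte bound, prime case: a binary code of length `n` with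
no Hamming distance divisible by the odd prime `q` has size at most
`C(n,q-1) + ⋯ + C(n,1) + C(n,0)`. -/
theorem binary_code_upper_bound (q n : ℕ) (hq : q.Prime) (hodd : Odd q)
    (α : Type*) [DecidableEq α] (a b : α) (hab : a ≠ b)
    (A : Finset (Fin n → α))
    (halph : ∀ x ∈ A, ∀ i, x i = a ∨ x i = b)
    (hd : ∀ x ∈ A, ∀ y ∈ A, x ≠ y →
      ¬ (q ∣ (Finset.univ.filter (fun i => x i ≠ y i)).card)) :
    A.card ≤ ∑ i ∈ Finset.range q, Nat.choose n i := by
  haveI : Fact q.Prime := ⟨hq⟩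
  classical
  let χ : α → ZMod q := fun t => if t = a then 1 else -1
  let e : ↥A → Fin n → ZMod q := fun x i => χ (x.1 i)
  have he : ∀ (x : ↥A) (i : Fin n), e x i * e x i = 1 := by
    intro x i
    by_cases h : x.1 i = a <;> simp [e, χ, h]
  -- the delta functions lie in the degree-(q-1) space
  have hdelta : ∀ y : ↥A, Pi.single y (1 : ZMod q) ∈ Wdeg e (q - 1) := by
    intro y
    have key : Pi.single y (1 : ZMod q)
        = (1 : ↥A → ZMod q)
          - (fun x => ((2 * n : ZMod q) + ∑ i, (-(2 * e y i)) * e x i) ^ (q - 1)) := by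
      funext x
      have hterm : ∀ i ∈ (univ : Finset (Fin n)),
          (2 : ZMod q) + (-(2 * e y i)) * e x i
            = if x.1 i ≠ y.1 i then (4 : ZMod q) else 0 := by
        intro i _
        have h1 := he x i
        have h2 := he y i
        have hsq : (2 : ZMod q) + (-(2 * e y i)) * e x i
            = e x i * e x i - 2 * (e x i * e y i) + e y i * e y i - (e x i * e x i - 1) - (e y i * e y i - 1) := by
          ring
        by_cases h : x.1 i = y.1 i
        · have hee : e x i = e y i := by simp [e, h]
          simp only [h, ne_eq, not_true_eq_false, if_false]
          rw [hsq, hee, h2]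
          ring
        · simp only [ne_eq, h, not_false_eq_true, if_true]
          rcases halph x.1 x.2 i with hx | hx <;> rcases halph y.1 y.2 i with hy | hy
          · exact absurd (hx.trans hy.symm) h
          · have ex : e x i = 1 := by simp [e, χ, hx]
            have ey : e y i = -1 := by simp [e, χ, hy, Ne.symm hab]
            rw [ex, ey]; norm_num
          · have ex : e x i = -1 := by simp [e, χ, hx, Ne.symm hab]
            have ey : e y i = 1 := by simp [e, χ, hy]
            rw [ex, ey]; norm_num
          · exact absurd (hx.trans hy.symm) h
      have hsum : (2 * n : ZMod q) + ∑ i, (-(2 * e y i)) * e x i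
          = ((Finset.univ.filter (fun i => x.1 i ≠ y.1 i)).card : ZMod q) * 4 := by
        have h1 : (2 * n : ZMod q) + ∑ i, (-(2 * e y i)) * e x i
            = ∑ i : Fin n, ((2 : ZMod q) + (-(2 * e y i)) * e x i) := by
          rw [Finset.sum_add_distrib, Finset.sum_const, Finset.card_univ, Fintype.card_fin,
            nsmul_eq_mul]
          ring
        rw [h1, Finset.sum_congr rfl hterm, ← Finset.sum_filter, Finset.sum_const, nsmul_eq_mul]
      simp only [Pi.sub_apply, Pi.one_apply]
      rw [hsum]
      by_cases hxy : x = y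
      · subst hxy
        rw [Pi.single_eq_same]
        have hemp : (Finset.univ.filter (fun i => x.1 i ≠ x.1 i)) = (∅ : Finset (Fin n)) := by
          simp
        rw [hemp]
        have hq1 : q - 1 ≠ 0 := by have := hq.two_le; omega
        simp [zero_pow hq1]
      · rw [Pi.single_eq_of_ne hxy]
        have hqd : ¬ (q ∣ (Finset.univ.filter (fun i => x.1 i ≠ y.1 i)).card) :=
          hd x.1 x.2 y.1 y.2 (fun h => hxy (Subtype.ext h))
        have hne : ((Finset.univ.filter (fun i => x.1 i ≠ y.1 i)).card : ZMod q) * 4 ≠ 0 := by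
          intro h0
          have : (((Finset.univ.filter (fun i => x.1 i ≠ y.1 i)).card * 4 : ℕ) : ZMod q) = 0 := by
            push_cast
            exact h0
          rw [ZMod.natCast_eq_zero_iff] at this
          rcases (Nat.Prime.dvd_mul hq).1 this with h | h
          · exact hqd h
          · have h2 : q ∣ 2 ^ 2 := by norm_num at h ⊢; exact h
            have h3 : q = 2 :=
              (Nat.prime_dvd_prime_iff_eq hq Nat.prime_two).1 (hq.dvd_of_dvd_pow h2)
            rw [h3] at hodd
            rw [Nat.odd_iff] at hodd
            norm_num at hodd
        rw [ZMod.pow_card_sub_one_eq_one hne]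
        ring
    rw [key]
    exact Submodule.sub_mem _ (one_mem_Wdeg e _) (pow_lin_mem e he _ _ _)
  -- whole space is spanned
  have htop : Wdeg e (q - 1) = ⊤ := by
    rw [eq_top_iff, ← (Pi.basisFun (ZMod q) ↥A).span_eq]
    apply Submodule.span_le.2
    rintro _ ⟨y, rfl⟩
    simpa using hdelta y
  -- counting
  let I : Finset (Finset (Fin n)) := univ.filter (fun S => S.card ≤ q - 1)
  let T : Finset (↥A → ZMod q) := I.image (mon e)
  have hWT : Wdeg e (q - 1) = Submodule.span (ZMod q) (T : Set (↥A → ZMod q)) := by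
    rw [Wdeg, Finset.coe_image]
    congr 1
    ext S
    simp [I]
  have h1 : A.card = Module.finrank (ZMod q) (↥A → ZMod q) := by
    rw [Module.finrank_pi, Fintype.card_coe]
  have h2 : Module.finrank (ZMod q) (↥A → ZMod q) ≤ T.card := by
    have h := finrank_span_finset_le_card (R := ZMod q) T
    rw [Set.finrank, ← hWT, htop, finrank_top] at h
    exact h
  have h3 : T.card ≤ I.card := Finset.card_image_le
  have h4 : I.card = ∑ i ∈ Finset.range q, Nat.choose n i := by
    have hI : I = (Finset.range q).biUnion
        (fun i => (Finset.univ : Finset (Fin n)).powersetCard i) := by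
      ext S
      simp only [I, mem_filter, mem_univ, true_and, mem_biUnion, mem_range,
        Finset.mem_powersetCard, Finset.subset_univ, true_and]
      constructor
      · intro h
        exact ⟨S.card, by have := hq.pos; omega, rfl⟩
      · rintro ⟨i, hi, rfl⟩
        omega
    rw [hI, Finset.card_biUnion]
    · apply Finset.sum_congr rfl
      intro i _
      rw [Finset.card_powersetCard, Finset.card_univ, Fintype.card_fin]
    · intro i _ j _ hij
      apply Finset.disjoint_left.2
      intro S h1 h2
      rw [Finset.mem_powersetCard] at h1 h2
      exact hij (h1.2 ▸ h2.2.symm ▸ rfl)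
  omega
end

section
/- Let q be an odd prime with q dividing n, and let A ⊆ {a,b}^n be such that no two distinct elements of A have Hamming distance divisible by q. Then |A| ≤ C(n, q−1) + C(n, q−3) + ⋯ + C(n, 2) + C(n, 0). -/
open Finset

section Aux

variable {n : ℕ} {R : Type*} [CommRing R] {β : Type*} [Fintype β] [DecidableEq (β → R)]

/-- monomial function -/
private def mono (w : β → Fin n → R) (S : Finset (Fin n)) : β → R :=
  fun y => ∏ i ∈ S, w y i

private lemma pow_mem_span (w : β → Fin n → R) (hw : ∀ y i, w y i = 1 ∨ w y i = -1)
    (u : Fin n → R) (m : ℕ) :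
    (fun y : β => (∑ i, u i * w y i) ^ m) ∈
      Submodule.span R ((((univ : Finset (Finset (Fin n))).filter
        (fun S => S.card ≤ m ∧ S.card % 2 = m % 2)).image (mono w) : Finset (β → R)) :
          Set (β → R)) := by
  have hsq : ∀ (y : β) (i : Fin n), w y i * w y i = 1 := by
    intro y i; rcases hw y i with h | h <;> rw [h] <;> ring
  induction m with
  | zero =>
    apply Submodule.subset_span
    refine Finset.mem_coe.2 (Finset.mem_image.2 ⟨∅, ?_, ?_⟩)
    · simp
    · funext y; simp [mono]
  | succ m ih =>
    set P : β → R := fun y => ∑ i, u i * w y i with hP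
    have key : (fun y : β => (∑ i, u i * w y i) ^ (m + 1)) =
        (LinearMap.mulLeft R P) (fun y : β => (∑ i, u i * w y i) ^ m) := by
      funext y
      simp only [LinearMap.mulLeft_apply, Pi.mul_apply, hP, pow_succ]
      ring
    rw [key]
    have hsub : Submodule.span R ((((univ : Finset (Finset (Fin n))).filter
          (fun S => S.card ≤ m ∧ S.card % 2 = m % 2)).image (mono w) : Finset (β → R)) :
            Set (β → R)) ≤
        Submodule.comap (LinearMap.mulLeft R P)
          (Submodule.span R ((((univ : Finset (Finset (Fin n))).filter
            (fun S => S.card ≤ m + 1 ∧ S.card % 2 = (m + 1) % 2)).image (mono w) :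
              Finset (β → R)) : Set (β → R))) := by
      rw [Submodule.span_le]
      intro g hg
      simp only [coe_image, Set.mem_image, mem_coe, mem_filter] at hg
      obtain ⟨S, ⟨-, hSc, hSp⟩, rfl⟩ := hg
      simp only [SetLike.mem_coe, Submodule.mem_comap]
      have hrw : (LinearMap.mulLeft R P) (mono w S) =
          ∑ i : Fin n, u i • mono w (if i ∈ S then S.erase i else insert i S) := by
        funext y
        simp only [LinearMap.mulLeft_apply, Pi.mul_apply, hP, mono, Finset.sum_apply,
          Pi.smul_apply, smul_eq_mul, Finset.sum_mul]
        refine Finset.sum_congr rfl ?_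
        intro i _
        by_cases hi : i ∈ S
        · simp only [hi, if_true]
          rw [mul_assoc, ← Finset.mul_prod_erase S _ hi, ← mul_assoc,
            show u i * w y i * (w y i * ∏ j ∈ S.erase i, w y j)
              = u i * (w y i * w y i) * ∏ j ∈ S.erase i, w y j by ring, hsq, mul_one]
        · simp only [hi, if_false, Finset.prod_insert hi]
          ring
      rw [hrw]
      refine Submodule.sum_mem _ ?_
      intro i _
      refine Submodule.smul_mem _ _ (Submodule.subset_span
        (Finset.mem_coe.2 (Finset.mem_image.2
          ⟨if i ∈ S then S.erase i else insert i S, Finset.mem_filter.2 ⟨mem_univ _, ?_⟩, rfl⟩)))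
      by_cases hi : i ∈ S
      · simp only [hi, if_true, Finset.card_erase_of_mem hi]
        have h1 : 1 ≤ S.card := Finset.card_pos.2 ⟨i, hi⟩
        omega
      · simp only [hi, if_false, Finset.card_insert_of_notMem hi]
        omega
    exact hsub ih

private lemma card_T (q n : ℕ) :
    ((univ : Finset (Finset (Fin n))).filter (fun S => S.card < q ∧ Even S.card)).card
      = ∑ i ∈ (Finset.range q).filter (fun i => Even i), Nat.choose n i := by
  have hmap : ∀ S ∈ (univ : Finset (Finset (Fin n))).filter
      (fun S => S.card < q ∧ Even S.card),
      S.card ∈ (Finset.range q).filter (fun i => Even i) := by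
    intro S hS
    simp only [mem_filter, mem_univ, true_and] at hS
    simp only [mem_filter, Finset.mem_range]
    exact ⟨hS.1, hS.2⟩
  rw [Finset.card_eq_sum_card_fiberwise hmap]
  refine Finset.sum_congr rfl ?_
  intro i hi
  simp only [mem_filter, Finset.mem_range] at hi
  have heq : ((univ : Finset (Finset (Fin n))).filter
      (fun S => S.card < q ∧ Even S.card)).filter (fun S => S.card = i)
      = Finset.powersetCard i univ := by
    ext S
    simp only [mem_filter, mem_univ, true_and, Finset.mem_powersetCard_univ]
    constructor
    · rintro ⟨-, h⟩; exact h
    · rintro rfl; exact ⟨⟨hi.1, hi.2⟩, rfl⟩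
  rw [heq, Finset.card_powersetCard, Finset.card_univ, Fintype.card_fin]

end Aux

/-- if moreover `q ∣ n`, the bound improves to the sum of
`C(n,i)` over even `i ≤ q-1`. -/
theorem binary_code_upper_bound_q_dvd_n (q n : ℕ) (hq : q.Prime) (hodd : Odd q)
    (hqn : q ∣ n)
    (α : Type*) [DecidableEq α] (a b : α) (hab : a ≠ b)
    (A : Finset (Fin n → α))
    (halph : ∀ x ∈ A, ∀ i, x i = a ∨ x i = b)
    (hd : ∀ x ∈ A, ∀ y ∈ A, x ≠ y →
      ¬ (q ∣ (Finset.univ.filter (fun i => x i ≠ y i)).card)) :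
    A.card ≤ ∑ i ∈ (Finset.range q).filter (fun i => Even i), Nat.choose n i := by
  classical
  haveI : Fact q.Prime := ⟨hq⟩
  have hq2 : q ≠ 2 := by rintro rfl; exact (Nat.not_odd_iff_even.mpr even_two) hodd
  have hq3 : 3 ≤ q := by
    have := hq.two_le; omega
  -- the ±1 vectors
  let v : (Fin n → α) → Fin n → ZMod q := fun x i => if x i = a then 1 else -1
  have hv : ∀ x i, v x i = 1 ∨ v x i = -1 := by
    intro x i
    by_cases h : x i = a <;> simp [v, h]
  let w : ↥A → Fin n → ZMod q := fun y => v ↑y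
  have hw : ∀ (y : ↥A) i, w y i = 1 ∨ w y i = -1 := fun y i => hv ↑y i
  -- inner products
  have hn0 : (n : ZMod q) = 0 := (ZMod.natCast_eq_zero_iff n q).2 hqn
  have hdiag : ∀ x : ↥A, (∑ i, v ↑x i * v ↑x i) = 0 := by
    intro x
    have : ∀ i, v (↑x : Fin n → α) i * v ↑x i = 1 := by
      intro i; rcases hv ↑x i with h | h <;> rw [h] <;> ring
    rw [Finset.sum_congr rfl (fun i _ => this i)]
    simp [hn0]
  have hoff : ∀ x y : ↥A, (x : Fin n → α) ≠ ↑y → (∑ i, v ↑x i * v ↑y i) ≠ 0 := by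
    intro x y hxy
    have hptwise : ∀ i, v (↑x : Fin n → α) i * v ↑y i
        = if (↑x : Fin n → α) i = (↑y : Fin n → α) i then 1 else -1 := by
      intro i
      rcases halph ↑x x.2 i with hx | hx <;> rcases halph ↑y y.2 i with hy | hy <;>
        simp [v, hx, hy, hab, Ne.symm hab] <;> ring
    have hsplit : ∀ i, (if (↑x : Fin n → α) i = (↑y : Fin n → α) i then (1 : ZMod q) else -1)
        = 1 - 2 * (if (↑x : Fin n → α) i ≠ (↑y : Fin n → α) i then 1 else 0) := by
      intro i; by_cases h : (↑x : Fin n → α) i = (↑y : Fin n → α) i <;> simp [h] <;> ring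
    have hsum : (∑ i, v ↑x i * v ↑y i)
        = (n : ZMod q) - 2 * ((Finset.univ.filter
            (fun i => (↑x : Fin n → α) i ≠ (↑y : Fin n → α) i)).card : ZMod q) := by
      rw [Finset.sum_congr rfl (fun i _ => (hptwise i).trans (hsplit i)),
        Finset.sum_sub_distrib, ← Finset.mul_sum, Finset.sum_boole]
      simp
    rw [hsum, hn0, zero_sub, neg_ne_zero]
    have h2 : (2 : ZMod q) ≠ 0 := by
      have : ((2 : ℕ) : ZMod q) ≠ 0 := by
        rw [Ne, ZMod.natCast_eq_zero_iff]
        intro hdvd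
        exact hq2 ((Nat.prime_dvd_prime_iff_eq hq Nat.prime_two).mp hdvd)
      simpa using this
    have hdne : ((Finset.univ.filter
        (fun i => (↑x : Fin n → α) i ≠ (↑y : Fin n → α) i)).card : ZMod q) ≠ 0 := by
      rw [Ne, ZMod.natCast_eq_zero_iff]
      exact hd ↑x x.2 ↑y y.2 hxy
    exact mul_ne_zero h2 hdne
  -- the functions
  let Fn : ↥A → ↥A → ZMod q := fun x y => (∑ i, v ↑x i * v ↑y i) ^ (q - 1) - 1
  have hFval : ∀ x y : ↥A, Fn x y = if x = y then -1 else 0 := by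
    intro x y
    by_cases hxy : x = y
    · subst hxy
      simp only [Fn, hdiag x, if_true]
      rw [zero_pow (by omega : q - 1 ≠ 0)]
      ring
    · have hne : (x : Fin n → α) ≠ ↑y := fun h => hxy (Subtype.ext h)
      simp only [Fn, hxy, if_false]
      rw [ZMod.pow_card_sub_one_eq_one (hoff x y hne), sub_self]
  -- the spanning monomials
  set T : Finset (Finset (Fin n)) := (univ : Finset (Finset (Fin n))).filter
    (fun S => S.card < q ∧ Even S.card) with hT
  set p : Submodule (ZMod q) (↥A → ZMod q) :=
    Submodule.span (ZMod q) ((T.image (mono w) : Finset (↥A → ZMod q)) : Set (↥A → ZMod q))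
    with hp
  have hmem : ∀ x : ↥A, Fn x ∈ p := by
    intro x
    have h1 : (fun y : ↥A => (∑ i, v ↑x i * w y i) ^ (q - 1)) ∈ p := by
      have := pow_mem_span w hw (v ↑x) (q - 1)
      refine Submodule.span_mono (Finset.coe_subset.2 (Finset.image_subset_image ?_)) this
      intro S hS
      simp only [mem_filter] at hS
      rw [hT, mem_filter]
      have hc1 := hS.2.1
      have hc2 := hS.2.2
      have hq1 : (q - 1) % 2 = 0 := by
        obtain ⟨k, hk⟩ := hodd; omega
      exact ⟨mem_univ _, by omega, by rw [Nat.even_iff]; omega⟩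
    have h2 : (fun _ : ↥A => (1 : ZMod q)) ∈ p := by
      apply Submodule.subset_span
      simp only [coe_image, Set.mem_image, mem_coe, mem_filter, hT]
      exact ⟨∅, ⟨mem_univ _, by positivity, by simp⟩, by funext y; simp [mono]⟩
    have : Fn x = (fun y : ↥A => (∑ i, v ↑x i * w y i) ^ (q - 1))
        - (fun _ : ↥A => (1 : ZMod q)) := by
      funext y; simp [Fn, w]
    rw [this]
    exact Submodule.sub_mem _ h1 h2
  -- linear independence
  have hFn : LinearIndependent (ZMod q) Fn := by
    rw [Fintype.linearIndependent_iff]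
    intro c hc x
    have hx := congrFun hc x
    simp only [Finset.sum_apply, Pi.smul_apply, smul_eq_mul, Pi.zero_apply] at hx
    have : ∀ x' : ↥A, c x' * Fn x' x = if x' = x then -c x' else 0 := by
      intro x'
      rw [hFval]
      by_cases h : x' = x <;> simp [h] <;> ring
    rw [Finset.sum_congr rfl (fun x' _ => this x'), Finset.sum_ite_eq' univ x
      (fun x' => -c x')] at hx
    simp only [mem_univ, if_true, neg_eq_zero] at hx
    exact hx
  -- conclude via dimension count
  let g : ↥A → ↥p := fun x => ⟨Fn x, hmem x⟩
  have hg : LinearIndependent (ZMod q) g :=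
    LinearIndependent.of_comp p.subtype
      (show LinearIndependent (ZMod q) (p.subtype ∘ g) from hFn)
  haveI : Module.Finite (ZMod q) ↥p := inferInstance
  calc A.card = Fintype.card ↥A := (Fintype.card_coe A).symm
    _ ≤ Module.finrank (ZMod q) ↥p := hg.fintype_card_le_finrank
    _ ≤ (T.image (mono w)).card := by
        simpa [Set.finrank, hp] using
          finrank_span_finset_le_card (R := ZMod q) (T.image (mono w))
    _ ≤ T.card := Finset.card_image_le
    _ = ∑ i ∈ (Finset.range q).filter (fun i => Even i), Nat.choose n i := card_T q n
end

section
/- Let q be an odd prime and let A ⊆ {a,b}^n be the set of strings in which the number of characters equal to a is even and at most q−1. Then for any two distinct x, y ∈ A, the Hamming distance d(x,y) is not divisible by q; in particular |A| = C(n, q−1) + C(n, q−3) + ⋯ + C(n, 2) + C(n, 0). -/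
/-- the set of strings in `{a,b}^n` with an even number of `a`'s,
at most `q-1`, has no Hamming distance divisible by `q`, and its size is the
sum of `C(n,i)` over even `i ≤ q-1`. -/
theorem binary_code_lower_bound_construction (q n : ℕ) (hq : q.Prime)
    (hodd : Odd q)
    (α : Type*) [DecidableEq α] [Fintype α] (a b : α) (hab : a ≠ b)
    (A : Finset (Fin n → α))
    (hA : A = Finset.univ.filter (fun x : Fin n → α =>
      (∀ i, x i = a ∨ x i = b) ∧
      Even (Finset.univ.filter (fun i => x i = a)).card ∧
      (Finset.univ.filter (fun i => x i = a)).card ≤ q - 1)) :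
    (∀ x ∈ A, ∀ y ∈ A, x ≠ y →
      ¬ (q ∣ (Finset.univ.filter (fun i => x i ≠ y i)).card)) ∧
    A.card = ∑ i ∈ (Finset.range q).filter (fun i => Even i), Nat.choose n i := by
  have hq1 : 1 ≤ q := hq.one_lt.le
  subst hA
  constructor
  · intro x hx y hy hxy hdvd
    simp only [Finset.mem_filter, Finset.mem_univ, true_and] at hx hy
    obtain ⟨hxab, hxe, hxle⟩ := hx
    obtain ⟨hyab, hye, hyle⟩ := hy
    set s := Finset.univ.filter (fun i => x i = a) with hs
    set t := Finset.univ.filter (fun i => y i = a) with ht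
    have hD : Finset.univ.filter (fun i => x i ≠ y i) = (s \ t) ∪ (t \ s) := by
      ext i
      simp only [hs, ht, Finset.mem_filter, Finset.mem_union, Finset.mem_sdiff,
        Finset.mem_univ, true_and]
      rcases hxab i with h1 | h1 <;> rcases hyab i with h2 | h2 <;>
        simp [h1, h2, hab, hab.symm]
    have hdcard : (Finset.univ.filter (fun i => x i ≠ y i)).card
        = (s \ t).card + (t \ s).card := by
      rw [hD, Finset.card_union_of_disjoint (disjoint_sdiff_sdiff)]
    have h1 : (s \ t).card + (s ∩ t).card = s.card := Finset.card_sdiff_add_card_inter s t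
    have h2 : (t \ s).card + (t ∩ s).card = t.card := Finset.card_sdiff_add_card_inter t s
    have hint : (s ∩ t).card = (t ∩ s).card := by rw [Finset.inter_comm]
    rw [Nat.even_iff] at hxe hye
    rw [Nat.odd_iff] at hodd
    have hdpos : 0 < (Finset.univ.filter (fun i => x i ≠ y i)).card := by
      rw [Finset.card_pos]
      obtain ⟨i, hi⟩ := Function.ne_iff.mp hxy
      exact ⟨i, by simp [hi]⟩
    obtain ⟨c, hc⟩ := hdvd
    have hclt : c < 2 := by
      by_contra hge
      push_neg at hge
      have : 2 * q ≤ q * c := by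
        calc 2 * q = q * 2 := by ring
        _ ≤ q * c := Nat.mul_le_mul_left q hge
      omega
    interval_cases c <;> omega
  · set f : Finset (Fin n) → (Fin n → α) := fun S i => if i ∈ S then a else b with hf
    have hfinj : Function.Injective f := by
      intro S T h
      ext i
      have := congrFun h i
      simp only [hf] at this
      by_cases hS : i ∈ S <;> by_cases hT : i ∈ T <;>
        simp [hS, hT] at this ⊢ <;> exact absurd this (by first | exact hab | exact hab.symm)
    set B : Finset (Finset (Fin n)) := Finset.univ.powerset.filter
        (fun S => Even S.card ∧ S.card ≤ q - 1) with hB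
    have hfilter : ∀ S : Finset (Fin n),
        (Finset.univ.filter (fun i => f S i = a)) = S := by
      intro S
      ext i
      by_cases hS : i ∈ S <;> simp [hf, hS, hab.symm]
    have himg : Finset.univ.filter (fun x : Fin n → α =>
        (∀ i, x i = a ∨ x i = b) ∧
        Even (Finset.univ.filter (fun i => x i = a)).card ∧
        (Finset.univ.filter (fun i => x i = a)).card ≤ q - 1) = B.image f := by
      ext x
      simp only [Finset.mem_filter, Finset.mem_univ, true_and, Finset.mem_image, hB,
        Finset.mem_powerset]
      constructor
      · rintro ⟨hxab, hxe, hxle⟩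
        refine ⟨Finset.univ.filter (fun i => x i = a), ⟨Finset.subset_univ _, hxe, hxle⟩, ?_⟩
        funext i
        simp only [hf, Finset.mem_filter, Finset.mem_univ, true_and]
        rcases hxab i with h | h <;> simp [h, hab.symm]
      · rintro ⟨S, ⟨-, he, hle⟩, rfl⟩
        refine ⟨fun i => ?_, ?_, ?_⟩
        · by_cases hS : i ∈ S <;> simp [hf, hS]
        · rw [hfilter]; exact he
        · rw [hfilter]; exact hle
    rw [himg, Finset.card_image_of_injective _ hfinj]
    have hBU : B = ((Finset.range q).filter (fun i => Even i)).biUnion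
        (fun i => Finset.powersetCard i Finset.univ) := by
      ext S
      simp only [hB, Finset.mem_filter, Finset.mem_powerset, Finset.mem_biUnion,
        Finset.mem_range, Finset.mem_powersetCard]
      constructor
      · rintro ⟨-, he, hle⟩
        exact ⟨S.card, ⟨by omega, he⟩, Finset.subset_univ _, rfl⟩
      · rintro ⟨i, ⟨hi, he⟩, -, rfl⟩
        exact ⟨Finset.subset_univ _, he, by omega⟩
    rw [hBU, Finset.card_biUnion]
    · refine Finset.sum_congr rfl fun i _ => ?_
      rw [Finset.card_powersetCard, Finset.card_univ, Fintype.card_fin]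
    · intro i _ j _ hij
      simp only [Function.onFun]
      rw [Finset.disjoint_left]
      intro S hSi hSj
      rw [Finset.mem_powersetCard] at hSi hSj
      exact hij (hSi.2 ▸ hSj.2 ▸ rfl)
end

section
/- Let q be an odd prime and n ≡ −1 (mod q). Let A' ⊆ {a,b}^n consist of all strings where the number of a's is even and at most q−1, together with all strings where the number of b's is odd and at most q−2. Then no two distinct elements of A' have Hamming distance divisible by q, and |A'| = C(n,q−1) + C(n,q−2) + ⋯ + C(n,1) + C(n,0). -/
open Finset
open scoped symmDiff

private lemma card_symmDiff_add' {I : Type*} [DecidableEq I] (s t : Finset I) :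
    (s ∆ t).card + 2 * (s ∩ t).card = s.card + t.card := by
  have h : s ∆ t = (s ∪ t) \ (s ∩ t) := by
    rw [symmDiff_eq_sup_sdiff_inf, Finset.sup_eq_union, Finset.inf_eq_inter]
  have hsub : s ∩ t ⊆ s ∪ t := inter_subset_left.trans subset_union_left
  have h2 : (s ∆ t).card = (s ∪ t).card - (s ∩ t).card := by rw [h, card_sdiff_of_subset hsub]
  have h3 := Finset.card_union_add_card_inter s t
  have h4 : (s ∩ t).card ≤ (s ∪ t).card := card_le_card hsub
  omega

private lemma eq_q_of' (q c d : ℕ) (hq3 : 3 ≤ q) (hd : d = q * c) (hd0 : d ≠ 0)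
    (hdle : d ≤ 2 * q - 2) : d = q := by
  match c with
  | 0 => omega
  | 1 => omega
  | (c + 2) =>
    have : q * (c + 2) = q * c + 2 * q := by ring
    have h0 : 0 ≤ q * c := Nat.zero_le _
    omega

private lemma small_rep' (q c s e : ℕ) (hq3 : 3 ≤ q) (h : e + q * c = q * s + (q - 1))
    (he : e ≤ 2 * q - 3) : e = q - 1 := by
  have hcs : c ≤ s := by
    by_contra hcon
    have h1 : s + 1 ≤ c := by omega
    have h2 : q * (s + 1) ≤ q * c := Nat.mul_le_mul_left q h1
    have h3 : q * (s + 1) = q * s + q := by ring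
    omega
  obtain ⟨t, ht⟩ : ∃ t, s = c + t := ⟨s - c, by omega⟩
  subst ht
  have h3 : q * (c + t) = q * c + q * t := by ring
  rcases Nat.eq_zero_or_pos t with h0 | h1
  · subst h0; simp only [Nat.add_zero] at h h3; omega
  · have h4 : q * 1 ≤ q * t := Nat.mul_le_mul_left q h1
    omega

private lemma no_div_even' {I : Type*} [DecidableEq I] (q : ℕ) (hq3 : 3 ≤ q) (hodd : Odd q)
    (U V : Finset I) (hUV : Even (U.card + V.card))
    (hUb : U.card ≤ q - 1) (hVb : V.card ≤ q - 1) (hne : U ≠ V) :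
    ¬ q ∣ (U ∆ V).card := by
  rintro ⟨c, hc⟩
  have hid := card_symmDiff_add' U V
  have hd0 : (U ∆ V).card ≠ 0 := by
    intro h
    apply hne
    have h2 : U ∆ V = ⊥ := by
      have := Finset.card_eq_zero.mp h
      simpa [Finset.bot_eq_empty] using this
    exact symmDiff_eq_bot.mp h2
  obtain ⟨w, hw⟩ := hUV
  obtain ⟨r, hr⟩ := hodd
  have hdq : (U ∆ V).card = q := eq_q_of' q c _ hq3 hc hd0 (by omega)
  omega

private lemma no_div_mixed' {I : Type*} [DecidableEq I] [Fintype I] (q n : ℕ) (hq3 : 3 ≤ q)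
    (hodd : Odd q) (hn : n % q = q - 1) (hI : Fintype.card I = n)
    (U V : Finset I) (hU : Even U.card) (hUb : U.card ≤ q - 1)
    (hV : Odd Vᶜ.card) (hVb : Vᶜ.card ≤ q - 2) :
    ¬ q ∣ (U ∆ V).card := by
  rintro ⟨c, hc⟩
  have hcompl : (U ∆ V)ᶜ = U ∆ Vᶜ := by
    ext i
    simp only [Finset.mem_compl, Finset.mem_symmDiff]
    tauto
  have h1 : (U ∆ V).card + (U ∆ Vᶜ).card = n := by
    rw [← hcompl, Finset.card_add_card_compl, hI]
  have hid := card_symmDiff_add' U Vᶜ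
  have hrep : q * (n / q) + (q - 1) = n := by rw [← hn]; exact Nat.div_add_mod n q
  have heq : (U ∆ Vᶜ).card + q * c = q * (n / q) + (q - 1) := by omega
  have he : (U ∆ Vᶜ).card ≤ 2 * q - 3 := by omega
  have hfin := small_rep' q c (n / q) _ hq3 heq he
  obtain ⟨u, hu⟩ := hU
  obtain ⟨v, hv⟩ := hV
  obtain ⟨r, hr⟩ := hodd
  omega

private lemma count_lemma' (n : ℕ) (P : ℕ → Prop) [DecidablePred P] :
    (Finset.univ.filter (fun S : Finset (Fin n) => P S.card)).card
      = ∑ k ∈ Finset.range (n + 1), if P k then n.choose k else 0 := by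
  rw [Finset.card_eq_sum_card_fiberwise (f := Finset.card) (t := Finset.range (n + 1))
    (fun S _ => by
      simp only [Finset.mem_coe, Finset.mem_range]
      have : S.card ≤ Fintype.card (Fin n) := Finset.card_le_univ S
      simp only [Fintype.card_fin] at this
      omega)]
  refine Finset.sum_congr rfl (fun k hk => ?_)
  have hset : ((Finset.univ.filter (fun S : Finset (Fin n) => P S.card)).filter
      (fun S => S.card = k))
      = if P k then Finset.powersetCard k (Finset.univ : Finset (Fin n)) else ∅ := by
    split_ifs with h
    · ext S
      simp only [Finset.mem_filter, Finset.mem_univ, true_and, Finset.mem_powersetCard,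
        Finset.subset_univ]
      exact ⟨fun h2 => h2.2, fun h2 => ⟨h2 ▸ h, h2⟩⟩
    · ext S
      simp only [Finset.mem_filter, Finset.mem_univ, true_and, Finset.notMem_empty, iff_false,
        not_and]
      intro h1 h2
      exact h (h2 ▸ h1)
  rw [hset]
  split_ifs with h
  · rw [Finset.card_powersetCard, Finset.card_univ, Fintype.card_fin]
  · exact Finset.card_empty

/-- for `n ≡ -1 (mod q)`, the enlarged code (even number of `a`'s
at most `q-1`, together with odd number of `b`'s at most `q-2`) has no Hamming
distance divisible by `q` and size `C(n,q-1)+⋯+C(n,0)`. -/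
theorem binary_code_lower_bound_special (q n : ℕ) (hq : q.Prime) (hodd : Odd q)
    (hn : n % q = q - 1)
    (α : Type*) [DecidableEq α] [Fintype α] (a b : α) (hab : a ≠ b)
    (A : Finset (Fin n → α))
    (hA : A = Finset.univ.filter (fun x : Fin n → α =>
      (∀ i, x i = a ∨ x i = b) ∧
      ((Even (Finset.univ.filter (fun i => x i = a)).card ∧
          (Finset.univ.filter (fun i => x i = a)).card ≤ q - 1) ∨
        (Odd (Finset.univ.filter (fun i => x i = b)).card ∧
          (Finset.univ.filter (fun i => x i = b)).card ≤ q - 2)))) :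
    (∀ x ∈ A, ∀ y ∈ A, x ≠ y →
      ¬ (q ∣ (Finset.univ.filter (fun i => x i ≠ y i)).card)) ∧
    A.card = ∑ i ∈ Finset.range q, Nat.choose n i := by
  have hq3 : 3 ≤ q := by
    have h2 := hq.two_le
    obtain ⟨r, hr⟩ := hodd
    omega
  -- structure of n
  have hrep : q * (n / q) + (q - 1) = n := by rw [← hn]; exact Nat.div_add_mod n q
  have hncase : n = q - 1 ∨ 2 * q - 1 ≤ n := by
    rcases Nat.eq_zero_or_pos (n / q) with h0 | h1
    · left; rw [h0] at hrep; omega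
    · right
      have : q * 1 ≤ q * (n / q) := Nat.mul_le_mul_left q h1
      omega
  -- basic facts about binary strings
  have hbfilter : ∀ x : Fin n → α, (∀ i, x i = a ∨ x i = b) →
      Finset.univ.filter (fun i => x i = b) = (Finset.univ.filter (fun i => x i = a))ᶜ := by
    intro x hx
    ext i
    simp only [Finset.mem_filter, Finset.mem_univ, true_and, Finset.mem_compl]
    rcases hx i with h | h <;> simp [h, hab, hab.symm]
  constructor
  · -- distance part
    intro x hx y hy hne
    rw [hA, Finset.mem_filter] at hx hy
    obtain ⟨-, hx1, hx2⟩ := hx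
    obtain ⟨-, hy1, hy2⟩ := hy
    have hdist : Finset.univ.filter (fun i => x i ≠ y i)
        = (Finset.univ.filter (fun i => x i = a)) ∆ (Finset.univ.filter (fun i => y i = a)) := by
      ext i
      simp only [Finset.mem_filter, Finset.mem_univ, true_and, Finset.mem_symmDiff]
      rcases hx1 i with h | h <;> rcases hy1 i with h' | h' <;> simp [h, h', hab, hab.symm]
    rw [hdist]
    have hSne : (Finset.univ.filter (fun i => x i = a))
        ≠ (Finset.univ.filter (fun i => y i = a)) := by
      intro hS
      apply hne
      funext i
      by_cases h : x i = a
      · have h2 : i ∈ Finset.univ.filter (fun j => y j = a) := by rw [← hS]; simp [h]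
        simp only [Finset.mem_filter, Finset.mem_univ, true_and] at h2
        rw [h, h2]
      · have hx' : x i = b := (hx1 i).resolve_left h
        have h2 : i ∉ Finset.univ.filter (fun j => y j = a) := by rw [← hS]; simp [h]
        simp only [Finset.mem_filter, Finset.mem_univ, true_and] at h2
        have hy' : y i = b := (hy1 i).resolve_left h2
        rw [hx', hy']
    rw [hbfilter x hx1] at hx2
    rw [hbfilter y hy1] at hy2
    have hIcard : Fintype.card (Fin n) = n := Fintype.card_fin n
    rcases hx2 with ⟨hxe, hxb⟩ | ⟨hxo, hxb⟩ <;> rcases hy2 with ⟨hye, hyb⟩ | ⟨hyo, hyb⟩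
    · exact no_div_even' q hq3 hodd _ _ (hxe.add hye) hxb hyb hSne
    · exact no_div_mixed' q n hq3 hodd hn hIcard _ _ hxe hxb hyo hyb
    · rw [symmDiff_comm]
      exact no_div_mixed' q n hq3 hodd hn hIcard _ _ hye hyb hxo hxb
    · have hcc : (Finset.univ.filter (fun i => x i = a)) ∆ (Finset.univ.filter (fun i => y i = a))
          = (Finset.univ.filter (fun i => x i = a))ᶜ ∆ (Finset.univ.filter (fun i => y i = a))ᶜ :=
        (compl_symmDiff_compl _ _).symm
      rw [hcc]
      refine no_div_even' q hq3 hodd _ _ (Odd.add_odd hxo hyo) (le_trans hxb (by omega))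
        (le_trans hyb (by omega)) ?_
      intro h
      apply hSne
      have h2 := congrArg (fun s => sᶜ) h
      simpa [compl_compl] using h2
  · -- counting part
    have hstep1 : A.card = (Finset.univ.filter (fun S : Finset (Fin n) =>
        (Even S.card ∧ S.card ≤ q - 1) ∨ (Odd (n - S.card) ∧ n - S.card ≤ q - 2))).card := by
      rw [hA]
      refine Finset.card_bij' (fun x _ => Finset.univ.filter (fun i => x i = a))
        (fun S _ => fun i => if i ∈ S then a else b) ?_ ?_ ?_ ?_
      · intro x hx
        rw [Finset.mem_filter] at hx
        obtain ⟨-, hx1, hx2⟩ := hx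
        rw [hbfilter x hx1, Finset.card_compl, Fintype.card_fin] at hx2
        simpa [Finset.mem_filter] using hx2
      · intro S hS
        rw [Finset.mem_filter] at hS ⊢
        obtain ⟨-, hS2⟩ := hS
        have ha' : Finset.univ.filter (fun i => (if i ∈ S then a else b) = a) = S := by
          ext i
          simp only [Finset.mem_filter, Finset.mem_univ, true_and]
          by_cases h : i ∈ S <;> simp [h, hab, hab.symm]
        have hb' : Finset.univ.filter (fun i => (if i ∈ S then a else b) = b) = Sᶜ := by
          ext i
          simp only [Finset.mem_filter, Finset.mem_univ, true_and, Finset.mem_compl]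
          by_cases h : i ∈ S <;> simp [h, hab, hab.symm]
        refine ⟨Finset.mem_univ _, fun i => ?_, ?_⟩
        · by_cases h : i ∈ S <;> simp [h]
        · rw [ha', hb', Finset.card_compl, Fintype.card_fin]
          exact hS2
      · intro x hx
        rw [Finset.mem_filter] at hx
        obtain ⟨-, hx1, -⟩ := hx
        funext i
        simp only [Finset.mem_filter, Finset.mem_univ, true_and]
        by_cases h : x i = a
        · simp [h]
        · rw [if_neg h]
          exact ((hx1 i).resolve_left h).symm
      · intro S hS
        ext i
        simp only [Finset.mem_filter, Finset.mem_univ, true_and]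
        by_cases h : i ∈ S <;> simp [h, hab, hab.symm]
    rw [hstep1,
      count_lemma' n (fun k => (Even k ∧ k ≤ q - 1) ∨ (Odd (n - k) ∧ n - k ≤ q - 2))]
    have hsplit : ∀ k ∈ Finset.range (n + 1),
        (if (Even k ∧ k ≤ q - 1) ∨ (Odd (n - k) ∧ n - k ≤ q - 2) then n.choose k else 0)
          = (if Even k ∧ k ≤ q - 1 then n.choose k else 0)
            + (if Odd (n - k) ∧ n - k ≤ q - 2 then n.choose k else 0) := by
      intro k hk
      rw [Finset.mem_range] at hk
      by_cases h1 : Even k ∧ k ≤ q - 1 <;> by_cases h2 : Odd (n - k) ∧ n - k ≤ q - 2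
      · exfalso
        obtain ⟨⟨u, hu⟩, hk1⟩ := h1
        obtain ⟨⟨v, hv⟩, hk2⟩ := h2
        obtain ⟨r, hr⟩ := hodd
        rcases hncase with h | h <;> omega
      · rw [if_pos (Or.inl h1), if_pos h1, if_neg h2, add_zero]
      · rw [if_pos (Or.inr h2), if_neg h1, if_pos h2, zero_add]
      · rw [if_neg (by tauto), if_neg h1, if_neg h2, add_zero]
    rw [Finset.sum_congr rfl hsplit, Finset.sum_add_distrib]
    have hreflect : ∑ k ∈ Finset.range (n + 1),
        (if Odd (n - k) ∧ n - k ≤ q - 2 then n.choose k else 0)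
        = ∑ k ∈ Finset.range (n + 1), (if Odd k ∧ k ≤ q - 2 then n.choose k else 0) := by
      rw [← Finset.sum_range_reflect]
      refine Finset.sum_congr rfl (fun k hk => ?_)
      rw [Finset.mem_range] at hk
      have h1 : n + 1 - 1 - k = n - k := by omega
      have h2 : n - (n - k) = k := by omega
      rw [h1, h2, Nat.choose_symm (by omega)]
    rw [hreflect, ← Finset.sum_add_distrib]
    have hmerge : ∀ k ∈ Finset.range (n + 1),
        ((if Even k ∧ k ≤ q - 1 then n.choose k else 0)
          + (if Odd k ∧ k ≤ q - 2 then n.choose k else 0))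
          = if k < q then n.choose k else 0 := by
      intro k hk
      have hq2 : q % 2 = 1 := Nat.odd_iff.mp hodd
      have he1 : (Even k ∧ k ≤ q - 1) ↔ (k % 2 = 0 ∧ k < q) := by
        rw [Nat.even_iff]; omega
      have he2 : (Odd k ∧ k ≤ q - 2) ↔ (k % 2 = 1 ∧ k < q) := by
        rw [Nat.odd_iff]; omega
      simp only [he1, he2]
      rcases Nat.mod_two_eq_zero_or_one k with h2 | h2 <;> by_cases hkq : k < q <;>
        simp [h2, hkq]
    rw [Finset.sum_congr rfl hmerge]
    have hfilter : Finset.range q = (Finset.range (n + 1)).filter (fun k => k < q) := by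
      ext k
      simp only [Finset.mem_range, Finset.mem_filter]
      omega
    rw [hfilter, Finset.sum_filter]
end
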